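/- arXiv:1409.6032 — 6 statements merged into one kernel-verified Lean document; each statement's English description precedes it below -/
import Mathlib

section
/- Let ‖·‖ be a cone linear absolute norm on R^d with respect to a proper cone K. Then the induced operator norm of any matrix M that leaves K invariant satisfies ‖M‖ = sup_{x ∈ K, x ≠ 0} ‖Mx‖/‖x‖. -/
open Matrix Set

/-- A proper cone: a nonempty-interior, closed, convex, pointed set closed under
nonnegative scalar multiplication. -/
def IsProperCone {d : ℕ} (K : Set (Fin d → ℝ)) : Prop :=
  (∀ x ∈ K, ∀ c : ℝ, 0 ≤ c → c • x ∈ K) ∧ IsClosed K ∧ Convex ℝ K ∧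
    (interior K).Nonempty ∧ ∀ x ∈ K, -x ∈ K → x = 0

/-- `M` leaves the cone `K` invariant: `M K ⊆ K`. -/
def LeavesInvariant {d : ℕ} (M : Matrix (Fin d) (Fin d) ℝ) (K : Set (Fin d → ℝ)) : Prop :=
  ∀ x ∈ K, M.mulVec x ∈ K

/-- `M` is `K`-positive: `M (K \ {0}) ⊆ interior K`. -/
def IsKPos {d : ℕ} (M : Matrix (Fin d) (Fin d) ℝ) (K : Set (Fin d → ℝ)) : Prop :=
  ∀ x ∈ K, x ≠ 0 → M.mulVec x ∈ interior K

/-- The dual cone `K* = {f | fᵀ x ≥ 0 for all x ∈ K}`. -/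
def dualConeSet {d : ℕ} (K : Set (Fin d → ℝ)) : Set (Fin d → ℝ) :=
  {f | ∀ x ∈ K, 0 ≤ f ⬝ᵥ x}

/-- The spectral radius of a real matrix: the supremum of the absolute values of its
(complex) eigenvalues. -/
noncomputable def specRad {d : ℕ} (M : Matrix (Fin d) (Fin d) ℝ) : ℝ :=
  sSup {r | ∃ z : ℂ, Module.End.HasEigenvalue (Matrix.toLin' (M.map Complex.ofReal)) z ∧
    r = ‖z‖}

/-- `nrm` is a norm on `Fin d → ℝ`. -/
def IsVecNorm {d : ℕ} (nrm : (Fin d → ℝ) → ℝ) : Prop :=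
  (∀ x, 0 ≤ nrm x) ∧ (∀ x, nrm x = 0 ↔ x = 0) ∧
    (∀ (c : ℝ) x, nrm (c • x) = |c| * nrm x) ∧ ∀ x y, nrm (x + y) ≤ nrm x + nrm y

/-- `nrm` is cone absolute with respect to `K`. -/
def IsConeAbsolute {d : ℕ} (K : Set (Fin d → ℝ)) (nrm : (Fin d → ℝ) → ℝ) : Prop :=
  ∀ x, nrm x = sInf {r | ∃ v ∈ K, ∃ w ∈ K, x = v - w ∧ r = nrm (v + w)}

/-- `nrm` is cone linear with respect to `K`. -/
def IsConeLinear {d : ℕ} (K : Set (Fin d → ℝ)) (nrm : (Fin d → ℝ) → ℝ) : Prop :=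
  ∃ f ∈ dualConeSet K, ∀ x ∈ K, nrm x = f ⬝ᵥ x

/-- A cone linear absolute norm with respect to `K`. -/
def IsCLANorm {d : ℕ} (K : Set (Fin d → ℝ)) (nrm : (Fin d → ℝ) → ℝ) : Prop :=
  IsVecNorm nrm ∧ IsConeAbsolute K nrm ∧ IsConeLinear K nrm

/-- The operator norm of a matrix induced by the vector norm `nrm`. -/
noncomputable def opNorm {d : ℕ} (nrm : (Fin d → ℝ) → ℝ) (M : Matrix (Fin d) (Fin d) ℝ) : ℝ :=
  sSup {r | ∃ x : Fin d → ℝ, x ≠ 0 ∧ r = nrm (M.mulVec x) / nrm x}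

/-- The cone linear absolute norm `‖·‖_f` induced by `f ∈ int K*`. -/
noncomputable def coneNorm {d : ℕ} (K : Set (Fin d → ℝ)) (f : Fin d → ℝ)
    (x : Fin d → ℝ) : ℝ :=
  sInf {r | ∃ v ∈ K, ∃ w ∈ K, x = v - w ∧ r = f ⬝ᵥ (v + w)}

/-- Any vector norm is dominated by a constant multiple of the sup norm. -/
lemma aux_nrm_upper {d : ℕ} (nrm : (Fin d → ℝ) → ℝ)
    (h0 : ∀ x, nrm x = 0 ↔ x = 0)
    (hsm : ∀ (c : ℝ) x, nrm (c • x) = |c| * nrm x)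
    (htr : ∀ x y, nrm (x + y) ≤ nrm x + nrm y) :
    ∀ x, nrm x ≤ (∑ i : Fin d, nrm (Pi.single i 1)) * ‖x‖ := by
  intro x
  have hz : nrm 0 = 0 := (h0 0).2 rfl
  have hsum : ∀ (s : Finset (Fin d)) (g : Fin d → (Fin d → ℝ)),
      nrm (∑ i ∈ s, g i) ≤ ∑ i ∈ s, nrm (g i) := by
    intro s g
    induction s using Finset.cons_induction with
    | empty => simp [hz]
    | cons a s ha ih =>
        rw [Finset.sum_cons, Finset.sum_cons]
        exact le_trans (htr _ _) (by linarith)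
  calc nrm x = nrm (∑ i : Fin d, Pi.single i (x i)) := by rw [Finset.univ_sum_single]
    _ ≤ ∑ i : Fin d, nrm (Pi.single i (x i)) := hsum _ _
    _ ≤ ∑ i : Fin d, nrm (Pi.single i 1) * ‖x‖ := by
        apply Finset.sum_le_sum
        intro i _
        have : Pi.single i (x i) = x i • (Pi.single i 1 : Fin d → ℝ) := by
          funext j
          by_cases hj : j = i
          · subst hj; simp
          · simp [Pi.single_eq_of_ne hj]
        rw [this, hsm]
        have h1 : |x i| ≤ ‖x‖ := by
          simpa using norm_le_pi_norm x i
        have h2 : 0 ≤ nrm (Pi.single i 1) := by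
          have := htr (Pi.single i 1) (-(Pi.single i 1))
          have hneg : nrm (-(Pi.single i 1)) = nrm (Pi.single i 1) := by
            have := hsm (-1) (Pi.single i 1); simpa using this
          simp [hz] at this
          rw [hneg] at this; linarith
        calc |x i| * nrm (Pi.single i 1) ≤ ‖x‖ * nrm (Pi.single i 1) :=
              mul_le_mul_of_nonneg_right h1 h2
          _ = nrm (Pi.single i 1) * ‖x‖ := mul_comm _ _
    _ = (∑ i : Fin d, nrm (Pi.single i 1)) * ‖x‖ := by rw [Finset.sum_mul]

/-- Any vector norm dominates a positive multiple of the sup norm. -/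
lemma aux_nrm_lower {d : ℕ} (nrm : (Fin d → ℝ) → ℝ) (C : ℝ)
    (h0 : ∀ x, nrm x = 0 ↔ x = 0)
    (hnn : ∀ x, 0 ≤ nrm x)
    (hsm : ∀ (c : ℝ) x, nrm (c • x) = |c| * nrm x)
    (htr : ∀ x y, nrm (x + y) ≤ nrm x + nrm y)
    (hub : ∀ x, nrm x ≤ C * ‖x‖)
    (x0 : Fin d → ℝ) (hx0 : x0 ≠ 0) :
    ∃ m > 0, ∀ x, m * ‖x‖ ≤ nrm x := by
  have hneg : ∀ x, nrm (-x) = nrm x := by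
    intro x; have := hsm (-1) x; simpa using this
  have hlip : ∀ a b, |nrm a - nrm b| ≤ C * ‖a - b‖ := by
    intro a b
    have h1 : nrm a - nrm b ≤ nrm (a - b) := by
      have := htr (a - b) b; simp at this; linarith
    have h2 : nrm b - nrm a ≤ nrm (a - b) := by
      have := htr (b - a) a; simp at this
      have : nrm b ≤ nrm (b - a) + nrm a := by linarith
      have hba : nrm (b - a) = nrm (a - b) := by
        rw [← hneg (a - b)]; congr 1; abel
      linarith
    have := hub (a - b)
    rw [abs_sub_le_iff]; constructor <;> linarith
  have hcont : Continuous nrm := by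
    rw [Metric.continuous_iff]
    intro b ε hε
    rcases le_or_gt C 0 with hC | hC
    · exact ⟨1, one_pos, fun a _ => by
        have := hlip a b
        have hC' : C * ‖a - b‖ ≤ 0 :=
          mul_nonpos_of_nonpos_of_nonneg hC (norm_nonneg _)
        rw [Real.dist_eq]
        calc |nrm a - nrm b| ≤ C * ‖a - b‖ := this
          _ ≤ 0 := hC'
          _ < ε := hε⟩
    · refine ⟨ε / C, by positivity, fun a ha => ?_⟩
      rw [Real.dist_eq]
      calc |nrm a - nrm b| ≤ C * ‖a - b‖ := hlip a b
        _ < C * (ε / C) := by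
            apply mul_lt_mul_of_pos_left _ hC
            rwa [← dist_eq_norm]
        _ = ε := by field_simp
  have hsph : (Metric.sphere (0 : Fin d → ℝ) 1).Nonempty := by
    refine ⟨‖x0‖⁻¹ • x0, ?_⟩
    rw [mem_sphere_zero_iff_norm, norm_smul, norm_inv, norm_norm]
    field_simp [norm_ne_zero_iff.2 hx0]
  obtain ⟨z, hz, hmin⟩ := (isCompact_sphere (0 : Fin d → ℝ) 1).exists_isMinOn hsph
    hcont.continuousOn
  have hz1 : ‖z‖ = 1 := mem_sphere_zero_iff_norm.1 hz
  have hzne : z ≠ 0 := by intro h; rw [h] at hz1; simp at hz1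
  have hm : 0 < nrm z := by
    rcases lt_or_eq_of_le (hnn z) with h | h
    · exact h
    · exact absurd ((h0 z).1 h.symm) hzne
  refine ⟨nrm z, hm, fun x => ?_⟩
  rcases eq_or_ne x 0 with rfl | hx
  · simp [(h0 (0:Fin d → ℝ)).2 rfl]
  · have hxn : (0:ℝ) < ‖x‖ := norm_pos_iff.2 hx
    have hmem : ‖x‖⁻¹ • x ∈ Metric.sphere (0 : Fin d → ℝ) 1 := by
      rw [mem_sphere_zero_iff_norm, norm_smul, norm_inv, norm_norm]
      field_simp
    have hle : nrm z ≤ nrm (‖x‖⁻¹ • x) := hmin hmem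
    have heq : nrm (‖x‖⁻¹ • x) = ‖x‖⁻¹ * nrm x := by
      rw [hsm]; congr 1; rw [abs_of_pos (by positivity)]
    rw [heq] at hle
    calc nrm z * ‖x‖ ≤ (‖x‖⁻¹ * nrm x) * ‖x‖ := by
          apply mul_le_mul_of_nonneg_right hle (le_of_lt hxn)
      _ = nrm x := by field_simp

/-- For a cone linear absolute norm w.r.t. a proper cone `K`, the induced
operator norm of any matrix leaving `K` invariant is attained over `K`. -/
theorem stmt_2 {d : ℕ} (K : Set (Fin d → ℝ)) (hK : IsProperCone K)
    (nrm : (Fin d → ℝ) → ℝ) (hnrm : IsCLANorm K nrm)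
    (M : Matrix (Fin d) (Fin d) ℝ) (hM : LeavesInvariant M K) :
    opNorm nrm M = sSup {r | ∃ x ∈ K, x ≠ 0 ∧ r = nrm (M.mulVec x) / nrm x} := by
  obtain ⟨⟨hnn, h0, hsm, htr⟩, habs, f, hf, hlin⟩ := hnrm
  obtain ⟨hKscal, hKclosed, hKconv, hKint, hKpointed⟩ := hK
  set S : Set ℝ := {r | ∃ x : Fin d → ℝ, x ≠ 0 ∧ r = nrm (M.mulVec x) / nrm x} with hSdef
  set T : Set ℝ := {r | ∃ x ∈ K, x ≠ 0 ∧ r = nrm (M.mulVec x) / nrm x} with hTdef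
  by_cases hdeg : ∃ x : Fin d → ℝ, x ≠ 0
  swap
  · -- degenerate case: every vector is zero
    push_neg at hdeg
    have hS : S = ∅ := by
      ext r; simp only [hSdef, Set.mem_setOf_eq, Set.mem_empty_iff_false, iff_false]
      rintro ⟨x, hx, -⟩; exact hx (hdeg x)
    have hT : T = ∅ := by
      ext r; simp only [hTdef, Set.mem_setOf_eq, Set.mem_empty_iff_false, iff_false]
      rintro ⟨x, -, hx, -⟩; exact hx (hdeg x)
    show sSup S = sSup T
    rw [hS, hT]
  obtain ⟨x0, hx0⟩ := hdeg
  -- general facts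
  have hKadd : ∀ v ∈ K, ∀ w ∈ K, v + w ∈ K := by
    intro v hv w hw
    have hmid : (1/2 : ℝ) • v + (1/2 : ℝ) • w ∈ K :=
      hKconv hv hw (by norm_num) (by norm_num) (by norm_num)
    have h2 : (2:ℝ) • ((1/2 : ℝ) • v + (1/2 : ℝ) • w) = v + w := by
      rw [smul_add, smul_smul, smul_smul]; norm_num
    rw [← h2]
    exact hKscal _ hmid 2 (by norm_num)
  have hnrmpos : ∀ x : Fin d → ℝ, x ≠ 0 → 0 < nrm x := by
    intro x hx
    rcases lt_or_eq_of_le (hnn x) with h | h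
    · exact h
    · exact absurd ((h0 x).1 h.symm) hx
  -- boundedness of S
  set C : ℝ := ∑ i : Fin d, nrm (Pi.single i 1) with hCdef
  have hub : ∀ x, nrm x ≤ C * ‖x‖ := aux_nrm_upper nrm h0 hsm htr
  obtain ⟨m, hm, hlb⟩ := aux_nrm_lower nrm C h0 hnn hsm htr hub x0 hx0
  set L := LinearMap.toContinuousLinearMap (Matrix.mulVecLin M) with hLdef
  have hC : 0 ≤ C := Finset.sum_nonneg fun i _ => hnn _
  have hSbd : ∀ r ∈ S, r ≤ C * ‖L‖ / m := by
    rintro r ⟨x, hx, rfl⟩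
    have hxn : (0:ℝ) < ‖x‖ := norm_pos_iff.2 hx
    have h1 : nrm (M.mulVec x) ≤ C * (‖L‖ * ‖x‖) := by
      calc nrm (M.mulVec x) ≤ C * ‖M.mulVec x‖ := hub _
        _ ≤ C * (‖L‖ * ‖x‖) := by
            apply mul_le_mul_of_nonneg_left _ hC
            exact L.le_opNorm x
    have h2 : m * ‖x‖ ≤ nrm x := hlb x
    have h3 : (0:ℝ) < m * ‖x‖ := by positivity
    calc nrm (M.mulVec x) / nrm x ≤ (C * (‖L‖ * ‖x‖)) / (m * ‖x‖) := by
          apply div_le_div₀ (by positivity) h1 h3 h2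
      _ = C * ‖L‖ / m := by field_simp
  have hSBdd : BddAbove S := ⟨C * ‖L‖ / m, hSbd⟩
  have hTS : T ⊆ S := by rintro r ⟨x, -, hx, hr⟩; exact ⟨x, hx, hr⟩
  have hTBdd : BddAbove T := hSBdd.mono hTS
  have hSne : S.Nonempty := ⟨_, x0, hx0, rfl⟩
  -- nonzero element of K
  obtain ⟨e, he⟩ := hKint
  have heK : e ∈ K := interior_subset he
  have hTne : T.Nonempty := by
    rcases eq_or_ne e 0 with rfl | hene
    · obtain ⟨r, hr, hball⟩ := Metric.isOpen_iff.1 isOpen_interior 0 he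
      have hx0n : (0:ℝ) < ‖x0‖ := norm_pos_iff.2 hx0
      set k := (r / (2 * ‖x0‖)) • x0 with hkdef
      have hkne : k ≠ 0 := by
        simp only [hkdef, ne_eq, smul_eq_zero, not_or]
        exact ⟨by positivity, hx0⟩
      have hkK : k ∈ K := by
        apply interior_subset; apply hball
        rw [Metric.mem_ball, dist_zero_right]
        have hknorm : ‖k‖ = r / 2 := by
          rw [hkdef, norm_smul, Real.norm_eq_abs, abs_of_pos (by positivity)]
          field_simp
        rw [hknorm]; linarith
      exact ⟨_, k, hkK, hkne, rfl⟩
    · exact ⟨_, e, heK, hene, rfl⟩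
  show sSup S = sSup T
  apply le_antisymm
  · -- sSup S ≤ sSup T
    apply csSup_le hSne
    rintro r ⟨x, hx, rfl⟩
    set Sstar := sSup T with hSstar
    have hSstar0 : 0 ≤ Sstar := by
      obtain ⟨r0, x1, hx1K, hx1, hr0⟩ := hTne
      have : 0 ≤ r0 := by
        rw [hr0]; exact div_nonneg (hnn _) (hnn _)
      exact le_trans this (le_csSup hTBdd ⟨x1, hx1K, hx1, hr0⟩)
    have hxn : 0 < nrm x := hnrmpos x hx
    set D : Set ℝ := {t | ∃ v ∈ K, ∃ w ∈ K, x = v - w ∧ t = nrm (v + w)} with hDdef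
    have hDeq : nrm x = sInf D := habs x
    -- D is nonempty
    have hDne : D.Nonempty := by
      have hcont : Continuous (fun t : ℝ => e + t • x) :=
        continuous_const.add (continuous_id.smul continuous_const)
      have hmem0 : (fun t : ℝ => e + t • x) 0 ∈ interior K := by simpa using he
      have h1 : ∀ᶠ t in nhds (0:ℝ), e + t • x ∈ interior K :=
        hcont.continuousAt.eventually_mem (isOpen_interior.mem_nhds hmem0)
      have h2 : ∀ᶠ t in nhdsWithin (0:ℝ) (Set.Ioi 0), e + t • x ∈ interior K :=
        nhdsWithin_le_nhds h1
      obtain ⟨t, htK, htpos⟩ := (h2.and eventually_mem_nhdsWithin).exists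
      have htpos' : (0:ℝ) < t := htpos
      refine ⟨nrm (t⁻¹ • (e + t • x) + t⁻¹ • e), t⁻¹ • (e + t • x),
        hKscal _ (interior_subset htK) _ (by positivity), t⁻¹ • e,
        hKscal _ heK _ (by positivity), ?_, rfl⟩
      rw [smul_add, smul_smul, inv_mul_cancel₀ (ne_of_gt htpos')]
      simp
    have hDbdd : BddBelow D := ⟨0, by rintro t ⟨v, -, w, -, -, rfl⟩; exact hnn _⟩
    -- key estimate
    have hkey : ∀ t ∈ D, nrm (M.mulVec x) ≤ Sstar * t := by
      rintro t ⟨v, hv, w, hw, hxvw, rfl⟩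
      set u := v + w with hudef
      have huK : u ∈ K := hKadd v hv w hw
      have hune : u ≠ 0 := by
        intro hu0
        have hwv : w = -v := by
          have : v + w = 0 := hu0
          linear_combination this - hudef.symm + hudef.symm
        have hv0 : v = 0 := hKpointed v hv (by rw [← hwv]; exact hw)
        apply hx
        rw [hxvw, hv0, hwv, hv0]
        simp
      -- nrm (M x) ≤ nrm (M v + M w)
      have hstep1 : nrm (M.mulVec x) ≤ nrm (M.mulVec v + M.mulVec w) := by
        rw [habs (M.mulVec x)]
        apply csInf_le
        · exact ⟨0, by rintro t ⟨a, -, b, -, -, rfl⟩; exact hnn _⟩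
        · exact ⟨M.mulVec v, hM v hv, M.mulVec w, hM w hw,
            by rw [hxvw, Matrix.mulVec_sub], rfl⟩
      have hstep2 : nrm (M.mulVec v + M.mulVec w) = nrm (M.mulVec u) := by
        rw [hlin _ (hKadd _ (hM v hv) _ (hM w hw)), ← Matrix.mulVec_add,
          hlin _ (hM u huK)]
      have hun : 0 < nrm u := hnrmpos u hune
      have hmemT : nrm (M.mulVec u) / nrm u ∈ T := ⟨u, huK, hune, rfl⟩
      have hleS : nrm (M.mulVec u) / nrm u ≤ Sstar := le_csSup hTBdd hmemT
      have : nrm (M.mulVec u) ≤ Sstar * nrm u := by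
        rw [div_le_iff₀ hun] at hleS; linarith [hleS]
      calc nrm (M.mulVec x) ≤ nrm (M.mulVec u) := hstep1.trans_eq hstep2
        _ ≤ Sstar * nrm u := this
    rcases eq_or_lt_of_le hSstar0 with hS0 | hSpos
    · obtain ⟨t0, ht0⟩ := hDne
      have h1 := hkey t0 ht0
      rw [← hS0] at h1
      simp at h1
      have h2 : nrm (M.mulVec x) = 0 := le_antisymm h1 (hnn _)
      rw [h2, zero_div]
      exact hSstar0
    · have h1 : nrm (M.mulVec x) / Sstar ≤ sInf D := by
        apply le_csInf hDne
        intro t ht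
        rw [div_le_iff₀ hSpos]
        calc nrm (M.mulVec x) ≤ Sstar * t := hkey t ht
          _ = t * Sstar := mul_comm _ _
      rw [← hDeq, div_le_iff₀ hSpos] at h1
      rw [div_le_iff₀ hxn]
      calc nrm (M.mulVec x) ≤ nrm x * Sstar := h1
        _ = Sstar * nrm x := mul_comm _ _
  · exact csSup_le_csSup hSBdd hTne hTS
end

section
/- Let ‖·‖ be a cone linear absolute norm with respect to a proper cone K. If M ≥^K N ≥^K 0 (i.e., M - N and N both leave K invariant), then the induced operator norms satisfy ‖M‖ ≥ ‖N‖. -/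
open Matrix Set

section Aux

open Matrix Set

variable {d : ℕ}

lemma nrm_zero {nrm : (Fin d → ℝ) → ℝ} (h : IsVecNorm nrm) : nrm 0 = 0 :=
  (h.2.1 0).mpr rfl

lemma nrm_sum_le {nrm : (Fin d → ℝ) → ℝ} (h : IsVecNorm nrm) {ι : Type*}
    (s : Finset ι) (g : ι → (Fin d → ℝ)) : nrm (∑ i ∈ s, g i) ≤ ∑ i ∈ s, nrm (g i) := by
  classical
  induction s using Finset.cons_induction with
  | empty => simp [nrm_zero h]
  | cons a s ha ih =>
      rw [Finset.sum_cons, Finset.sum_cons]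
      exact (h.2.2.2 _ _).trans (by linarith)

/-- Upper bound: nrm x ≤ C * ‖x‖. -/
lemma nrm_upper {nrm : (Fin d → ℝ) → ℝ} (h : IsVecNorm nrm) :
    ∃ C > 0, ∀ x, nrm x ≤ C * ‖x‖ := by
  classical
  set C := (∑ i : Fin d, nrm (fun j => if i = j then (1:ℝ) else 0)) + 1 with hC
  have hCpos : 0 < C := by
    have : 0 ≤ ∑ i : Fin d, nrm (fun j => if i = j then (1:ℝ) else 0) :=
      Finset.sum_nonneg fun i _ => h.1 _
    positivity
  refine ⟨C, hCpos, fun x => ?_⟩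
  have hx : x = ∑ i : Fin d, x i • fun j => if i = j then (1:ℝ) else 0 := pi_eq_sum_univ x
  calc nrm x = nrm (∑ i : Fin d, x i • fun j => if i = j then (1:ℝ) else 0) := by rw [← hx]
    _ ≤ ∑ i : Fin d, nrm (x i • fun j => if i = j then (1:ℝ) else 0) := nrm_sum_le h _ _
    _ ≤ ∑ i : Fin d, ‖x‖ * nrm (fun j => if i = j then (1:ℝ) else 0) := by
        refine Finset.sum_le_sum fun i _ => ?_
        rw [h.2.2.1]
        exact mul_le_mul_of_nonneg_right (by simpa [Real.norm_eq_abs] using norm_le_pi_norm x i) (h.1 _)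
    _ = (∑ i : Fin d, nrm (fun j => if i = j then (1:ℝ) else 0)) * ‖x‖ := by
        simp_rw [mul_comm ‖x‖]; rw [← Finset.sum_mul]
    _ ≤ C * ‖x‖ := by
        have := norm_nonneg x; nlinarith

lemma nrm_lipschitz {nrm : (Fin d → ℝ) → ℝ} (h : IsVecNorm nrm) : Continuous nrm := by
  obtain ⟨C, hC, hub⟩ := nrm_upper h
  have key : ∀ x y : Fin d → ℝ, nrm x - nrm y ≤ C * dist x y := by
    intro x y
    have h1 : nrm x ≤ nrm y + nrm (x - y) := by
      have := h.2.2.2 y (x - y); simpa using this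
    have h2 : nrm (x - y) ≤ C * ‖x - y‖ := hub _
    rw [dist_eq_norm]; linarith
  refine (LipschitzWith.of_dist_le_mul (K := ⟨C, hC.le⟩) fun x y => ?_).continuous
  rw [Real.dist_eq, abs_sub_le_iff]
  exact ⟨(key x y).trans_eq rfl, by have := key y x; rw [dist_comm] at this; exact this⟩

/-- Lower bound: c * ‖x‖ ≤ nrm x, provided d ≥ 1 (nonempty sphere). -/
lemma nrm_lower {nrm : (Fin d → ℝ) → ℝ} (h : IsVecNorm nrm)
    (hne : ∃ x₀ : Fin d → ℝ, x₀ ≠ 0) :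
    ∃ c > 0, ∀ x, c * ‖x‖ ≤ nrm x := by
  obtain ⟨x₀, hx₀⟩ := hne
  have hsne : (Metric.sphere (0 : Fin d → ℝ) 1).Nonempty := by
    refine ⟨‖x₀‖⁻¹ • x₀, ?_⟩
    have : ‖x₀‖ ≠ 0 := norm_ne_zero_iff.mpr hx₀
    simp [norm_smul, abs_of_nonneg (inv_nonneg.mpr (norm_nonneg x₀)), inv_mul_cancel₀ this]
  obtain ⟨z, hz, hzmin⟩ := (isCompact_sphere (0 : Fin d → ℝ) 1).exists_isMinOn hsne
    ((nrm_lipschitz h).continuousOn)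
  have hz1 : ‖z‖ = 1 := by simpa using hz
  have hzne : z ≠ 0 := by intro hzz; rw [hzz] at hz1; simp at hz1
  have hc : 0 < nrm z := lt_of_le_of_ne (h.1 z) fun e => hzne ((h.2.1 z).mp e.symm)
  refine ⟨nrm z, hc, fun x => ?_⟩
  rcases eq_or_ne x 0 with rfl | hx
  · simp [nrm_zero h]
  · have hxn : 0 < ‖x‖ := norm_pos_iff.mpr hx
    have hmem : ‖x‖⁻¹ • x ∈ Metric.sphere (0 : Fin d → ℝ) 1 := by
      simp [norm_smul, abs_of_nonneg (inv_nonneg.mpr hxn.le), inv_mul_cancel₀ hxn.ne']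
    have h3 : nrm z ≤ nrm (‖x‖⁻¹ • x) := hzmin hmem
    have h2 : nrm (‖x‖⁻¹ • x) = ‖x‖⁻¹ * nrm x := by
      rw [h.2.2.1, abs_of_nonneg (inv_nonneg.mpr hxn.le)]
    rw [h2] at h3
    calc nrm z * ‖x‖ ≤ (‖x‖⁻¹ * nrm x) * ‖x‖ := mul_le_mul_of_nonneg_right h3 hxn.le
      _ = nrm x := by field_simp

lemma memK_add {K : Set (Fin d → ℝ)} (hK : IsProperCone K) {v w : Fin d → ℝ}
    (hv : v ∈ K) (hw : w ∈ K) : v + w ∈ K := by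
  have hmid : (1/2 : ℝ) • v + (1/2 : ℝ) • w ∈ K :=
    hK.2.2.1 hv hw (by norm_num) (by norm_num) (by norm_num)
  have := hK.1 _ hmid 2 (by norm_num)
  have h2 : (2:ℝ) • ((1/2 : ℝ) • v + (1/2 : ℝ) • w) = v + w := by
    rw [smul_add, smul_smul, smul_smul]; norm_num
  rwa [h2] at this

end Aux
/-- If `M ≥^K N ≥^K 0` then `‖M‖ ≥ ‖N‖` in the operator norm induced by
a cone linear absolute norm w.r.t. the proper cone `K`. -/
theorem stmt_3 {d : ℕ} (K : Set (Fin d → ℝ)) (hK : IsProperCone K)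
    (nrm : (Fin d → ℝ) → ℝ) (hnrm : IsCLANorm K nrm)
    (M N : Matrix (Fin d) (Fin d) ℝ)
    (hMN : LeavesInvariant (M - N) K) (hN : LeavesInvariant N K) :
    opNorm nrm N ≤ opNorm nrm M := by
  classical
  obtain ⟨hVN, hCA, f, hf, hfl⟩ := hnrm
  by_cases hd : ∃ x : Fin d → ℝ, x ≠ 0
  swap
  · -- degenerate case: every vector is zero, both sets are empty
    push_neg at hd
    have hemp : ∀ P : Matrix (Fin d) (Fin d) ℝ,
        {r | ∃ x : Fin d → ℝ, x ≠ 0 ∧ r = nrm (P.mulVec x) / nrm x} = (∅ : Set ℝ) := by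
      intro P; ext r; simp only [Set.mem_setOf_eq, Set.mem_empty_iff_false, iff_false]
      rintro ⟨x, hx, -⟩; exact hx (hd x)
    unfold opNorm; rw [hemp N, hemp M]
  · -- main case
    have hMinv : LeavesInvariant M K := by
      intro v hv
      have h1 := hMN v hv
      have h2 := hN v hv
      rw [Matrix.sub_mulVec] at h1
      have := memK_add hK h1 h2
      simpa using this
    -- positivity of nrm on nonzero vectors
    have hpos : ∀ x : Fin d → ℝ, x ≠ 0 → 0 < nrm x := fun x hx =>
      lt_of_le_of_ne (hVN.1 x) fun e => hx ((hVN.2.1 x).mp e.symm)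
    obtain ⟨C, hC, hub⟩ := nrm_upper hVN
    obtain ⟨c, hc, hlb⟩ := nrm_lower hVN hd
    obtain ⟨x₀, hx₀⟩ := hd
    set SM := {r | ∃ x : Fin d → ℝ, x ≠ 0 ∧ r = nrm (M.mulVec x) / nrm x} with hSM
    set SN := {r | ∃ x : Fin d → ℝ, x ≠ 0 ∧ r = nrm (N.mulVec x) / nrm x} with hSN
    -- SM bounded above
    set L := LinearMap.toContinuousLinearMap (Matrix.mulVecLin M) with hL
    have hLx : ∀ x, L x = M.mulVec x := fun x => by
      simp [hL, Matrix.mulVecLin_apply]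
    have hbddM : BddAbove SM := by
      refine ⟨C * ‖L‖ / c, fun r hr => ?_⟩
      obtain ⟨x, hx, rfl⟩ := hr
      rw [div_le_div_iff₀ (hpos x hx) hc]
      calc nrm (M.mulVec x) * c ≤ (C * ‖M.mulVec x‖) * c :=
            mul_le_mul_of_nonneg_right (hub _) hc.le
        _ ≤ (C * (‖L‖ * ‖x‖)) * c := by
            have h4 : ‖M.mulVec x‖ ≤ ‖L‖ * ‖x‖ := by rw [← hLx]; exact L.le_opNorm x
            exact mul_le_mul_of_nonneg_right (mul_le_mul_of_nonneg_left h4 hC.le) hc.le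
        _ = (C * ‖L‖) * (c * ‖x‖) := by ring
        _ ≤ (C * ‖L‖) * nrm x :=
            mul_le_mul_of_nonneg_left (hlb x) (by positivity)
    set R := sSup SM with hR
    have hRmem : nrm (M.mulVec x₀) / nrm x₀ ∈ SM := ⟨x₀, hx₀, rfl⟩
    have hR0 : 0 ≤ R :=
      le_trans (div_nonneg (hVN.1 _) (hVN.1 _)) (le_csSup hbddM hRmem)
    -- key: nrm (M.mulVec v) ≤ R * nrm v for all v
    have hMle : ∀ v : Fin d → ℝ, nrm (M.mulVec v) ≤ R * nrm v := by
      intro v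
      rcases eq_or_ne v 0 with rfl | hv
      · simp [Matrix.mulVec_zero, nrm_zero hVN]
      · have : nrm (M.mulVec v) / nrm v ≤ R := le_csSup hbddM ⟨v, hv, rfl⟩
        calc nrm (M.mulVec v) = (nrm (M.mulVec v) / nrm v) * nrm v :=
              (div_mul_cancel₀ _ (hpos v hv).ne').symm
          _ ≤ R * nrm v := mul_le_mul_of_nonneg_right this (hVN.1 v)
    -- key inequality: nrm (N x) ≤ R * nrm x
    have key : ∀ x : Fin d → ℝ, nrm (N.mulVec x) ≤ R * nrm x := by
      intro x
      refine le_of_forall_pos_le_add fun ε hε => ?_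
      -- get a decomposition x = v - w with f ⬝ (v+w) close to nrm x
      set T := {r | ∃ v ∈ K, ∃ w ∈ K, x = v - w ∧ r = nrm (v + w)} with hT
      have hTbdd : BddBelow T := by
        refine ⟨0, fun r hr => ?_⟩
        obtain ⟨v, hv, w, hw, h1, rfl⟩ := hr
        exact hVN.1 _
      have hTne : T.Nonempty := by
        obtain ⟨u, hu⟩ := hK.2.2.2.1
        obtain ⟨δ, hδ, hball⟩ := Metric.mem_nhds_iff.mp (mem_interior_iff_mem_nhds.mp hu)
        set t := δ / (2 * (‖x‖ + 1)) with ht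
        have htpos : 0 < t := by positivity
        have hmem : u + t • x ∈ K := by
          apply hball
          rw [Metric.mem_ball, dist_eq_norm]
          have h1 : ‖u + t • x - u‖ = t * ‖x‖ := by
            rw [add_sub_cancel_left, norm_smul, Real.norm_eq_abs, abs_of_pos htpos]
          rw [h1, ht]
          calc δ / (2 * (‖x‖ + 1)) * ‖x‖ < δ / (2 * (‖x‖ + 1)) * (‖x‖ + 1) := by
                have : 0 < δ / (2 * (‖x‖ + 1)) := by positivity
                nlinarith
            _ = δ / 2 := by field_simp
            _ < δ := by linarith
        refine ⟨nrm (t⁻¹ • (u + t • x) + t⁻¹ • u), t⁻¹ • (u + t • x),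
          hK.1 _ hmem t⁻¹ (by positivity), t⁻¹ • u,
          hK.1 _ (interior_subset hu) t⁻¹ (by positivity), ?_, rfl⟩
        rw [← smul_sub, add_sub_cancel_left, smul_smul, inv_mul_cancel₀ htpos.ne', one_smul]
      have hsInf : sInf T < nrm x + ε / (R + 1) := by
        rw [← hCA x]; have : 0 < ε / (R + 1) := by positivity
        linarith [le_refl (nrm x)]
      obtain ⟨r, hrT, hrlt⟩ := (csInf_lt_iff hTbdd hTne).mp hsInf
      obtain ⟨v, hv, w, hw, hxvw, rfl⟩ := hrT
      -- nrm (N x) ≤ nrm (N v + N w)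
      have hNv : N.mulVec v ∈ K := hN v hv
      have hNw : N.mulVec w ∈ K := hN w hw
      have step1 : nrm (N.mulVec x) ≤ nrm (N.mulVec v + N.mulVec w) := by
        rw [hCA (N.mulVec x)]
        refine csInf_le ⟨0, fun r hr => ?_⟩ ?_
        · obtain ⟨v', _, w', _, _, rfl⟩ := hr; exact hVN.1 _
        · exact ⟨N.mulVec v, hNv, N.mulVec w, hNw, by rw [hxvw, Matrix.mulVec_sub], rfl⟩
      -- f ⬝ (N v) ≤ nrm (M v) ≤ R * nrm v = R * (f ⬝ v)
      have step2 : ∀ z ∈ K, f ⬝ᵥ N.mulVec z ≤ R * nrm z := by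
        intro z hz
        have h1 : (0:ℝ) ≤ f ⬝ᵥ (M.mulVec z - N.mulVec z) := by
          have := hf _ (hMN z hz)
          rwa [Matrix.sub_mulVec] at this
        rw [dotProduct_sub] at h1
        have h2 : f ⬝ᵥ N.mulVec z ≤ f ⬝ᵥ M.mulVec z := by linarith
        have h3 : f ⬝ᵥ M.mulVec z = nrm (M.mulVec z) := (hfl _ (hMinv z hz)).symm
        linarith [hMle z]
      have step3 : nrm (N.mulVec v + N.mulVec w) = f ⬝ᵥ N.mulVec v + f ⬝ᵥ N.mulVec w := by
        rw [hfl _ (memK_add hK hNv hNw), dotProduct_add]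
      have hnrmv : nrm v = f ⬝ᵥ v := hfl v hv
      have hnrmw : nrm w = f ⬝ᵥ w := hfl w hw
      have step4 : nrm (v + w) = nrm v + nrm w := by
        rw [hfl _ (memK_add hK hv hw), dotProduct_add, hnrmv, hnrmw]
      have hfinal : nrm (N.mulVec x) ≤ R * (nrm v + nrm w) := by
        calc nrm (N.mulVec x) ≤ nrm (N.mulVec v + N.mulVec w) := step1
          _ = f ⬝ᵥ N.mulVec v + f ⬝ᵥ N.mulVec w := step3
          _ ≤ R * nrm v + R * nrm w := add_le_add (step2 v hv) (step2 w hw)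
          _ = R * (nrm v + nrm w) := by ring
      have hlt : nrm v + nrm w < nrm x + ε / (R + 1) := by rw [← step4]; exact hrlt
      calc nrm (N.mulVec x) ≤ R * (nrm v + nrm w) := hfinal
        _ ≤ R * (nrm x + ε / (R + 1)) := mul_le_mul_of_nonneg_left hlt.le hR0
        _ = R * nrm x + R * (ε / (R + 1)) := by ring
        _ ≤ R * nrm x + ε := by
            have h1 : R * (ε / (R + 1)) ≤ ε := by
              rw [mul_div_assoc']
              rw [div_le_iff₀ (by linarith : (0:ℝ) < R + 1)]
              nlinarith
            linarith
    -- conclude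
    show sSup SN ≤ R
    refine Real.sSup_le (fun r hr => ?_) hR0
    obtain ⟨x, hx, rfl⟩ := hr
    rw [div_le_iff₀ (hpos x hx)]
    exact key x
end

section
/- Let ‖·‖ be a cone linear absolute norm with respect to a proper cone K. If M_i ≥^K N_i ≥^K 0 for i = 1, …, k, then ‖M_1 ⋯ M_k‖ ≥ ‖N_1 ⋯ N_k‖ in the induced operator norm. -/
open Matrix Set

lemma aux_prod_inv {d : ℕ} (K : Set (Fin d → ℝ))
    (h0 : (0 : Fin d → ℝ) ∈ K) (hadd : ∀ x ∈ K, ∀ y ∈ K, x + y ∈ K) :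
    ∀ (l : List (Matrix (Fin d) (Fin d) ℝ × Matrix (Fin d) (Fin d) ℝ)),
      (∀ p ∈ l, LeavesInvariant (p.1 - p.2) K ∧ LeavesInvariant p.2 K) →
      LeavesInvariant (l.map Prod.snd).prod K ∧
        LeavesInvariant ((l.map Prod.fst).prod - (l.map Prod.snd).prod) K := by
  intro l
  induction l with
  | nil =>
    intro _
    constructor
    · intro x hx; simpa [Matrix.one_mulVec] using hx
    · intro x hx; simpa [Matrix.sub_mulVec, Matrix.one_mulVec] using h0
  | cons p l ih =>
    intro h
    obtain ⟨hS, hD⟩ := ih (fun q hq => h q (List.mem_cons_of_mem _ hq))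
    obtain ⟨hpd, hps⟩ := h p List.mem_cons_self
    have hpf : LeavesInvariant p.1 K := by
      intro x hx
      have : p.1.mulVec x = (p.1 - p.2).mulVec x + p.2.mulVec x := by
        simp [Matrix.sub_mulVec]
      rw [this]
      exact hadd _ (hpd x hx) _ (hps x hx)
    constructor
    · intro x hx
      simp only [List.map_cons, List.prod_cons, ← Matrix.mulVec_mulVec]
      exact hps _ (hS x hx)
    · intro x hx
      simp only [List.map_cons, List.prod_cons]
      set F := (l.map Prod.fst).prod
      set S := (l.map Prod.snd).prod
      have hmat : p.1 * F - p.2 * S = (p.1 - p.2) * S + p.1 * (F - S) := by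
        noncomm_ring
      rw [hmat, Matrix.add_mulVec, ← Matrix.mulVec_mulVec, ← Matrix.mulVec_mulVec]
      exact hadd _ (hpd _ (hS x hx)) _ (hpf _ (hD x hx))

/-- If `M_i ≥^K N_i ≥^K 0` for `i = 1, …, k`, then
`‖M_1 ⋯ M_k‖ ≥ ‖N_1 ⋯ N_k‖` in the operator norm induced by a cone linear absolute norm. -/
theorem stmt_4 {d k : ℕ} (K : Set (Fin d → ℝ)) (hK : IsProperCone K)
    (nrm : (Fin d → ℝ) → ℝ) (hnrm : IsCLANorm K nrm)
    (M N : Fin k → Matrix (Fin d) (Fin d) ℝ)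
    (hMN : ∀ i, LeavesInvariant (M i - N i) K) (hN : ∀ i, LeavesInvariant (N i) K) :
    opNorm nrm (List.ofFn N).prod ≤ opNorm nrm (List.ofFn M).prod := by
  obtain ⟨⟨hnn, hzero, hsmul, htri⟩, habs, f, hfdual, hflin⟩ := hnrm
  obtain ⟨hKs, hKc, hKconv, hKint, hKpt⟩ := hK
  -- basic cone facts
  have hK0 : (0 : Fin d → ℝ) ∈ K := by
    obtain ⟨e, he⟩ := hKint
    have heK := interior_subset he
    simpa using hKs e heK 0 le_rfl
  have hKadd : ∀ x ∈ K, ∀ y ∈ K, x + y ∈ K := by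
    intro x hx y hy
    have h2 : (1/2 : ℝ) • x + (1/2 : ℝ) • y ∈ K :=
      hKconv hx hy (by norm_num) (by norm_num) (by norm_num)
    have h3 := hKs _ h2 2 (by norm_num)
    simpa [smul_add, smul_smul] using h3
  -- positivity of f on K \ {0}
  have hfpos : ∀ x ∈ K, x ≠ 0 → 0 < f ⬝ᵥ x := by
    intro x hx hx0
    have h1 : nrm x = f ⬝ᵥ x := hflin x hx
    have h2 : nrm x ≠ 0 := fun h => hx0 ((hzero x).mp h)
    have h3 : 0 ≤ f ⬝ᵥ x := hfdual x hx
    rcases h3.lt_or_eq with h | h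
    · exact h
    · exact absurd (h1.trans h.symm) h2
  -- every vector decomposes as a difference of cone elements
  have hdecomp : ∀ x : Fin d → ℝ, ∃ v ∈ K, ∃ w ∈ K, x = v - w := by
    intro x
    obtain ⟨e, he⟩ := hKint
    have hnhds : K ∈ nhds e := mem_interior_iff_mem_nhds.mp he
    obtain ⟨ε, hε, hball⟩ := Metric.mem_nhds_iff.mp hnhds
    set t : ℝ := ε / (2 * (‖x‖ + 1)) with ht_def
    have hxpos : 0 < ‖x‖ + 1 := by positivity
    have ht : 0 < t := by positivity
    have hv' : e + t • x ∈ K := by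
      apply hball
      simp only [Metric.mem_ball, dist_eq_norm]
      have : ‖e + t • x - e‖ = t * ‖x‖ := by
        simp [norm_smul, abs_of_pos ht]
      rw [this, ht_def]
      rw [div_mul_eq_mul_div, div_lt_iff₀ (by positivity)]
      nlinarith [norm_nonneg x]
    refine ⟨t⁻¹ • (e + t • x), hKs _ hv' _ (inv_nonneg.mpr ht.le),
      t⁻¹ • e, hKs _ (hball (Metric.mem_ball_self hε)) _ (inv_nonneg.mpr ht.le), ?_⟩
    rw [← smul_sub]
    simp [smul_smul, inv_mul_cancel₀ ht.ne']
  -- key sInf transfer lemma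
  have key : ∀ (R : Matrix (Fin d) (Fin d) ℝ) (a : ℝ), 0 ≤ a →
      (∀ v ∈ K, ∀ w ∈ K, nrm (R.mulVec (v - w)) ≤ a * nrm (v + w)) →
      ∀ x, nrm (R.mulVec x) ≤ a * nrm x := by
    intro R a ha hyp x
    set T := {r | ∃ v ∈ K, ∃ w ∈ K, x = v - w ∧ r = nrm (v + w)} with hT
    have hTx : nrm x = sInf T := habs x
    obtain ⟨v₀, hv₀, w₀, hw₀, hx₀⟩ := hdecomp x
    have hTne : T.Nonempty := ⟨nrm (v₀ + w₀), v₀, hv₀, w₀, hw₀, hx₀, rfl⟩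
    have hall : ∀ r ∈ T, nrm (R.mulVec x) ≤ a * r := by
      rintro r ⟨v, hv, w, hw, rfl, rfl⟩
      exact hyp v hv w hw
    rcases ha.lt_or_eq with ha' | ha'
    · have h1 : nrm (R.mulVec x) / a ≤ sInf T := by
        apply le_csInf hTne
        intro r hr
        rw [div_le_iff₀ ha']
        calc nrm (R.mulVec x) ≤ a * r := hall r hr
          _ = r * a := mul_comm _ _
      rw [hTx, ← div_le_iff₀' ha']
      exact h1
    · obtain ⟨r₀, hr₀⟩ := hTne
      have := hall r₀ hr₀
      rw [← ha'] at this ⊢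
      simpa using this
  -- products
  set P := (List.ofFn N).prod with hPdef
  set Q := (List.ofFn M).prod with hQdef
  have hprod := aux_prod_inv K hK0 hKadd (List.ofFn fun i => (M i, N i)) ?_
  swap
  · intro p hp
    rw [List.mem_ofFn] at hp
    obtain ⟨i, rfl⟩ := hp
    exact ⟨hMN i, hN i⟩
  have hmapfst : ((List.ofFn fun i => (M i, N i)).map Prod.fst) = List.ofFn M := by
    rw [List.map_ofFn]; rfl
  have hmapsnd : ((List.ofFn fun i => (M i, N i)).map Prod.snd) = List.ofFn N := by
    rw [List.map_ofFn]; rfl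
  rw [hmapfst, hmapsnd] at hprod
  obtain ⟨hP, hQP⟩ := hprod
  have hQ : LeavesInvariant Q K := by
    intro x hx
    have h1 : Q.mulVec x = (Q - P).mulVec x + P.mulVec x := by
      simp [Matrix.sub_mulVec]
    rw [h1]
    exact hKadd _ (hQP x hx) _ (hP x hx)
  -- the bound f ∘ Q ≤ C f on K (via compactness)
  have hC : ∃ C : ℝ, 0 ≤ C ∧ ∀ u ∈ K, f ⬝ᵥ Q.mulVec u ≤ C * (f ⬝ᵥ u) := by
    by_cases hKtriv : ∀ u ∈ K, u = 0
    · refine ⟨0, le_rfl, fun u hu => ?_⟩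
      rw [hKtriv u hu]
      simp
    · push_neg at hKtriv
      obtain ⟨u₁, hu₁, hu₁0⟩ := hKtriv
      set S : Set (Fin d → ℝ) := K ∩ Metric.sphere 0 1 with hSdef
      have hScomp : IsCompact S := (isCompact_sphere 0 1).inter_left hKc
      have hmemS : ∀ u ∈ K, u ≠ 0 → (‖u‖⁻¹ • u) ∈ S := by
        intro u hu hu0
        refine ⟨hKs _ hu _ (inv_nonneg.mpr (norm_nonneg _)), ?_⟩
        simp only [mem_sphere_iff_norm, sub_zero, norm_smul, norm_inv, norm_norm]
        rw [inv_mul_cancel₀ (norm_ne_zero_iff.mpr hu0)]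
      have hSne : S.Nonempty := ⟨_, hmemS u₁ hu₁ hu₁0⟩
      have hg : Continuous fun u : Fin d → ℝ => f ⬝ᵥ u := by
        unfold dotProduct
        exact continuous_finset_sum _ fun i _ => continuous_const.mul (continuous_apply i)
      obtain ⟨u₀, hu₀S, hmin⟩ := hScomp.exists_isMinOn hSne hg.continuousOn
      have hu₀0 : u₀ ≠ 0 := by
        intro h
        have := hu₀S.2
        rw [h] at this
        simp at this
      have hc : 0 < f ⬝ᵥ u₀ := hfpos u₀ hu₀S.1 hu₀0
      set c := f ⬝ᵥ u₀ with hcdef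
      have hlow : ∀ u ∈ K, c * ‖u‖ ≤ f ⬝ᵥ u := by
        intro u hu
        rcases eq_or_ne u 0 with rfl | hu0
        · simp
        · have h1 := isMinOn_iff.mp hmin _ (hmemS u hu hu0)
          rw [dotProduct_smul, smul_eq_mul] at h1
          have hn : (0:ℝ) < ‖u‖ := norm_pos_iff.mpr hu0
          calc c * ‖u‖ ≤ (‖u‖⁻¹ * (f ⬝ᵥ u)) * ‖u‖ :=
                mul_le_mul_of_nonneg_right h1 hn.le
            _ = f ⬝ᵥ u := by field_simp
      set D : ℝ := ∑ i, |Matrix.vecMul f Q i| with hDdef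
      have hD0 : 0 ≤ D := Finset.sum_nonneg fun i _ => abs_nonneg _
      have hDb : ∀ u : Fin d → ℝ, f ⬝ᵥ Q.mulVec u ≤ D * ‖u‖ := by
        intro u
        rw [Matrix.dotProduct_mulVec]
        calc Matrix.vecMul f Q ⬝ᵥ u = ∑ i, Matrix.vecMul f Q i * u i := rfl
          _ ≤ ∑ i, |Matrix.vecMul f Q i * u i| :=
              Finset.sum_le_sum fun i _ => le_abs_self _
          _ = ∑ i, |Matrix.vecMul f Q i| * |u i| := by simp [abs_mul]
          _ ≤ ∑ i, |Matrix.vecMul f Q i| * ‖u‖ :=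
              Finset.sum_le_sum fun i _ => mul_le_mul_of_nonneg_left
                (by simpa [Real.norm_eq_abs] using norm_le_pi_norm u i) (abs_nonneg _)
          _ = D * ‖u‖ := by rw [← Finset.sum_mul]
      refine ⟨D / c, div_nonneg hD0 hc.le, fun u hu => ?_⟩
      calc f ⬝ᵥ Q.mulVec u ≤ D * ‖u‖ := hDb u
        _ = (D / c) * (c * ‖u‖) := by field_simp
        _ ≤ (D / c) * (f ⬝ᵥ u) :=
            mul_le_mul_of_nonneg_left (hlow u hu) (div_nonneg hD0 hc.le)
  obtain ⟨C, hC0, hCb⟩ := hC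
  -- basic bound on sInf sets
  have hbddT : ∀ y : Fin d → ℝ,
      BddBelow {r | ∃ v ∈ K, ∃ w ∈ K, y = v - w ∧ r = nrm (v + w)} := by
    intro y
    exact ⟨0, by rintro r ⟨v, hv, w, hw, _, rfl⟩; exact hnn _⟩
  have hstep : ∀ (R : Matrix (Fin d) (Fin d) ℝ), LeavesInvariant R K →
      ∀ v ∈ K, ∀ w ∈ K, nrm (R.mulVec (v - w)) ≤ f ⬝ᵥ R.mulVec (v + w) := by
    intro R hR v hv w hw
    have hmem : f ⬝ᵥ R.mulVec (v + w) ∈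
        {r | ∃ v' ∈ K, ∃ w' ∈ K, R.mulVec (v - w) = v' - w' ∧ r = nrm (v' + w')} := by
      refine ⟨R.mulVec v, hR v hv, R.mulVec w, hR w hw, by rw [Matrix.mulVec_sub], ?_⟩
      rw [hflin _ (hKadd _ (hR v hv) _ (hR w hw)), Matrix.mulVec_add]
    calc nrm (R.mulVec (v - w))
        = sInf {r | ∃ v' ∈ K, ∃ w' ∈ K, R.mulVec (v - w) = v' - w' ∧ r = nrm (v' + w')} :=
          habs _
      _ ≤ f ⬝ᵥ R.mulVec (v + w) := csInf_le (hbddT _) hmem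
  -- bound for Q
  have hQbound : ∀ x, nrm (Q.mulVec x) ≤ C * nrm x := by
    apply key Q C hC0
    intro v hv w hw
    calc nrm (Q.mulVec (v - w)) ≤ f ⬝ᵥ Q.mulVec (v + w) := hstep Q hQ v hv w hw
      _ ≤ C * (f ⬝ᵥ (v + w)) := hCb _ (hKadd _ hv _ hw)
      _ = C * nrm (v + w) := by rw [hflin _ (hKadd _ hv _ hw)]
  -- sets appearing in the operator norms
  set SQ := {r | ∃ x : Fin d → ℝ, x ≠ 0 ∧ r = nrm (Q.mulVec x) / nrm x} with hSQdef
  set SP := {r | ∃ x : Fin d → ℝ, x ≠ 0 ∧ r = nrm (P.mulVec x) / nrm x} with hSPdef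
  have hnrmpos : ∀ x : Fin d → ℝ, x ≠ 0 → 0 < nrm x := by
    intro x hx
    rcases (hnn x).lt_or_eq with h | h
    · exact h
    · exact absurd ((hzero x).mp h.symm) hx
  have hSQbdd : BddAbove SQ := by
    refine ⟨C, ?_⟩
    rintro r ⟨x, hx0, rfl⟩
    rw [div_le_iff₀ (hnrmpos x hx0)]
    calc nrm (Q.mulVec x) ≤ C * nrm x := hQbound x
      _ = C * nrm x := rfl
  by_cases hex : ∃ x : Fin d → ℝ, x ≠ 0
  · obtain ⟨x₀, hx₀⟩ := hex
    have hQmem : ∀ x : Fin d → ℝ, x ≠ 0 → nrm (Q.mulVec x) / nrm x ≤ sSup SQ := by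
      intro x hx
      exact le_csSup hSQbdd ⟨x, hx, rfl⟩
    have h0Q : 0 ≤ sSup SQ :=
      le_trans (div_nonneg (hnn _) (hnn _)) (hQmem x₀ hx₀)
    have hPbound : ∀ x, nrm (P.mulVec x) ≤ sSup SQ * nrm x := by
      apply key P _ h0Q
      intro v hv w hw
      rcases eq_or_ne (v + w) 0 with huw | huw
      · have hwv : w = -v := by linear_combination huw - v
        have hv0 : v = 0 := hKpt v hv (hwv ▸ hw)
        have hw0 : w = 0 := by rw [hwv, hv0]; simp
        rw [hv0, hw0]
        simp [Matrix.mulVec_zero, (hzero 0).mpr rfl]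
      · have h1 : nrm (P.mulVec (v - w)) ≤ f ⬝ᵥ P.mulVec (v + w) :=
          hstep P hP v hv w hw
        have huwK : v + w ∈ K := hKadd _ hv _ hw
        have h2 : f ⬝ᵥ P.mulVec (v + w) ≤ f ⬝ᵥ Q.mulVec (v + w) := by
          have h3 : 0 ≤ f ⬝ᵥ (Q - P).mulVec (v + w) := hfdual _ (hQP _ huwK)
          rw [Matrix.sub_mulVec, dotProduct_sub] at h3
          linarith
        have h4 : f ⬝ᵥ Q.mulVec (v + w) = nrm (Q.mulVec (v + w)) :=
          (hflin _ (hQ _ huwK)).symm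
        have h5 : nrm (Q.mulVec (v + w)) ≤ sSup SQ * nrm (v + w) := by
          have := hQmem _ huw
          rw [div_le_iff₀ (hnrmpos _ huw)] at this
          linarith [this]
        linarith
    show sSup SP ≤ sSup SQ
    apply Real.sSup_le _ h0Q
    rintro r ⟨x, hx0, rfl⟩
    rw [div_le_iff₀ (hnrmpos x hx0)]
    exact hPbound x
  · push_neg at hex
    have hSPe : SP = ∅ := by
      ext r
      simp only [hSPdef, mem_setOf_eq, mem_empty_iff_false, iff_false]
      rintro ⟨x, hx0, _⟩
      exact hx0 (hex x)
    have hSQe : SQ = ∅ := by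
      ext r
      simp only [hSQdef, mem_setOf_eq, mem_empty_iff_false, iff_false]
      rintro ⟨x, hx0, _⟩
      exact hx0 (hex x)
    show sSup SP ≤ sSup SQ
    rw [hSPe, hSQe]
end

section
/- Let K ⊂ R^d be a proper cone and let M be K-positive. Then there exists f in the interior of the dual cone K* such that f is an eigenvector of Mᵀ with eigenvalue ρ(M), and the cone linear absolute norm ‖·‖_f induced by f satisfies ‖M‖_f = ρ(M) for the induced operator norm. -/
open Matrix Set

namespace Stmt8Aux

variable {d : ℕ}

lemma abs_dot_le (a b : Fin d → ℝ) : |a ⬝ᵥ b| ≤ (d : ℝ) * ‖a‖ * ‖b‖ := by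
  calc |a ⬝ᵥ b| ≤ ∑ i, |a i * b i| := by
        rw [dotProduct]; exact Finset.abs_sum_le_sum_abs _ _
    _ ≤ ∑ _i : Fin d, ‖a‖ * ‖b‖ := by
        refine Finset.sum_le_sum fun i _ => ?_
        rw [abs_mul]
        have h1 : |a i| ≤ ‖a‖ := by
          simpa [Real.norm_eq_abs] using norm_le_pi_norm a i
        have h2 : |b i| ≤ ‖b‖ := by
          simpa [Real.norm_eq_abs] using norm_le_pi_norm b i
        exact mul_le_mul h1 h2 (abs_nonneg _) (norm_nonneg _)
    _ = (d : ℝ) * ‖a‖ * ‖b‖ := by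
        simp [Finset.sum_const, mul_assoc]

lemma dualConeSet_closed (K : Set (Fin d → ℝ)) : IsClosed (dualConeSet K) := by
  have : dualConeSet K = ⋂ x ∈ K, {f : Fin d → ℝ | 0 ≤ f ⬝ᵥ x} := by
    ext f; simp [dualConeSet]
  rw [this]
  refine isClosed_biInter fun x _ => ?_
  have hc : Continuous fun f : Fin d → ℝ => f ⬝ᵥ x := by
    unfold dotProduct
    exact continuous_finset_sum _ fun i _ => (continuous_apply i).mul continuous_const
  exact isClosed_le continuous_const hc

lemma dualConeSet_smul {K : Set (Fin d → ℝ)} {f : Fin d → ℝ} (hf : f ∈ dualConeSet K)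
    {c : ℝ} (hc : 0 ≤ c) : c • f ∈ dualConeSet K := by
  intro x hx
  have := hf x hx
  simp only [smul_dotProduct, smul_eq_mul]
  positivity

/-- mulVec bound wrt sup norm. -/
lemma mulVec_bound (A : Matrix (Fin d) (Fin d) ℝ) :
    ∃ C : ℝ, 0 ≤ C ∧ ∀ x : Fin d → ℝ, ‖A.mulVec x‖ ≤ C * ‖x‖ := by
  refine ⟨∑ j, ∑ i, |A j i|, by positivity, fun x => ?_⟩
  have hnn : (0:ℝ) ≤ (∑ j, ∑ i, |A j i|) * ‖x‖ := by positivity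
  rw [pi_norm_le_iff_of_nonneg hnn]
  intro j
  have : |A.mulVec x j| ≤ (∑ i, |A j i|) * ‖x‖ := by
    calc |A.mulVec x j| ≤ ∑ i, |A j i * x i| := by
          rw [Matrix.mulVec, dotProduct]
          exact Finset.abs_sum_le_sum_abs _ _
      _ ≤ ∑ i, |A j i| * ‖x‖ := by
          refine Finset.sum_le_sum fun i _ => ?_
          rw [abs_mul]
          have h2 : |x i| ≤ ‖x‖ := by
            simpa [Real.norm_eq_abs] using norm_le_pi_norm x i
          exact mul_le_mul_of_nonneg_left h2 (abs_nonneg _)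
      _ = (∑ i, |A j i|) * ‖x‖ := by rw [Finset.sum_mul]
  refine le_trans ?_ (le_trans this ?_)
  · simp [Real.norm_eq_abs]
  · have h1 : (∑ i, |A j i|) ≤ ∑ j, ∑ i, |A j i| :=
      Finset.single_le_sum (f := fun j => ∑ i, |A j i|) (fun _ _ => by positivity) (Finset.mem_univ j)
    exact mul_le_mul_of_nonneg_right h1 (norm_nonneg _)

/-- A linear functional given by a CLM equals dot product with a vector. -/
lemma clm_eq_dot (g : (Fin d → ℝ) →L[ℝ] ℝ) :
    ∀ x, g x = (fun i => g (Pi.single i 1)) ⬝ᵥ x := by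
  intro x
  have hx : x = ∑ i, Pi.single i (x i) := (Finset.univ_sum_single x).symm
  have hsingle : ∀ i, Pi.single i (x i) = x i • (Pi.single i 1 : Fin d → ℝ) := by
    intro i; ext j
    by_cases h : j = i
    · subst h; simp
    · simp [Pi.single_apply, h]
  calc g x = g (∑ i, Pi.single i (x i)) := by rw [← hx]
    _ = ∑ i, g (Pi.single i (x i)) := map_sum g _ _
    _ = ∑ i, x i * g (Pi.single i 1) := by
        refine Finset.sum_congr rfl fun i _ => ?_
        rw [hsingle i, g.map_smul, smul_eq_mul]
    _ = (fun i => g (Pi.single i 1)) ⬝ᵥ x := by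
        simp [dotProduct, mul_comm]

end Stmt8Aux

namespace Stmt8Aux2
open Stmt8Aux

variable {d : ℕ}

lemma dot_continuous (g : Fin d → ℝ) : Continuous fun x : Fin d → ℝ => g ⬝ᵥ x := by
  unfold dotProduct
  exact continuous_finset_sum _ fun i _ => continuous_const.mul (continuous_apply i)

lemma cone_min {C : Set (Fin d → ℝ)} (hcl : IsClosed C)
    (hcone : ∀ x ∈ C, ∀ c : ℝ, 0 ≤ c → c • x ∈ C)
    {φ : (Fin d → ℝ) → ℝ} (hφc : Continuous φ)
    (hφh : ∀ (c : ℝ) (x : Fin d → ℝ), 0 ≤ c → φ (c • x) = c * φ x)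
    (hpos : ∀ x ∈ C, x ≠ 0 → 0 < φ x) :
    ∃ δ > 0, ∀ x ∈ C, δ * ‖x‖ ≤ φ x := by
  have hφ0 : φ 0 = 0 := by
    have := hφh 0 0 le_rfl
    simpa using this
  set S := C ∩ Metric.sphere (0 : Fin d → ℝ) 1 with hS
  by_cases hne : S.Nonempty
  · have hcomp : IsCompact S := by
      have hclosed : IsClosed S := hcl.inter Metric.isClosed_sphere
      have hbdd : Bornology.IsBounded S :=
        (Metric.isBounded_sphere).subset (inter_subset_right)
      exact Metric.isCompact_of_isClosed_isBounded hclosed hbdd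
    obtain ⟨x₀, hx₀S, hmin⟩ := hcomp.exists_isMinOn hne hφc.continuousOn
    have hx₀ne : x₀ ≠ 0 := by
      intro h
      have := hx₀S.2
      rw [h] at this
      simp at this
    have hδ : 0 < φ x₀ := hpos x₀ hx₀S.1 hx₀ne
    refine ⟨φ x₀, hδ, fun x hx => ?_⟩
    rcases eq_or_ne x 0 with rfl | hxne
    · simp [hφ0]
    · have hnx : 0 < ‖x‖ := norm_pos_iff.2 hxne
      set y := ‖x‖⁻¹ • x with hy
      have hyC : y ∈ C := hcone x hx _ (by positivity)
      have hyS : y ∈ S := by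
        constructor
        · exact hyC
        · simp [hy, norm_smul, abs_of_pos (inv_pos.2 hnx), inv_mul_cancel₀ hnx.ne']
      have h1 : φ x₀ ≤ φ y := hmin hyS
      have h2 : φ x = ‖x‖ * φ y := by
        have hxy : x = ‖x‖ • y := by
          rw [hy, smul_smul, mul_inv_cancel₀ hnx.ne', one_smul]
        conv_lhs => rw [hxy]
        rw [hφh _ _ (norm_nonneg x)]
      rw [h2, mul_comm ‖x‖ (φ y)]
      exact mul_le_mul_of_nonneg_right h1 hnx.le
  · -- C ⊆ {0}
    refine ⟨1, one_pos, fun x hx => ?_⟩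
    rcases eq_or_ne x 0 with rfl | hxne
    · simp [hφ0]
    · exfalso
      apply hne
      have hnx : 0 < ‖x‖ := norm_pos_iff.2 hxne
      refine ⟨‖x‖⁻¹ • x, hcone x hx _ (by positivity), ?_⟩
      simp [norm_smul, abs_of_pos (inv_pos.2 hnx), inv_mul_cancel₀ hnx.ne']

lemma strictpos_mem_interior_dual {K : Set (Fin d → ℝ)} (hKcl : IsClosed K)
    (hKcone : ∀ x ∈ K, ∀ c : ℝ, 0 ≤ c → c • x ∈ K)
    {g : Fin d → ℝ} (hpos : ∀ x ∈ K, x ≠ 0 → 0 < g ⬝ᵥ x) :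
    g ∈ interior (dualConeSet K) := by
  obtain ⟨δ, hδ, hmin⟩ := cone_min hKcl hKcone (dot_continuous g)
    (fun c x hc => by rw [dotProduct_smul, smul_eq_mul]) hpos
  have hball : Metric.ball g (δ / (d + 1)) ⊆ dualConeSet K := by
    intro g' hg' x hx
    have hdist : ‖g' - g‖ < δ / (d + 1) := by
      rw [Metric.mem_ball, dist_eq_norm] at hg'
      exact hg'
    have h1 : |(g' - g) ⬝ᵥ x| ≤ (d : ℝ) * ‖g' - g‖ * ‖x‖ := abs_dot_le _ _
    have h2 : g' ⬝ᵥ x = g ⬝ᵥ x + (g' - g) ⬝ᵥ x := by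
      rw [sub_dotProduct]; ring
    rw [h2]
    have h3 : δ * ‖x‖ ≤ g ⬝ᵥ x := hmin x hx
    have h4 : -((d : ℝ) * ‖g' - g‖ * ‖x‖) ≤ (g' - g) ⬝ᵥ x := neg_le_of_abs_le h1
    have h5 : (d : ℝ) * ‖g' - g‖ * ‖x‖ ≤ δ * ‖x‖ := by
      have : (d : ℝ) * ‖g' - g‖ ≤ δ := by
        have hd1 : (d : ℝ) ≤ (d : ℝ) + 1 := by linarith
        calc (d : ℝ) * ‖g' - g‖ ≤ ((d : ℝ) + 1) * ‖g' - g‖ :=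
              mul_le_mul_of_nonneg_right hd1 (norm_nonneg _)
          _ ≤ ((d : ℝ) + 1) * (δ / (d + 1)) := by
              apply mul_le_mul_of_nonneg_left hdist.le (by positivity)
          _ = δ := by field_simp
      exact mul_le_mul_of_nonneg_right this (norm_nonneg _)
    linarith
  have hopen : g ∈ Metric.ball g (δ / (d + 1)) := by
    apply Metric.mem_ball_self
    positivity
  exact mem_interior.2 ⟨_, hball, Metric.isOpen_ball, hopen⟩

lemma exists_mem_ne_zero {K : Set (Fin d → ℝ)} (hd : 0 < d)
    (hint : (interior K).Nonempty) : ∃ z ∈ K, z ≠ 0 := by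
  obtain ⟨e, he⟩ := hint
  rcases eq_or_ne e 0 with rfl | hne
  · obtain ⟨ε, hε, hball⟩ := Metric.isOpen_iff.1 isOpen_interior 0 he
    refine ⟨(ε / 2) • (Pi.single (⟨0, hd⟩ : Fin d) 1 : Fin d → ℝ), ?_, ?_⟩
    · apply interior_subset
      apply hball
      rw [Metric.mem_ball, dist_zero_right, norm_smul]
      have : ‖(Pi.single (⟨0, hd⟩ : Fin d) 1 : Fin d → ℝ)‖ = 1 := by
        simp [Pi.norm_single]
      rw [this, Real.norm_eq_abs, abs_of_pos (by positivity)]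
      linarith
    · intro h
      have := congrFun h ⟨0, hd⟩
      simp at this
      linarith
  · exact ⟨e, interior_subset he, hne⟩

lemma dual_pos_on_interior {K : Set (Fin d → ℝ)}
    (hint : (interior K).Nonempty)
    {f : Fin d → ℝ} (hf : f ∈ dualConeSet K) (hfne : f ≠ 0)
    {y : Fin d → ℝ} (hy : y ∈ interior K) : 0 < f ⬝ᵥ y := by
  -- first: ∃ z ∈ K with 0 < f ⬝ᵥ z
  obtain ⟨e, he⟩ := hint
  have hz : ∃ z ∈ K, 0 < f ⬝ᵥ z := by
    by_contra hcon
    push_neg at hcon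
    have hzero : ∀ z ∈ K, f ⬝ᵥ z = 0 := fun z hz => le_antisymm (hcon z hz) (hf z hz)
    obtain ⟨ε, hε, hball⟩ := Metric.isOpen_iff.1 isOpen_interior e he
    apply hfne
    ext i
    have h1 : e + (ε / 2) • (Pi.single i 1 : Fin d → ℝ) ∈ K := by
      apply interior_subset; apply hball
      rw [Metric.mem_ball, dist_eq_norm]
      have : e + (ε / 2) • (Pi.single i 1 : Fin d → ℝ) - e = (ε / 2) • (Pi.single i 1 : Fin d → ℝ) := by abel
      rw [this, norm_smul]
      have h2 : ‖(Pi.single i 1 : Fin d → ℝ)‖ = 1 := by simp [Pi.norm_single]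
      rw [h2, Real.norm_eq_abs, abs_of_pos (by positivity)]
      linarith
    have he' : f ⬝ᵥ e = 0 := hzero e (interior_subset he)
    have := hzero _ h1
    rw [dotProduct_add, he', dotProduct_smul] at this
    have h3 : f ⬝ᵥ Pi.single i 1 = f i := by
      simp [dotProduct_single]
    rw [h3] at this
    simp only [smul_eq_mul, zero_add] at this
    have : f i = 0 := by
      have hε2 : (ε / 2) ≠ 0 := by positivity
      exact (mul_eq_zero.1 this).resolve_left hε2
    simpa using this
  obtain ⟨z, hzK, hzpos⟩ := hz
  obtain ⟨ε, hε, hball⟩ := Metric.isOpen_iff.1 isOpen_interior y hy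
  set t := ε / (2 * (‖z‖ + 1)) with ht
  have htpos : 0 < t := by positivity
  have hyt : y - t • z ∈ K := by
    apply interior_subset; apply hball
    rw [Metric.mem_ball, dist_eq_norm]
    have : y - t • z - y = -(t • z) := by abel
    rw [this, norm_neg, norm_smul, Real.norm_eq_abs, abs_of_pos htpos]
    rw [ht, div_mul_eq_mul_div]
    refine (div_lt_iff₀ (by positivity)).2 ?_
    nlinarith [norm_nonneg z]
  have h0 : 0 ≤ f ⬝ᵥ (y - t • z) := hf _ hyt
  rw [dotProduct_sub, dotProduct_smul, smul_eq_mul] at h0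
  nlinarith

end Stmt8Aux2

namespace Stmt8Aux3
open Stmt8Aux Stmt8Aux2

variable {d : ℕ}

lemma exists_perron (hd : 0 < d) {K : Set (Fin d → ℝ)} (hK : IsProperCone K)
    {M : Matrix (Fin d) (Fin d) ℝ} (hM : IsKPos M K) :
    ∃ r : ℝ, 0 < r ∧ ∃ f : Fin d → ℝ, f ≠ 0 ∧
      Mᵀ.mulVec f = r • f ∧ f ∈ interior (dualConeSet K) := by
  obtain ⟨hKcone, hKcl, hKconv, hKint, hKpointed⟩ := hK
  obtain ⟨e, he⟩ := hKint
  have heK : e ∈ K := interior_subset he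
  have h0K : (0 : Fin d → ℝ) ∈ K := by
    simpa using hKcone e heK 0 le_rfl
  have hMinv : ∀ x ∈ K, M.mulVec x ∈ K := by
    intro x hx
    rcases eq_or_ne x 0 with rfl | hne
    · simpa [Matrix.mulVec_zero] using h0K
    · exact interior_subset (hM x hx hne)
  set C := dualConeSet K with hC
  have hCcl : IsClosed C := dualConeSet_closed K
  have hCcone : ∀ x ∈ C, ∀ c : ℝ, 0 ≤ c → c • x ∈ C :=
    fun x hx c hc => dualConeSet_smul hx hc
  have hdotMT : ∀ (f x : Fin d → ℝ), Mᵀ.mulVec f ⬝ᵥ x = f ⬝ᵥ M.mulVec x := by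
    intro f x
    rw [Matrix.mulVec_transpose, ← Matrix.dotProduct_mulVec]
  have Astrict : ∀ f ∈ C, f ≠ 0 → ∀ x ∈ K, x ≠ 0 → 0 < Mᵀ.mulVec f ⬝ᵥ x := by
    intro f hf hfne x hx hxne
    rw [hdotMT]
    exact dual_pos_on_interior ⟨e, he⟩ hf hfne (hM x hx hxne)
  have Apos : ∀ f ∈ C, f ≠ 0 → Mᵀ.mulVec f ∈ interior C := by
    intro f hf hfne
    exact strictpos_mem_interior_dual hKcl hKcone (Astrict f hf hfne)
  have Ane : ∀ f ∈ C, f ≠ 0 → Mᵀ.mulVec f ≠ 0 := by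
    intro f hf hfne h
    obtain ⟨z, hzK, hzne⟩ := exists_mem_ne_zero hd ⟨e, he⟩
    have := Astrict f hf hfne z hzK hzne
    rw [h, zero_dotProduct] at this
    exact lt_irrefl 0 this
  have AmapC : ∀ f ∈ C, Mᵀ.mulVec f ∈ C := by
    intro f hf x hx
    rw [hdotMT]
    exact hf _ (hMinv x hx)
  obtain ⟨z, hzK, hzne⟩ := exists_mem_ne_zero hd ⟨e, he⟩
  -- a nonzero element of C via Hahn-Banach
  have hzneg : -z ∉ K := fun h => hzne (hKpointed z hzK h)
  obtain ⟨g, u, hgu, hgz⟩ := geometric_hahn_banach_closed_point hKconv hKcl hzneg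
  have hu0 : 0 < u := by simpa using hgu 0 h0K
  have hgle : ∀ x ∈ K, g x ≤ 0 := by
    intro x hx
    by_contra hpos
    push_neg at hpos
    have h2 := hgu _ (hKcone x hx ((u + 1) / g x) (by positivity))
    rw [g.map_smul, smul_eq_mul, div_mul_cancel₀ _ hpos.ne'] at h2
    linarith
  set f0 : Fin d → ℝ := -(fun i => g (Pi.single i 1)) with hf0
  have hf0dot : ∀ x, f0 ⬝ᵥ x = -(g x) := by
    intro x
    rw [hf0, neg_dotProduct, clm_eq_dot g x]
  have hf0C : f0 ∈ C := by
    intro x hx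
    rw [hf0dot]
    linarith [hgle x hx]
  have hf0ne : f0 ≠ 0 := by
    intro h
    have h1 : f0 ⬝ᵥ (-z) = 0 := by rw [h, zero_dotProduct]
    rw [hf0dot] at h1
    linarith
  have hnf0 : 0 < ‖f0‖ := norm_pos_iff.2 hf0ne
  set x0 : Fin d → ℝ := ‖f0‖⁻¹ • f0 with hx0
  have hx0C : x0 ∈ C := hCcone f0 hf0C _ (by positivity)
  have hx0n : ‖x0‖ = 1 := by
    rw [hx0, norm_smul, Real.norm_eq_abs, abs_of_pos (inv_pos.2 hnf0), inv_mul_cancel₀ hnf0.ne']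
  have hx0ne : x0 ≠ 0 := by
    intro h; rw [h, norm_zero] at hx0n; exact one_ne_zero hx0n.symm
  -- the bound T
  obtain ⟨CA, hCA0, hCA⟩ := mulVec_bound Mᵀ
  have hφpos : ∀ x ∈ C, x ≠ 0 → 0 < e ⬝ᵥ x := by
    intro x hx hxne
    rw [dotProduct_comm]
    exact dual_pos_on_interior ⟨e, he⟩ hx hxne he
  obtain ⟨δ, hδpos, hδ⟩ := cone_min hCcl hCcone (dot_continuous e)
    (fun c x _ => by rw [dotProduct_smul, smul_eq_mul]) hφpos
  set T : ℝ := (d : ℝ) * CA * ‖e‖ / δ with hTdef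
  have hT0 : 0 ≤ T := by positivity
  have hT : ∀ (t : ℝ) (x : Fin d → ℝ), 0 ≤ t → x ∈ C → ‖x‖ = 1 →
      Mᵀ.mulVec x - t • x ∈ C → t ≤ T := by
    intro t x ht hx hxn hmem
    have h1 : 0 ≤ (Mᵀ.mulVec x - t • x) ⬝ᵥ e := hmem e heK
    rw [sub_dotProduct, smul_dotProduct, smul_eq_mul, sub_nonneg] at h1
    have h2 : δ ≤ x ⬝ᵥ e := by
      have := hδ x hx
      rw [hxn, mul_one] at this
      rw [dotProduct_comm]
      exact this
    have h3 : Mᵀ.mulVec x ⬝ᵥ e ≤ (d : ℝ) * CA * ‖e‖ := by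
      have := abs_dot_le (Mᵀ.mulVec x) e
      have h4 : ‖Mᵀ.mulVec x‖ ≤ CA := by
        have := hCA x
        rw [hxn, mul_one] at this
        exact this
      have h5 : (d : ℝ) * ‖Mᵀ.mulVec x‖ * ‖e‖ ≤ (d : ℝ) * CA * ‖e‖ := by
        have hd0 : (0:ℝ) ≤ d := Nat.cast_nonneg d
        exact mul_le_mul_of_nonneg_right (mul_le_mul_of_nonneg_left h4 hd0) (norm_nonneg e)
      calc Mᵀ.mulVec x ⬝ᵥ e ≤ |Mᵀ.mulVec x ⬝ᵥ e| := le_abs_self _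
        _ ≤ (d : ℝ) * ‖Mᵀ.mulVec x‖ * ‖e‖ := abs_dot_le _ _
        _ ≤ (d : ℝ) * CA * ‖e‖ := h5
    have h6 : t * δ ≤ t * (x ⬝ᵥ e) := mul_le_mul_of_nonneg_left h2 ht
    rw [hTdef, le_div_iff₀ hδpos]
    calc t * δ ≤ t * (x ⬝ᵥ e) := h6
      _ ≤ Mᵀ.mulVec x ⬝ᵥ e := h1
      _ ≤ (d : ℝ) * CA * ‖e‖ := h3
  -- the compact set of admissible pairs
  set P : Set (ℝ × (Fin d → ℝ)) :=
    {p | p.1 ∈ Icc (0:ℝ) T ∧ p.2 ∈ C ∧ ‖p.2‖ = 1 ∧ Mᵀ.mulVec p.2 - p.1 • p.2 ∈ C} with hP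
  have hPclosed : IsClosed P := by
    have h1 : IsClosed {p : ℝ × (Fin d → ℝ) | p.1 ∈ Icc (0:ℝ) T} :=
      isClosed_Icc.preimage continuous_fst
    have h2 : IsClosed {p : ℝ × (Fin d → ℝ) | p.2 ∈ C} := hCcl.preimage continuous_snd
    have h3 : IsClosed {p : ℝ × (Fin d → ℝ) | ‖p.2‖ = 1} :=
      isClosed_eq (continuous_norm.comp continuous_snd) continuous_const
    have hcont : Continuous fun p : ℝ × (Fin d → ℝ) => Mᵀ.mulVec p.2 - p.1 • p.2 := by
      have hmv : Continuous fun x : Fin d → ℝ => Mᵀ.mulVec x :=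
        LinearMap.continuous_of_finiteDimensional Mᵀ.mulVecLin
      exact (hmv.comp continuous_snd).sub (continuous_fst.smul continuous_snd)
    have h4 : IsClosed {p : ℝ × (Fin d → ℝ) | Mᵀ.mulVec p.2 - p.1 • p.2 ∈ C} :=
      hCcl.preimage hcont
    have hPeq : P = {p : ℝ × (Fin d → ℝ) | p.1 ∈ Icc (0:ℝ) T} ∩
        ({p : ℝ × (Fin d → ℝ) | p.2 ∈ C} ∩ ({p : ℝ × (Fin d → ℝ) | ‖p.2‖ = 1} ∩
          {p : ℝ × (Fin d → ℝ) | Mᵀ.mulVec p.2 - p.1 • p.2 ∈ C})) := by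
      ext p
      simp only [hP, Set.mem_setOf_eq, Set.mem_inter_iff, and_assoc]
    rw [hPeq]
    exact h1.inter (h2.inter (h3.inter h4))
  have hPbdd : Bornology.IsBounded P := by
    have : P ⊆ Icc (0:ℝ) T ×ˢ Metric.closedBall (0 : Fin d → ℝ) 1 := by
      intro p hp
      refine ⟨hp.1, ?_⟩
      rw [Metric.mem_closedBall, dist_zero_right, hp.2.2.1]
    exact (Bornology.IsBounded.prod (Metric.isBounded_Icc 0 T)
      Metric.isBounded_closedBall).subset this
  have hPcomp : IsCompact P := Metric.isCompact_of_isClosed_isBounded hPclosed hPbdd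
  have hPne : P.Nonempty := by
    refine ⟨(0, x0), ⟨le_rfl, hT0⟩, hx0C, hx0n, ?_⟩
    simp only [zero_smul, sub_zero]
    exact AmapC x0 hx0C
  obtain ⟨⟨r, x⟩, hmem, hmax⟩ := hPcomp.exists_isMaxOn hPne continuous_fst.continuousOn
  obtain ⟨⟨hr0, hrT⟩, hxC, hxn, hxadm⟩ := hmem
  have hxne : x ≠ 0 := by
    intro h; rw [h, norm_zero] at hxn; exact one_ne_zero hxn.symm
  have hmax' : ∀ (t : ℝ) (y : Fin d → ℝ), (t, y) ∈ P → t ≤ r := fun t y h => hmax h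
  -- r is positive
  have hrpos : 0 < r := by
    set y1 := Mᵀ.mulVec x0 with hy1
    have hy1ne : y1 ≠ 0 := Ane x0 hx0C hx0ne
    have hny1 : 0 < ‖y1‖ := norm_pos_iff.2 hy1ne
    set x1 : Fin d → ℝ := ‖y1‖⁻¹ • y1 with hx1
    have hx1C : x1 ∈ C := hCcone y1 (AmapC x0 hx0C) _ (by positivity)
    have hx1n : ‖x1‖ = 1 := by
      rw [hx1, norm_smul, Real.norm_eq_abs, abs_of_pos (inv_pos.2 hny1),
        inv_mul_cancel₀ hny1.ne']
    have hx1ne : x1 ≠ 0 := by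
      intro h; rw [h, norm_zero] at hx1n; exact one_ne_zero hx1n.symm
    have hAx1 : Mᵀ.mulVec x1 ∈ interior C := Apos x1 hx1C hx1ne
    obtain ⟨ε, hε, hball⟩ := Metric.isOpen_iff.1 isOpen_interior _ hAx1
    set t0 : ℝ := ε / 2 with ht0
    have ht0pos : 0 < t0 := by positivity
    have hadm : Mᵀ.mulVec x1 - t0 • x1 ∈ C := by
      apply interior_subset
      apply hball
      rw [Metric.mem_ball, dist_eq_norm]
      have heq : Mᵀ.mulVec x1 - t0 • x1 - Mᵀ.mulVec x1 = -(t0 • x1) := by abel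
      rw [heq, norm_neg, norm_smul, Real.norm_eq_abs, abs_of_pos ht0pos, hx1n, mul_one]
      linarith
    have ht0T : t0 ≤ T := hT t0 x1 ht0pos.le hx1C hx1n hadm
    have : (t0, x1) ∈ P := ⟨⟨ht0pos.le, ht0T⟩, hx1C, hx1n, hadm⟩
    exact lt_of_lt_of_le ht0pos (hmax' t0 x1 this)
  -- maximality forces the eigen equation
  have heig : Mᵀ.mulVec x = r • x := by
    by_contra hne
    set c := Mᵀ.mulVec x - r • x with hcdef
    have hcC : c ∈ C := hxadm
    have hcne : c ≠ 0 := fun h => hne (by rwa [hcdef, sub_eq_zero] at h)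
    set y := Mᵀ.mulVec x with hy
    have hyne : y ≠ 0 := Ane x hxC hxne
    have hny : 0 < ‖y‖ := norm_pos_iff.2 hyne
    have hyC : y ∈ C := AmapC x hxC
    have hAc : Mᵀ.mulVec c ∈ interior C := Apos c hcC hcne
    have hAyry : Mᵀ.mulVec y - r • y ∈ interior C := by
      have : Mᵀ.mulVec y - r • y = Mᵀ.mulVec c := by
        rw [hcdef, Matrix.mulVec_sub, Matrix.mulVec_smul]
      rw [this]
      exact hAc
    obtain ⟨ε, hε, hball⟩ := Metric.isOpen_iff.1 isOpen_interior _ hAyry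
    set t : ℝ := ε / (2 * ‖y‖) with htdef
    have htpos : 0 < t := by positivity
    have hstep : Mᵀ.mulVec y - (r + t) • y ∈ C := by
      apply interior_subset
      apply hball
      rw [Metric.mem_ball, dist_eq_norm]
      have heq : Mᵀ.mulVec y - (r + t) • y - (Mᵀ.mulVec y - r • y) = -(t • y) := by
        rw [add_smul]; abel
      rw [heq, norm_neg, norm_smul, Real.norm_eq_abs, abs_of_pos htpos]
      rw [htdef, div_mul_eq_mul_div]
      refine (div_lt_iff₀ (by positivity)).2 ?_
      nlinarith
    set y' : Fin d → ℝ := ‖y‖⁻¹ • y with hy'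
    have hy'C : y' ∈ C := hCcone y hyC _ (by positivity)
    have hy'n : ‖y'‖ = 1 := by
      rw [hy', norm_smul, Real.norm_eq_abs, abs_of_pos (inv_pos.2 hny), inv_mul_cancel₀ hny.ne']
    have hstep' : Mᵀ.mulVec y' - (r + t) • y' ∈ C := by
      have heq : Mᵀ.mulVec y' - (r + t) • y' = ‖y‖⁻¹ • (Mᵀ.mulVec y - (r + t) • y) := by
        rw [hy', Matrix.mulVec_smul, smul_sub, smul_comm]
      rw [heq]
      exact hCcone _ hstep _ (by positivity)
    have hrtT : r + t ≤ T := hT (r + t) y' (by linarith) hy'C hy'n hstep'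
    have : (r + t, y') ∈ P :=
      ⟨⟨show (0:ℝ) ≤ r + t by linarith, hrtT⟩, hy'C, hy'n, hstep'⟩
    have := hmax' _ _ this
    linarith
  -- x is in the interior of C
  have hxint : x ∈ interior C := by
    have hrx : r⁻¹ • x ∈ C := hCcone x hxC _ (by positivity)
    have hrxne : r⁻¹ • x ≠ 0 := smul_ne_zero (inv_ne_zero hrpos.ne') hxne
    have : Mᵀ.mulVec (r⁻¹ • x) = x := by
      rw [Matrix.mulVec_smul, heig, smul_smul, inv_mul_cancel₀ hrpos.ne', one_smul]
    rw [← this]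
    exact Apos _ hrx hrxne
  exact ⟨r, hrpos, x, hxne, heig, hxint⟩

end Stmt8Aux3

namespace Stmt8Aux4
open Stmt8Aux Stmt8Aux2

variable {d : ℕ} {K : Set (Fin d → ℝ)} {f : Fin d → ℝ}

/-- The defining set of the cone norm. -/
def SD (K : Set (Fin d → ℝ)) (f x : Fin d → ℝ) : Set ℝ :=
  {r | ∃ v ∈ K, ∃ w ∈ K, x = v - w ∧ r = f ⬝ᵥ (v + w)}

lemma coneNorm_eq_sInf (x : Fin d → ℝ) : coneNorm K f x = sInf (SD K f x) := rfl

section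

lemma K_add (hKcone : ∀ x ∈ K, ∀ c : ℝ, 0 ≤ c → c • x ∈ K) (hKconv : Convex ℝ K)
    {v w : Fin d → ℝ} (hv : v ∈ K) (hw : w ∈ K) : v + w ∈ K := by
  have hmid : (1/2 : ℝ) • v + (1/2 : ℝ) • w ∈ K :=
    hKconv hv hw (by norm_num) (by norm_num) (by norm_num)
  have := hKcone _ hmid 2 (by norm_num)
  rw [smul_add, smul_smul, smul_smul] at this
  norm_num at this
  exact this

lemma SD_nonempty (hKcone : ∀ x ∈ K, ∀ c : ℝ, 0 ≤ c → c • x ∈ K)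
    {e : Fin d → ℝ} (he : e ∈ interior K) (x : Fin d → ℝ) :
    (SD K f x).Nonempty := by
  obtain ⟨ε, hε, hball⟩ := Metric.isOpen_iff.1 isOpen_interior e he
  set t : ℝ := ε / (2 * (‖x‖ + 1)) with ht
  have htpos : 0 < t := by positivity
  have hmem : e + t • x ∈ K := by
    apply interior_subset; apply hball
    rw [Metric.mem_ball, dist_eq_norm]
    have heq : e + t • x - e = t • x := by abel
    rw [heq, norm_smul, Real.norm_eq_abs, abs_of_pos htpos, ht, div_mul_eq_mul_div]
    refine (div_lt_iff₀ (by positivity)).2 ?_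
    nlinarith [norm_nonneg x]
  refine ⟨f ⬝ᵥ (t⁻¹ • (e + t • x) + t⁻¹ • e), t⁻¹ • (e + t • x),
    hKcone _ hmem _ (by positivity), t⁻¹ • e,
    hKcone e (interior_subset he) _ (by positivity), ?_, rfl⟩
  rw [← smul_sub]
  have : e + t • x - e = t • x := by abel
  rw [this, smul_smul, inv_mul_cancel₀ htpos.ne', one_smul]

lemma coneNorm_nonneg (hfK : ∀ x ∈ K, 0 ≤ f ⬝ᵥ x)
    (hKcone : ∀ x ∈ K, ∀ c : ℝ, 0 ≤ c → c • x ∈ K) (hKconv : Convex ℝ K)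
    (x : Fin d → ℝ) : 0 ≤ coneNorm K f x := by
  apply Real.sInf_nonneg
  rintro r ⟨v, hv, w, hw, -, rfl⟩
  have := hfK _ (K_add hKcone hKconv hv hw)
  exact this

lemma SD_bddBelow (hfK : ∀ x ∈ K, 0 ≤ f ⬝ᵥ x)
    (hKcone : ∀ x ∈ K, ∀ c : ℝ, 0 ≤ c → c • x ∈ K) (hKconv : Convex ℝ K)
    (x : Fin d → ℝ) : BddBelow (SD K f x) := by
  refine ⟨0, ?_⟩
  rintro r ⟨v, hv, w, hw, -, rfl⟩
  exact hfK _ (K_add hKcone hKconv hv hw)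

lemma coneNorm_on_K (hfK : ∀ x ∈ K, 0 ≤ f ⬝ᵥ x)
    (hKcone : ∀ x ∈ K, ∀ c : ℝ, 0 ≤ c → c • x ∈ K) (hKconv : Convex ℝ K)
    (h0K : (0 : Fin d → ℝ) ∈ K)
    {x : Fin d → ℝ} (hx : x ∈ K) : coneNorm K f x = f ⬝ᵥ x := by
  apply le_antisymm
  · apply csInf_le (SD_bddBelow hfK hKcone hKconv x)
    exact ⟨x, hx, 0, h0K, by abel, by rw [add_zero]⟩
  · have hne : (SD K f x).Nonempty := ⟨f ⬝ᵥ (x + 0), x, hx, 0, h0K, by abel, rfl⟩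
    rw [coneNorm_eq_sInf]
    apply le_csInf hne
    rintro r ⟨v, hv, w, hw, hxvw, rfl⟩
    have h1 : f ⬝ᵥ (v + w) = f ⬝ᵥ (v - w) + 2 * (f ⬝ᵥ w) := by
      rw [dotProduct_add, dotProduct_sub]; ring
    rw [h1, ← hxvw]
    linarith [hfK w hw]

lemma coneNorm_zero (hfK : ∀ x ∈ K, 0 ≤ f ⬝ᵥ x)
    (hKcone : ∀ x ∈ K, ∀ c : ℝ, 0 ≤ c → c • x ∈ K) (hKconv : Convex ℝ K)
    (h0K : (0 : Fin d → ℝ) ∈ K) : coneNorm K f 0 = 0 := by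
  rw [coneNorm_on_K hfK hKcone hKconv h0K h0K, dotProduct_zero]

lemma coneNorm_neg (x : Fin d → ℝ) : coneNorm K f (-x) = coneNorm K f x := by
  have hsd : SD K f (-x) = SD K f x := by
    ext r
    constructor
    · rintro ⟨v, hv, w, hw, hvw, rfl⟩
      refine ⟨w, hw, v, hv, ?_, by rw [add_comm]⟩
      have h2 := congrArg Neg.neg hvw
      rw [neg_neg] at h2
      rw [h2]; abel
    · rintro ⟨v, hv, w, hw, hvw, rfl⟩
      exact ⟨w, hw, v, hv, by rw [hvw]; abel, by rw [add_comm]⟩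
  rw [coneNorm_eq_sInf, coneNorm_eq_sInf, hsd]

/-- key: scaling by a positive constant. -/
lemma coneNorm_smul_le (hfK : ∀ x ∈ K, 0 ≤ f ⬝ᵥ x)
    (hKcone : ∀ x ∈ K, ∀ c : ℝ, 0 ≤ c → c • x ∈ K) (hKconv : Convex ℝ K)
    {e : Fin d → ℝ} (he : e ∈ interior K)
    {c : ℝ} (hc : 0 < c) (x : Fin d → ℝ) :
    coneNorm K f (c • x) ≤ c * coneNorm K f x := by
  rw [coneNorm_eq_sInf, coneNorm_eq_sInf, ← smul_eq_mul,
    ← Real.sInf_smul_of_nonneg hc.le]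
  apply csInf_le_csInf (SD_bddBelow hfK hKcone hKconv _)
  · exact (SD_nonempty hKcone he x).image _
  · rintro _ ⟨r, ⟨v, hv, w, hw, hxvw, rfl⟩, rfl⟩
    refine ⟨c • v, hKcone v hv c hc.le, c • w, hKcone w hw c hc.le, ?_, ?_⟩
    · rw [hxvw, smul_sub]
    · show c • (f ⬝ᵥ (v + w)) = f ⬝ᵥ (c • v + c • w)
      rw [smul_eq_mul, ← smul_add, dotProduct_smul, smul_eq_mul]

lemma coneNorm_smul_pos (hfK : ∀ x ∈ K, 0 ≤ f ⬝ᵥ x)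
    (hKcone : ∀ x ∈ K, ∀ c : ℝ, 0 ≤ c → c • x ∈ K) (hKconv : Convex ℝ K)
    {e : Fin d → ℝ} (he : e ∈ interior K)
    {c : ℝ} (hc : 0 < c) (x : Fin d → ℝ) :
    coneNorm K f (c • x) = c * coneNorm K f x := by
  apply le_antisymm (coneNorm_smul_le hfK hKcone hKconv he hc x)
  have h2 := coneNorm_smul_le hfK hKcone hKconv he (inv_pos.2 hc) (c • x)
  rw [smul_smul, inv_mul_cancel₀ hc.ne', one_smul] at h2
  calc c * coneNorm K f x ≤ c * (c⁻¹ * coneNorm K f (c • x)) :=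
        mul_le_mul_of_nonneg_left h2 hc.le
    _ = coneNorm K f (c • x) := by field_simp

lemma coneNorm_smul (hfK : ∀ x ∈ K, 0 ≤ f ⬝ᵥ x)
    (hKcone : ∀ x ∈ K, ∀ c : ℝ, 0 ≤ c → c • x ∈ K) (hKconv : Convex ℝ K)
    (h0K : (0 : Fin d → ℝ) ∈ K) {e : Fin d → ℝ} (he : e ∈ interior K)
    (c : ℝ) (x : Fin d → ℝ) :
    coneNorm K f (c • x) = |c| * coneNorm K f x := by
  rcases lt_trichotomy c 0 with hc | rfl | hc
  · have : c • x = -(|c| • x) := by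
      rw [abs_of_neg hc, neg_smul, neg_neg]
    rw [this, coneNorm_neg, coneNorm_smul_pos hfK hKcone hKconv he (abs_pos.2 hc.ne) x]
  · rw [zero_smul, abs_zero, zero_mul, coneNorm_zero hfK hKcone hKconv h0K]
  · rw [abs_of_pos hc]
    exact coneNorm_smul_pos hfK hKcone hKconv he hc x

lemma coneNorm_add_le (hfK : ∀ x ∈ K, 0 ≤ f ⬝ᵥ x)
    (hKcone : ∀ x ∈ K, ∀ c : ℝ, 0 ≤ c → c • x ∈ K) (hKconv : Convex ℝ K)
    {e : Fin d → ℝ} (he : e ∈ interior K) (x y : Fin d → ℝ) :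
    coneNorm K f (x + y) ≤ coneNorm K f x + coneNorm K f y := by
  have key : ∀ r1 ∈ SD K f x, ∀ r2 ∈ SD K f y, coneNorm K f (x + y) ≤ r1 + r2 := by
    rintro _ ⟨v1, hv1, w1, hw1, hx1, rfl⟩ _ ⟨v2, hv2, w2, hw2, hy2, rfl⟩
    apply csInf_le (SD_bddBelow hfK hKcone hKconv _)
    refine ⟨v1 + v2, K_add hKcone hKconv hv1 hv2, w1 + w2, K_add hKcone hKconv hw1 hw2, ?_, ?_⟩
    · rw [hx1, hy2]; abel
    · rw [← dotProduct_add]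
      congr 1; abel
  have h1 : ∀ r1 ∈ SD K f x, coneNorm K f (x + y) - r1 ≤ coneNorm K f y := by
    intro r1 hr1
    show coneNorm K f (x + y) - r1 ≤ sInf (SD K f y)
    apply le_csInf (SD_nonempty hKcone he y)
    intro r2 hr2
    linarith [key r1 hr1 r2 hr2]
  have h2 : coneNorm K f (x + y) - coneNorm K f y ≤ coneNorm K f x := by
    show coneNorm K f (x + y) - coneNorm K f y ≤ sInf (SD K f x)
    apply le_csInf (SD_nonempty hKcone he x)
    intro r1 hr1
    linarith [h1 r1 hr1]
  linarith

lemma coneNorm_lower (hfK : ∀ x ∈ K, 0 ≤ f ⬝ᵥ x)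
    (hKcone : ∀ x ∈ K, ∀ c : ℝ, 0 ≤ c → c • x ∈ K) (hKconv : Convex ℝ K)
    {e : Fin d → ℝ} (he : e ∈ interior K)
    {δ : ℝ} (hδ : ∀ x ∈ K, δ * ‖x‖ ≤ f ⬝ᵥ x) (x : Fin d → ℝ) (hδ0 : 0 ≤ δ) :
    δ * ‖x‖ ≤ coneNorm K f x := by
  rw [coneNorm_eq_sInf]
  apply le_csInf
  · exact SD_nonempty hKcone he x
  · rintro r ⟨v, hv, w, hw, hxvw, rfl⟩
    have h1 : f ⬝ᵥ (v + w) = f ⬝ᵥ v + f ⬝ᵥ w := dotProduct_add _ _ _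
    have h2 := hδ v hv
    have h3 := hδ w hw
    have h4 : ‖x‖ ≤ ‖v‖ + ‖w‖ := by
      rw [hxvw]
      exact norm_sub_le v w
    rw [h1]
    nlinarith

end

end Stmt8Aux4

namespace Stmt8Aux5
open Stmt8Aux Stmt8Aux2 Stmt8Aux4

variable {d : ℕ}

/-- contraction of the cone norm under M. -/
lemma coneNorm_mulVec_le {K : Set (Fin d → ℝ)} {f : Fin d → ℝ}
    (hfK : ∀ x ∈ K, 0 ≤ f ⬝ᵥ x)
    (hKcone : ∀ x ∈ K, ∀ c : ℝ, 0 ≤ c → c • x ∈ K) (hKconv : Convex ℝ K)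
    {e : Fin d → ℝ} (he : e ∈ interior K)
    {M : Matrix (Fin d) (Fin d) ℝ} (hMinv : ∀ v ∈ K, M.mulVec v ∈ K)
    {r : ℝ} (hr : 0 < r) (heig : Mᵀ.mulVec f = r • f)
    (x : Fin d → ℝ) : coneNorm K f (M.mulVec x) ≤ r * coneNorm K f x := by
  have hdot : ∀ v, f ⬝ᵥ M.mulVec v = r * (f ⬝ᵥ v) := by
    intro v
    rw [Matrix.dotProduct_mulVec, ← Matrix.mulVec_transpose, heig,
      smul_dotProduct, smul_eq_mul]
  have key : ∀ s ∈ SD K f x, coneNorm K f (M.mulVec x) ≤ r * s := by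
    rintro _ ⟨v, hv, w, hw, hxvw, rfl⟩
    apply csInf_le (SD_bddBelow hfK hKcone hKconv _)
    refine ⟨M.mulVec v, hMinv v hv, M.mulVec w, hMinv w hw, ?_, ?_⟩
    · rw [hxvw, Matrix.mulVec_sub]
    · rw [dotProduct_add, dotProduct_add, hdot, hdot]
      ring
  have h2 : r⁻¹ * coneNorm K f (M.mulVec x) ≤ coneNorm K f x := by
    show _ ≤ sInf (SD K f x)
    apply le_csInf (SD_nonempty hKcone he x)
    intro s hs
    have := key s hs
    rw [inv_mul_le_iff₀ hr]
    linarith [key s hs]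
  calc coneNorm K f (M.mulVec x) = r * (r⁻¹ * coneNorm K f (M.mulVec x)) := by
        field_simp
    _ ≤ r * coneNorm K f x := mul_le_mul_of_nonneg_left h2 hr.le

/-- r is a complex eigenvalue of M if Mᵀ f = r f with f ≠ 0. -/
lemma hasEigen_r {M : Matrix (Fin d) (Fin d) ℝ} {r : ℝ} {f : Fin d → ℝ} (hf : f ≠ 0)
    (heig : Mᵀ.mulVec f = r • f) :
    Module.End.HasEigenvalue (Matrix.toLin' (M.map Complex.ofReal)) (r : ℂ) := by
  have hker : (Mᵀ - r • (1 : Matrix (Fin d) (Fin d) ℝ)).mulVec f = 0 := by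
    rw [Matrix.sub_mulVec, Matrix.smul_mulVec, Matrix.one_mulVec, heig, sub_self]
  have hdetT : (Mᵀ - r • (1 : Matrix (Fin d) (Fin d) ℝ)).det = 0 :=
    Matrix.exists_mulVec_eq_zero_iff.1 ⟨f, hf, hker⟩
  have hdet : (M - r • (1 : Matrix (Fin d) (Fin d) ℝ)).det = 0 := by
    rw [← Matrix.det_transpose, Matrix.transpose_sub, Matrix.transpose_smul,
      Matrix.transpose_one]
    exact hdetT
  have hmapeq : (M.map Complex.ofReal) - (r : ℂ) • (1 : Matrix (Fin d) (Fin d) ℂ)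
      = (M - r • (1 : Matrix (Fin d) (Fin d) ℝ)).map Complex.ofReal := by
    ext i j
    by_cases h : i = j <;>
      simp [Matrix.map_apply, Matrix.sub_apply, Matrix.smul_apply, Matrix.one_apply, h]
  have hdetC : ((M.map Complex.ofReal) - (r : ℂ) • (1 : Matrix (Fin d) (Fin d) ℂ)).det = 0 := by
    rw [hmapeq]
    have : (M - r • (1 : Matrix (Fin d) (Fin d) ℝ)).map Complex.ofReal
        = Complex.ofRealHom.mapMatrix (M - r • (1 : Matrix (Fin d) (Fin d) ℝ)) := rfl
    rw [this, ← RingHom.map_det, hdet, map_zero]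
  obtain ⟨v, hvne, hv⟩ := Matrix.exists_mulVec_eq_zero_iff.2 hdetC
  have hMv : (M.map Complex.ofReal).mulVec v = (r : ℂ) • v := by
    rw [Matrix.sub_mulVec, Matrix.smul_mulVec, Matrix.one_mulVec, sub_eq_zero] at hv
    exact hv
  apply Module.End.hasEigenvalue_of_hasEigenvector (x := v)
  refine ⟨Module.End.mem_eigenspace_iff.2 ?_, hvne⟩
  rw [Matrix.toLin'_apply]
  exact hMv

/-- bound on eigenvalue moduli via a norm contracted by M. -/
lemma eig_bound {M : Matrix (Fin d) (Fin d) ℝ} {h : (Fin d → ℝ) → ℝ} {r : ℝ}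
    (hpos : ∀ x, x ≠ 0 → 0 < h x)
    (hadd : ∀ x y, h (x + y) ≤ h x + h y)
    (hsmul : ∀ (c : ℝ) (x : Fin d → ℝ), h (c • x) = |c| * h x)
    (hcontr : ∀ x, h (M.mulVec x) ≤ r * h x)
    (hr : 0 ≤ r)
    {z : ℂ} (hz : Module.End.HasEigenvalue (Matrix.toLin' (M.map Complex.ofReal)) z) :
    ‖z‖ ≤ r := by
  rcases eq_or_ne z 0 with rfl | hzne
  · simpa using hr
  obtain ⟨u, hu⟩ := hz.exists_hasEigenvector
  have hune : u ≠ 0 := hu.2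
  have heigc : (M.map Complex.ofReal).mulVec u = z • u := by
    rw [← Matrix.toLin'_apply]
    exact hu.apply_eq_smul
  have h0 : h 0 = 0 := by
    have := hsmul 0 0
    simpa using this
  have hneg : ∀ x, h (-x) = h x := by
    intro x
    have := hsmul (-1) x
    simpa using this
  set W : ℂ → (Fin d → ℝ) := fun c => fun i => (c * u i).re with hW
  have hWsmul : ∀ (t : ℝ) (c : ℂ), W ((t : ℂ) * c) = t • W c := by
    intro t c
    funext i
    simp only [hW, Pi.smul_apply, smul_eq_mul, mul_assoc]
    simp
  have hWmul : ∀ c : ℂ, M.mulVec (W c) = W (c * z) := by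
    intro c
    funext j
    have hterm : ∀ i, M j i * (c * u i).re = ((M j i : ℂ) * (c * u i)).re := by
      intro i; simp
    have hsum : ∑ i, (M j i : ℂ) * (c * u i) = (c * z) * u j := by
      have h1 : (M.map Complex.ofReal).mulVec u j = z * u j := by
        rw [heigc]; simp
      calc ∑ i, (M j i : ℂ) * (c * u i) = c * ∑ i, (M j i : ℂ) * u i := by
            rw [Finset.mul_sum]
            refine Finset.sum_congr rfl fun i _ => by ring
        _ = c * ((M.map Complex.ofReal).mulVec u j) := by
            congr 1
        _ = c * (z * u j) := by rw [h1]
        _ = (c * z) * u j := by ring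
    calc M.mulVec (W c) j = ∑ i, M j i * (c * u i).re := by
          simp [Matrix.mulVec, dotProduct, hW]
      _ = ∑ i, ((M j i : ℂ) * (c * u i)).re := Finset.sum_congr rfl fun i _ => hterm i
      _ = (∑ i, (M j i : ℂ) * (c * u i)).re := (Complex.re_sum _ _).symm
      _ = ((c * z) * u j).re := by rw [hsum]
      _ = W (c * z) j := rfl
  -- decomposition bound
  have hWbound : ∀ c : ℂ, ‖c‖ = 1 → h (W c) ≤ h (W 1) + h (W (-Complex.I)) := by
    intro c hc
    have hdecomp : W c = c.re • W 1 + (-c.im) • W (-Complex.I) := by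
      funext i
      show (c * u i).re = c.re * W 1 i + (-c.im) * W (-Complex.I) i
      have e1 : W 1 i = (u i).re := by simp [hW]
      have e2 : W (-Complex.I) i = (u i).im := by simp [hW]
      rw [e1, e2, Complex.mul_re]
      ring
    rw [hdecomp]
    calc h (c.re • W 1 + (-c.im) • W (-Complex.I))
        ≤ h (c.re • W 1) + h ((-c.im) • W (-Complex.I)) := hadd _ _
      _ = |c.re| * h (W 1) + |c.im| * h (W (-Complex.I)) := by
          rw [hsmul, hsmul, abs_neg]
      _ ≤ 1 * h (W 1) + 1 * h (W (-Complex.I)) := by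
          have h1 : |c.re| ≤ 1 := by
            rw [← hc]; exact Complex.abs_re_le_norm c
          have h2 : |c.im| ≤ 1 := by
            rw [← hc]; exact Complex.abs_im_le_norm c
          have hp1 : 0 ≤ h (W 1) := by
            rcases eq_or_ne (W 1) 0 with hw | hw
            · rw [hw, h0]
            · exact (hpos _ hw).le
          have hp2 : 0 ≤ h (W (-Complex.I)) := by
            rcases eq_or_ne (W (-Complex.I)) 0 with hw | hw
            · rw [hw, h0]
            · exact (hpos _ hw).le
          gcongr
      _ = h (W 1) + h (W (-Complex.I)) := by ring
  set NS : Set ℝ := {s | ∃ c : ℂ, ‖c‖ = 1 ∧ s = h (W c)} with hNS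
  have hNSne : NS.Nonempty := ⟨h (W 1), 1, by simp, rfl⟩
  have hNSbdd : BddAbove NS := by
    refine ⟨h (W 1) + h (W (-Complex.I)), ?_⟩
    rintro s ⟨c, hc, rfl⟩
    exact hWbound c hc
  set N : ℝ := sSup NS with hN
  have hmemN : ∀ c : ℂ, ‖c‖ = 1 → h (W c) ≤ N :=
    fun c hc => le_csSup hNSbdd ⟨c, hc, rfl⟩
  have hNpos : 0 < N := by
    have hu' : W 1 ≠ 0 ∨ W (-Complex.I) ≠ 0 := by
      by_contra hcon
      push_neg at hcon
      apply hune
      funext i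
      have h1 : (u i).re = 0 := by
        have := congrFun hcon.1 i
        simpa [hW] using this
      have h2 : (u i).im = 0 := by
        have := congrFun hcon.2 i
        simpa [hW] using this
      exact Complex.ext h1 h2
    rcases hu' with hu' | hu'
    · exact lt_of_lt_of_le (hpos _ hu') (hmemN 1 (by simp))
    · exact lt_of_lt_of_le (hpos _ hu') (hmemN (-Complex.I) (by simp))
  -- the key estimate
  have habs : 0 < ‖z‖ := by
    simpa using (norm_pos_iff.2 hzne)
  have hkey : ∀ c : ℂ, ‖c‖ = 1 → ‖z‖ * h (W c) ≤ r * N := by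
    intro c hc
    set c₀ : ℂ := (‖z‖ : ℂ) * c / z with hc₀
    have hc₀abs : ‖c₀‖ = 1 := by
      rw [hc₀, norm_div, norm_mul, Complex.norm_real, norm_norm, hc, mul_one,
        div_self habs.ne']
    have hc₀z : c₀ * z = (‖z‖ : ℂ) * c := by
      rw [hc₀]
      field_simp
    calc ‖z‖ * h (W c) = h (‖z‖ • W c) := by
          rw [hsmul, abs_of_pos habs]
      _ = h (W ((‖z‖ : ℂ) * c)) := by rw [hWsmul]
      _ = h (W (c₀ * z)) := by rw [hc₀z]
      _ = h (M.mulVec (W c₀)) := by rw [hWmul]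
      _ ≤ r * h (W c₀) := hcontr _
      _ ≤ r * N := mul_le_mul_of_nonneg_left (hmemN c₀ hc₀abs) hr
  have hfinal : ‖z‖ * N ≤ r * N := by
    have hN' : N ≤ r * N / ‖z‖ := by
      apply csSup_le hNSne
      rintro s ⟨c, hc, rfl⟩
      rw [le_div_iff₀ habs]
      calc h (W c) * ‖z‖ = ‖z‖ * h (W c) := by ring
        _ ≤ r * N := hkey c hc
    calc ‖z‖ * N ≤ ‖z‖ * (r * N / ‖z‖) :=
          mul_le_mul_of_nonneg_left hN' habs.le
      _ = r * N := by field_simp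
  nlinarith

end Stmt8Aux5

open Stmt8Aux Stmt8Aux2 Stmt8Aux3 Stmt8Aux4 Stmt8Aux5 in
/-- For a `K`-positive `M` there is `f ∈ int K*`, a left Perron eigenvector of
`M` for the eigenvalue `ρ(M)`, whose induced cone linear absolute norm satisfies
`‖M‖_f = ρ(M)`. -/
theorem stmt_8 {d : ℕ} (K : Set (Fin d → ℝ)) (hK : IsProperCone K)
    (M : Matrix (Fin d) (Fin d) ℝ) (hM : IsKPos M K) :
    ∃ f ∈ interior (dualConeSet K),
      M.transpose.mulVec f = specRad M • f ∧ opNorm (coneNorm K f) M = specRad M := by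
  rcases Nat.eq_zero_or_pos d with rfl | hd
  · -- degenerate case d = 0
    refine ⟨0, ?_, ?_, ?_⟩
    · refine mem_interior.2 ⟨univ, fun g _ => ?_, isOpen_univ, mem_univ _⟩
      intro x hx
      simp [dotProduct]
    · rw [Matrix.mulVec_zero, smul_zero]
    · have hop : {s | ∃ x : Fin 0 → ℝ, x ≠ 0 ∧
          s = coneNorm K 0 (M.mulVec x) / coneNorm K 0 x} = ∅ := by
        ext s
        simp only [mem_setOf_eq, mem_empty_iff_false, iff_false, not_exists]
        rintro x ⟨hx, -⟩
        exact hx (Subsingleton.elim x 0)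
      have hsp : {s | ∃ z : ℂ, Module.End.HasEigenvalue
          (Matrix.toLin' (M.map Complex.ofReal)) z ∧ s = ‖z‖} = ∅ := by
        ext s
        simp only [mem_setOf_eq, mem_empty_iff_false, iff_false, not_exists]
        rintro z ⟨hz, -⟩
        obtain ⟨v, hv⟩ := hz.exists_hasEigenvector
        exact hv.2 (Subsingleton.elim v 0)
      unfold opNorm specRad
      rw [hop, hsp]
  · -- main case
    obtain ⟨r, hrpos, f, hfne, heig, hfint⟩ := exists_perron hd hK hM
    obtain ⟨hKcone, hKcl, hKconv, hKint, hKpointed⟩ := hK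
    obtain ⟨e, he⟩ := hKint
    have heK : e ∈ K := interior_subset he
    have h0K : (0 : Fin d → ℝ) ∈ K := by
      simpa using hKcone e heK 0 le_rfl
    have hMinv : ∀ x ∈ K, M.mulVec x ∈ K := by
      intro x hx
      rcases eq_or_ne x 0 with rfl | hne
      · simpa [Matrix.mulVec_zero] using h0K
      · exact interior_subset (hM x hx hne)
    have hfC : f ∈ dualConeSet K := interior_subset hfint
    have hfK : ∀ x ∈ K, 0 ≤ f ⬝ᵥ x := hfC
    have hdot : ∀ v, f ⬝ᵥ M.mulVec v = r * (f ⬝ᵥ v) := by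
      intro v
      rw [Matrix.dotProduct_mulVec, ← Matrix.mulVec_transpose, heig,
        smul_dotProduct, smul_eq_mul]
    have hfpos : ∀ x ∈ K, x ≠ 0 → 0 < f ⬝ᵥ x := by
      intro x hx hxne
      have h1 : 0 < f ⬝ᵥ M.mulVec x :=
        dual_pos_on_interior ⟨e, he⟩ hfC hfne (hM x hx hxne)
      rw [hdot] at h1
      nlinarith
    obtain ⟨δ, hδpos, hδ⟩ := cone_min hKcl hKcone (dot_continuous f)
      (fun c x _ => by rw [dotProduct_smul, smul_eq_mul]) hfpos
    have hpos : ∀ x : Fin d → ℝ, x ≠ 0 → 0 < coneNorm K f x := by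
      intro x hxne
      have h1 : 0 < δ * ‖x‖ := mul_pos hδpos (norm_pos_iff.2 hxne)
      exact lt_of_lt_of_le h1 (coneNorm_lower hfK hKcone hKconv he hδ x hδpos.le)
    have hadd := coneNorm_add_le hfK hKcone hKconv he
    have hsmul := coneNorm_smul hfK hKcone hKconv h0K he
    have hcontr := coneNorm_mulVec_le hfK hKcone hKconv he hMinv hrpos heig
    -- spectral radius equals r
    have hrmem : r ∈ {s | ∃ z : ℂ, Module.End.HasEigenvalue
        (Matrix.toLin' (M.map Complex.ofReal)) z ∧ s = ‖z‖} :=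
      ⟨(r : ℂ), hasEigen_r hfne heig, by rw [Complex.norm_real, Real.norm_eq_abs, abs_of_pos hrpos]⟩
    have hub : ∀ s ∈ {s | ∃ z : ℂ, Module.End.HasEigenvalue
        (Matrix.toLin' (M.map Complex.ofReal)) z ∧ s = ‖z‖}, s ≤ r := by
      rintro s ⟨z, hz, rfl⟩
      exact eig_bound hpos hadd hsmul hcontr hrpos.le hz
    have hspec : specRad M = r := by
      unfold specRad
      exact le_antisymm (csSup_le ⟨r, hrmem⟩ hub) (le_csSup ⟨r, hub⟩ hrmem)
    -- operator norm equals r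
    obtain ⟨z, hzK, hzne⟩ := exists_mem_ne_zero hd ⟨e, he⟩
    have hfz : 0 < f ⬝ᵥ z := hfpos z hzK hzne
    have hratio : coneNorm K f (M.mulVec z) / coneNorm K f z = r := by
      rw [coneNorm_on_K hfK hKcone hKconv h0K (hMinv z hzK),
        coneNorm_on_K hfK hKcone hKconv h0K hzK, hdot, mul_div_assoc,
        div_self hfz.ne', mul_one]
    have hrmem2 : r ∈ {s | ∃ x : Fin d → ℝ, x ≠ 0 ∧
        s = coneNorm K f (M.mulVec x) / coneNorm K f x} :=
      ⟨z, hzne, hratio.symm⟩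
    have hub2 : ∀ s ∈ {s | ∃ x : Fin d → ℝ, x ≠ 0 ∧
        s = coneNorm K f (M.mulVec x) / coneNorm K f x}, s ≤ r := by
      rintro s ⟨x, hxne, rfl⟩
      rw [div_le_iff₀ (hpos x hxne)]
      calc coneNorm K f (M.mulVec x) ≤ r * coneNorm K f x := hcontr x
        _ = r * coneNorm K f x := rfl
    have hop : opNorm (coneNorm K f) M = r := by
      unfold opNorm
      exact le_antisymm (csSup_le ⟨r, hrmem2⟩ hub2) (le_csSup ⟨r, hub2⟩ hrmem2)
    refine ⟨f, hfint, ?_, ?_⟩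
    · rw [hspec]
      exact heig
    · rw [hspec, hop]
end

section
/- For a compactly supported probability distribution μ on R^{d×d} and positive integers p, k, the p-radii satisfy ρ_{p,μ} = (ρ_{p/k, μ^{⊗k}})^{1/k}, where μ^{⊗k} is the pushforward of μ under the map A ↦ A^{⊗k}. In particular ρ_{2q,μ} = (ρ_{2,μ^{⊗q}})^{1/q} for every positive integer q. -/
open Matrix Set

/-- The index equivalence `Fin (d^p) × Fin d ≃ Fin (d^(p+1))`. -/
def kronEquiv (d p : ℕ) : Fin (d ^ p) × Fin d ≃ Fin (d ^ (p + 1)) :=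
  finProdFinEquiv.trans (finCongr (pow_succ d p).symm)

/-- The `p`-th Kronecker power of a square matrix. -/
noncomputable def kronPow {d : ℕ} (M : Matrix (Fin d) (Fin d) ℝ) :
    (p : ℕ) → Matrix (Fin (d ^ p)) (Fin (d ^ p)) ℝ
  | 0 => 1
  | p + 1 => Matrix.reindex (kronEquiv d p) (kronEquiv d p)
      (Matrix.kroneckerMap (· * ·) (kronPow M p) M)

/-- The `p`-th Kronecker power of a vector. -/
noncomputable def vecKronPow {d : ℕ} (x : Fin d → ℝ) : (p : ℕ) → (Fin (d ^ p) → ℝ)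
  | 0 => fun _ => 1
  | p + 1 => fun i =>
      vecKronPow x p ((kronEquiv d p).symm i).1 * x ((kronEquiv d p).symm i).2

open MeasureTheory Filter

instance matMeasurableSpace {d : ℕ} : MeasurableSpace (Matrix (Fin d) (Fin d) ℝ) :=
  inferInstanceAs (MeasurableSpace (Fin d → Fin d → ℝ))

/-- The (topological) support of a measure on matrices. -/
def msupport {d : ℕ} (μ : Measure (Matrix (Fin d) (Fin d) ℝ)) :
    Set (Matrix (Fin d) (Fin d) ℝ) :=
  {A | ∀ U : Set (Matrix (Fin d) (Fin d) ℝ), IsOpen U → A ∈ U → μ U ≠ 0}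

/-- `nrm` is a norm on `d × d` real matrices. -/
def IsMatNorm {d : ℕ} (nrm : Matrix (Fin d) (Fin d) ℝ → ℝ) : Prop :=
  (∀ M, 0 ≤ nrm M) ∧ (∀ M, nrm M = 0 ↔ M = 0) ∧
    (∀ (c : ℝ) M, nrm (c • M) = |c| * nrm M) ∧ ∀ M N, nrm (M + N) ≤ nrm M + nrm N

/-- `E[‖A_k ⋯ A_1‖^p]` for `A_1, …, A_k` i.i.d. with law `μ`. -/
noncomputable def prodSeq {d : ℕ} (μ : Measure (Matrix (Fin d) (Fin d) ℝ))
    (nrm : Matrix (Fin d) (Fin d) ℝ → ℝ) (p : ℝ) (k : ℕ) : ℝ :=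
  ∫ A : Fin k → Matrix (Fin d) (Fin d) ℝ,
    nrm ((List.ofFn A).reverse.prod) ^ p ∂(Measure.pi fun _ => μ)

/-- The `L^p`-norm joint spectral radius (`p`-radius)
`ρ_{p,μ} = lim_{k→∞} (E[‖A_k ⋯ A_1‖^p])^{1/(pk)}` (as a `limsup`). -/
noncomputable def pRad {d : ℕ} (μ : Measure (Matrix (Fin d) (Fin d) ℝ))
    (nrm : Matrix (Fin d) (Fin d) ℝ → ℝ) (p : ℝ) : ℝ :=
  limsup (fun k : ℕ => prodSeq μ nrm p k ^ (1 / (p * k))) atTop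

/-- The joint spectral radius
`ρ̂(M) = limsup_{k→∞} sup_{A_1,…,A_k ∈ M} ‖A_k ⋯ A_1‖^{1/k}`. -/
noncomputable def jsr {d : ℕ} (Mset : Set (Matrix (Fin d) (Fin d) ℝ))
    (nrm : Matrix (Fin d) (Fin d) ℝ → ℝ) : ℝ :=
  limsup (fun k : ℕ => sSup {r | ∃ A : Fin k → Matrix (Fin d) (Fin d) ℝ,
    (∀ i, A i ∈ Mset) ∧ r = nrm ((List.ofFn A).reverse.prod) ^ ((1 : ℝ) / k)}) atTop

/-- The entrywise mean matrix `E[A]` of `μ`. -/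
noncomputable def meanMat {d : ℕ} (μ : Measure (Matrix (Fin d) (Fin d) ℝ)) :
    Matrix (Fin d) (Fin d) ℝ :=
  Matrix.of fun i j => ∫ X, X i j ∂μ

noncomputable def supN {m n : Type*} [Fintype m] [Fintype n] (M : Matrix m n ℝ) : ℝ :=
  ‖(Matrix.of.symm M : m → n → ℝ)‖

lemma supN_nonneg {m n : Type*} [Fintype m] [Fintype n] (M : Matrix m n ℝ) : 0 ≤ supN M :=
  norm_nonneg _

lemma abs_entry_le_supN {m n : Type*} [Fintype m] [Fintype n] (M : Matrix m n ℝ) (i : m) (j : n) :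
    |M i j| ≤ supN M := by
  calc |M i j| = ‖(Matrix.of.symm M : m → n → ℝ) i j‖ := (Real.norm_eq_abs _).symm
    _ ≤ ‖(Matrix.of.symm M : m → n → ℝ) i‖ := norm_le_pi_norm _ j
    _ ≤ supN M := norm_le_pi_norm _ i

lemma supN_le {m n : Type*} [Fintype m] [Fintype n] {M : Matrix m n ℝ} {C : ℝ} (hC : 0 ≤ C)
    (h : ∀ i j, |M i j| ≤ C) : supN M ≤ C := by
  refine pi_norm_le_iff_of_nonneg hC |>.2 fun i => pi_norm_le_iff_of_nonneg hC |>.2 fun j => ?_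
  simpa [Real.norm_eq_abs] using h i j

lemma exists_abs_eq_supN {m n : Type*} [Fintype m] [Fintype n] [Nonempty m] [Nonempty n]
    (M : Matrix m n ℝ) : ∃ i j, supN M = |M i j| ∧ ∀ i' j', |M i' j'| ≤ |M i j| := by
  obtain ⟨⟨i, j⟩, hmax⟩ := Finite.exists_max (fun p : m × n => |M p.1 p.2|)
  refine ⟨i, j, le_antisymm (supN_le (abs_nonneg _) fun i' j' => hmax (i', j'))
    (abs_entry_le_supN M i j), fun i' j' => hmax (i', j')⟩

lemma supN_eq_zero_left {m n : Type*} [Fintype m] [Fintype n] [IsEmpty m] (M : Matrix m n ℝ) :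
    supN M = 0 := by
  have : (Matrix.of.symm M : m → n → ℝ) = 0 := Subsingleton.elim _ _
  simp [supN, this]

lemma supN_eq_zero_right {m n : Type*} [Fintype m] [Fintype n] [IsEmpty n] (M : Matrix m n ℝ) :
    supN M = 0 := by
  have : (Matrix.of.symm M : m → n → ℝ) = 0 := by
    funext i j; exact (IsEmpty.false j).elim
  simp [supN, this]

lemma supN_kron {m n : Type*} [Fintype m] [Fintype n] (A : Matrix m m ℝ) (B : Matrix n n ℝ) :
    supN (Matrix.kroneckerMap (· * ·) A B) = supN A * supN B := by
  rcases isEmpty_or_nonempty m with hm | hm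
  · rw [supN_eq_zero_left A, supN_eq_zero_left, zero_mul]
  rcases isEmpty_or_nonempty n with hn | hn
  · rw [supN_eq_zero_left B, supN_eq_zero_right, mul_zero]
  obtain ⟨i, j, hA, hAmax⟩ := exists_abs_eq_supN A
  obtain ⟨k, l, hB, hBmax⟩ := exists_abs_eq_supN B
  refine le_antisymm (supN_le (mul_nonneg (supN_nonneg _) (supN_nonneg _)) fun p q => ?_) ?_
  · calc |Matrix.kroneckerMap (· * ·) A B p q|
        = |A p.1 q.1| * |B p.2 q.2| := by simp [Matrix.kroneckerMap, abs_mul]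
      _ ≤ supN A * supN B :=
        mul_le_mul (abs_entry_le_supN _ _ _) (abs_entry_le_supN _ _ _) (abs_nonneg _)
          (supN_nonneg _)
  · calc supN A * supN B = |A i j * B k l| := by rw [hA, hB, abs_mul]
      _ = |Matrix.kroneckerMap (· * ·) A B (i, k) (j, l)| := by simp [Matrix.kroneckerMap]
      _ ≤ _ := abs_entry_le_supN _ _ _

lemma supN_submatrix {m n m' n' : Type*} [Fintype m] [Fintype n] [Fintype m'] [Fintype n']
    (M : Matrix m n ℝ) (e₁ : m' ≃ m) (e₂ : n' ≃ n) : supN (M.submatrix e₁ e₂) = supN M := by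
  refine le_antisymm (supN_le (supN_nonneg M) fun i j => abs_entry_le_supN M _ _)
    (supN_le (supN_nonneg _) fun i j => ?_)
  have := abs_entry_le_supN (M.submatrix e₁ e₂) (e₁.symm i) (e₂.symm j)
  simpa using this

lemma supN_one_le {m : Type*} [Fintype m] [DecidableEq m] : supN (1 : Matrix m m ℝ) ≤ 1 := by
  refine supN_le zero_le_one fun i j => ?_
  by_cases h : i = j <;> simp [Matrix.one_apply, h]

lemma supN_mul_le {m n p : Type*} [Fintype m] [Fintype n] [Fintype p]
    (M : Matrix m n ℝ) (N : Matrix n p ℝ) :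
    supN (M * N) ≤ (Fintype.card n : ℝ) * supN M * supN N := by
  refine supN_le (mul_nonneg (mul_nonneg (Nat.cast_nonneg _) (supN_nonneg _)) (supN_nonneg _)) fun i j => ?_
  calc |(M * N) i j| = |∑ l, M i l * N l j| := by rw [Matrix.mul_apply]
    _ ≤ ∑ l, |M i l * N l j| := Finset.abs_sum_le_sum_abs _ _
    _ ≤ ∑ _l : n, supN M * supN N := by
        refine Finset.sum_le_sum fun l _ => ?_
        rw [abs_mul]
        exact mul_le_mul (abs_entry_le_supN _ _ _) (abs_entry_le_supN _ _ _) (abs_nonneg _)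
          (supN_nonneg _)
    _ = (Fintype.card n : ℝ) * (supN M * supN N) := by
        rw [Finset.sum_const, Finset.card_univ, nsmul_eq_mul]
    _ = _ := by ring

lemma supN_one {m : Type*} [Fintype m] [DecidableEq m] [Nonempty m] :
    supN (1 : Matrix m m ℝ) = 1 := by
  refine le_antisymm supN_one_le ?_
  have := abs_entry_le_supN (1 : Matrix m m ℝ) (Classical.arbitrary m) (Classical.arbitrary m)
  simpa using this



lemma kronPow_one {d : ℕ} (k : ℕ) : kronPow (1 : Matrix (Fin d) (Fin d) ℝ) k = 1 := by
  induction k with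
  | zero => rfl
  | succ p ih => rw [kronPow, ih, Matrix.one_kronecker_one, Matrix.reindex_apply,
      Matrix.submatrix_one_equiv]

lemma kronPow_mul {d : ℕ} (M N : Matrix (Fin d) (Fin d) ℝ) (k : ℕ) :
    kronPow (M * N) k = kronPow M k * kronPow N k := by
  induction k with
  | zero => simp [kronPow]; exact (Matrix.one_mul 1).symm
  | succ p ih =>
      rw [kronPow, kronPow, kronPow, ih, Matrix.mul_kronecker_mul, Matrix.reindex_apply,
        Matrix.reindex_apply, Matrix.reindex_apply,
        ← Matrix.submatrix_mul_equiv _ _ _ (kronEquiv d p).symm _]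

lemma supN_kronPow {d : ℕ} (M : Matrix (Fin d) (Fin d) ℝ) (k : ℕ) :
    supN (kronPow M k) = supN M ^ k := by
  induction k with
  | zero =>
      haveI : Nonempty (Fin (d ^ 0)) := ⟨⟨0, by simp⟩⟩
      rw [kronPow, supN_one, pow_zero]
  | succ p ih => rw [kronPow, Matrix.reindex_apply, supN_submatrix, supN_kron, ih, pow_succ]

/-- `kronPow · k` as a monoid hom. -/
noncomputable def kronPowHom (d k : ℕ) :
    Matrix (Fin d) (Fin d) ℝ →* Matrix (Fin (d ^ k)) (Fin (d ^ k)) ℝ where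
  toFun M := kronPow M k
  map_one' := kronPow_one k
  map_mul' M N := kronPow_mul M N k


lemma IsMatNorm.sum_le {n : ℕ} {nrm : Matrix (Fin n) (Fin n) ℝ → ℝ} (h : IsMatNorm nrm)
    {ι : Type*} (s : Finset ι) (f : ι → Matrix (Fin n) (Fin n) ℝ) :
    nrm (∑ i ∈ s, f i) ≤ ∑ i ∈ s, nrm (f i) := by
  classical
  induction s using Finset.cons_induction with
  | empty => simp [(h.2.1 0).mpr rfl]
  | cons a s ha ih =>
      rw [Finset.sum_cons, Finset.sum_cons]
      exact le_trans (h.2.2.2 _ _) (add_le_add le_rfl ih)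

lemma IsMatNorm.le_const {n : ℕ} {nrm : Matrix (Fin n) (Fin n) ℝ → ℝ} (h : IsMatNorm nrm) :
    ∃ C : ℝ, 0 < C ∧ ∀ M, nrm M ≤ C * supN M := by
  classical
  set C₀ : ℝ := ∑ i : Fin n, ∑ j : Fin n, nrm (Matrix.single i j 1) with hC₀
  have hC₀0 : 0 ≤ C₀ :=
    Finset.sum_nonneg fun i _ => Finset.sum_nonneg fun j _ => h.1 _
  refine ⟨C₀ + 1, by linarith, fun M => ?_⟩
  calc nrm M = nrm (∑ i : Fin n, ∑ j : Fin n, Matrix.single i j (M i j)) := by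
        rw [← Matrix.matrix_eq_sum_single]
    _ ≤ ∑ i : Fin n, nrm (∑ j : Fin n, Matrix.single i j (M i j)) := h.sum_le _ _
    _ ≤ ∑ i : Fin n, ∑ j : Fin n, nrm (Matrix.single i j (M i j)) :=
        Finset.sum_le_sum fun i _ => h.sum_le _ _
    _ ≤ ∑ i : Fin n, ∑ j : Fin n, supN M * nrm (Matrix.single i j 1) := by
        refine Finset.sum_le_sum fun i _ => Finset.sum_le_sum fun j _ => ?_
        have e1 : Matrix.single i j (M i j) = (M i j) • Matrix.single i j 1 := by
          rw [Matrix.smul_single, smul_eq_mul, mul_one]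
        rw [e1, h.2.2.1]
        exact mul_le_mul_of_nonneg_right (abs_entry_le_supN M i j) (h.1 _)
    _ = supN M * C₀ := by
        rw [hC₀, Finset.mul_sum]
        exact Finset.sum_congr rfl fun i _ => (Finset.mul_sum _ _ _).symm
    _ ≤ (C₀ + 1) * supN M := by nlinarith [supN_nonneg M]

lemma IsMatNorm.continuous {n : ℕ} {nrm : Matrix (Fin n) (Fin n) ℝ → ℝ} (h : IsMatNorm nrm) :
    Continuous nrm := by
  obtain ⟨C, hC, hub⟩ := h.le_const
  have key : ∀ X Y : Matrix (Fin n) (Fin n) ℝ, nrm X - nrm Y ≤ C * supN (X - Y) := by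
    intro X Y
    have h1 : nrm X ≤ nrm Y + nrm (X - Y) := by
      have := h.2.2.2 Y (X - Y); simpa using this
    have := hub (X - Y); linarith
  have hlip : LipschitzWith (Real.toNNReal C)
      (fun x : Fin n → Fin n → ℝ => nrm (Matrix.of x)) := by
    apply LipschitzWith.of_dist_le_mul
    intro x y
    rw [Real.dist_eq, Real.coe_toNNReal C hC.le, dist_eq_norm, abs_sub_le_iff]
    have e : ∀ a b : Fin n → Fin n → ℝ, supN (Matrix.of a - Matrix.of b) = ‖a - b‖ := fun a b => rfl
    constructor
    · have := key (Matrix.of x) (Matrix.of y); rwa [e] at this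
    · have := key (Matrix.of y) (Matrix.of x)
      rw [e] at this
      rwa [← norm_neg, neg_sub] at this
  exact hlip.continuous.comp (continuous_id : Continuous fun M : Matrix (Fin n) (Fin n) ℝ =>
    (Matrix.of.symm M : Fin n → Fin n → ℝ))

lemma IsMatNorm.exists_equiv {n : ℕ} {nrm : Matrix (Fin n) (Fin n) ℝ → ℝ} (h : IsMatNorm nrm) :
    ∃ c C : ℝ, 0 < c ∧ 0 < C ∧ ∀ M, c * supN M ≤ nrm M ∧ nrm M ≤ C * supN M := by
  obtain ⟨C, hC, hub⟩ := h.le_const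
  rcases Nat.eq_zero_or_pos n with hn | hn
  · refine ⟨1, C, one_pos, hC, fun M => ⟨?_, hub M⟩⟩
    subst hn
    have hM : M = 0 := by ext i j; exact (IsEmpty.false i).elim
    rw [hM, (h.2.1 0).mpr rfl, supN_eq_zero_left, mul_zero]
  haveI : Nonempty (Fin n) := ⟨⟨0, hn⟩⟩
  set g : (Fin n → Fin n → ℝ) → ℝ := fun x => nrm (Matrix.of x) with hg
  have hgc : Continuous g := h.continuous.comp
    (continuous_id : Continuous fun x : Fin n → Fin n → ℝ => (Matrix.of x : Matrix (Fin n) (Fin n) ℝ))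
  haveI : Nontrivial (Fin n → Fin n → ℝ) := by
    refine ⟨(fun _ _ => 1), 0, fun hcon => ?_⟩
    have := congrFun (congrFun hcon ⟨0, hn⟩) ⟨0, hn⟩
    norm_num at this
  have hsne : (Metric.sphere (0 : Fin n → Fin n → ℝ) 1).Nonempty :=
    NormedSpace.sphere_nonempty.mpr zero_le_one
  obtain ⟨x0, hx0, hmin⟩ :=
    (isCompact_sphere (0 : Fin n → Fin n → ℝ) 1).exists_isMinOn hsne hgc.continuousOn
  have hx0n : ‖x0‖ = 1 := by simpa using hx0
  have hx0ne : (Matrix.of x0 : Matrix (Fin n) (Fin n) ℝ) ≠ 0 := by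
    intro hcon
    have hx : x0 = 0 := hcon
    rw [hx] at hx0n; simp at hx0n
  have hm0 : 0 < g x0 := lt_of_le_of_ne (h.1 _) fun hcon => hx0ne ((h.2.1 _).mp hcon.symm)
  refine ⟨g x0, C, hm0, hC, fun M => ⟨?_, hub M⟩⟩
  by_cases hM : M = 0
  · rw [hM, (h.2.1 0).mpr rfl]
    have : supN (0 : Matrix (Fin n) (Fin n) ℝ) = 0 := by
      have : (Matrix.of.symm (0 : Matrix (Fin n) (Fin n) ℝ) : Fin n → Fin n → ℝ) = 0 := rfl
      rw [supN, this, norm_zero]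
    rw [this, mul_zero]
  set x : Fin n → Fin n → ℝ := Matrix.of.symm M with hx
  have hxne : x ≠ 0 := fun hcon => hM hcon
  have hnx : ‖x‖ ≠ 0 := norm_ne_zero_iff.mpr hxne
  have hnxpos : 0 < ‖x‖ := norm_pos_iff.mpr hxne
  have hmem : ‖x‖⁻¹ • x ∈ Metric.sphere (0 : Fin n → Fin n → ℝ) 1 := by
    simp [norm_smul, abs_of_nonneg (inv_nonneg.mpr (norm_nonneg x)), inv_mul_cancel₀ hnx]
  have hge : g x0 ≤ g (‖x‖⁻¹ • x) := isMinOn_iff.mp hmin _ hmem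
  have hrepr : nrm M = ‖x‖ * g (‖x‖⁻¹ • x) := by
    have e1 : M = ‖x‖ • (Matrix.of (‖x‖⁻¹ • x) : Matrix (Fin n) (Fin n) ℝ) := by
      show M = Matrix.of (‖x‖ • (‖x‖⁻¹ • x))
      rw [smul_inv_smul₀ hnx]
      exact (Matrix.of.apply_symm_apply M).symm
    rw [e1, h.2.2.1, abs_of_pos hnxpos]
  have hsupN : supN M = ‖x‖ := rfl
  rw [hrepr, hsupN]
  calc g x0 * ‖x‖ ≤ g (‖x‖⁻¹ • x) * ‖x‖ := mul_le_mul_of_nonneg_right hge (norm_nonneg x)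
    _ = ‖x‖ * g (‖x‖⁻¹ • x) := mul_comm _ _

lemma limsup_le_limsup_of_tendsto_sub {u v : ℕ → ℝ}
    (huub : IsBoundedUnder (· ≤ ·) atTop u) (hulb : IsBoundedUnder (· ≥ ·) atTop u)
    (hvlb : IsBoundedUnder (· ≥ ·) atTop v)
    (h : Tendsto (fun m => v m - u m) atTop (nhds 0)) :
    limsup v atTop ≤ limsup u atTop := by
  refine le_of_forall_pos_le_add fun ε hε => ?_
  have hev : ∀ᶠ n in atTop, v n ≤ u n + ε := by
    filter_upwards [h (Iio_mem_nhds hε)] with n hn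
    simp only [Set.mem_preimage, Set.mem_Iio] at hn
    linarith
  obtain ⟨b, hb⟩ := id huub
  rw [eventually_map] at hb
  have hbdd : IsBoundedUnder (· ≤ ·) atTop (fun n => u n + ε) :=
    ⟨b + ε, eventually_map.mpr (hb.mono fun n hn => by simpa using add_le_add_right hn ε)⟩
  calc limsup v atTop ≤ limsup (fun n => u n + ε) atTop :=
        limsup_le_limsup hev hvlb.isCoboundedUnder_le hbdd
    _ = limsup u atTop + ε := limsup_add_const atTop u ε huub hulb.isCoboundedUnder_le

lemma limsup_congr_of_tendsto_sub {u v : ℕ → ℝ}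
    (huub : IsBoundedUnder (· ≤ ·) atTop u) (hulb : IsBoundedUnder (· ≥ ·) atTop u)
    (h : Tendsto (fun m => v m - u m) atTop (nhds 0)) :
    limsup v atTop = limsup u atTop := by
  have h1 : ∀ᶠ n in atTop, |v n - u n| ≤ 1 := by
    filter_upwards [h (Metric.closedBall_mem_nhds 0 one_pos)] with n hn
    simpa [Real.dist_eq] using hn
  obtain ⟨b, hb⟩ := id huub
  rw [eventually_map] at hb
  obtain ⟨b', hb'⟩ := id hulb
  rw [eventually_map] at hb'
  have hvub : IsBoundedUnder (· ≤ ·) atTop v := by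
    refine ⟨b + 1, eventually_map.mpr ?_⟩
    filter_upwards [hb, h1] with n h2 h3
    have := abs_le.mp h3
    linarith
  have hvlb : IsBoundedUnder (· ≥ ·) atTop v := by
    refine ⟨b' - 1, eventually_map.mpr ?_⟩
    filter_upwards [hb', h1] with n h2 h3
    have := abs_le.mp h3
    simp only [ge_iff_le]
    linarith
  refine le_antisymm (limsup_le_limsup_of_tendsto_sub huub hulb hvlb h)
    (limsup_le_limsup_of_tendsto_sub hvub hvlb hulb ?_)
  have : (fun m => u m - v m) = fun m => -(v m - u m) := by funext m; ring
  rw [this]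
  simpa using h.neg

lemma limsup_eq_of_squeeze {u v g h : ℕ → ℝ} {K : ℝ}
    (hu0 : ∀ᶠ m in atTop, 0 ≤ u m) (huK : ∀ᶠ m in atTop, u m ≤ K)
    (hg : Tendsto g atTop (nhds 1)) (hh : Tendsto h atTop (nhds 1))
    (hs : ∀ᶠ m in atTop, g m * u m ≤ v m ∧ v m ≤ h m * u m) :
    limsup v atTop = limsup u atTop := by
  have habs : ∀ᶠ m in atTop, |v m - u m| ≤ K * |h m - 1| + K * |g m - 1| := by
    filter_upwards [hu0, huK, hs] with m h0 hK ⟨hl, hr⟩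
    have e1 : v m - u m ≤ (h m - 1) * u m := by nlinarith
    have e2 : u m - v m ≤ (1 - g m) * u m := by nlinarith
    have e3 : (h m - 1) * u m ≤ |h m - 1| * K :=
      mul_le_mul (le_abs_self _) hK h0 (abs_nonneg _)
    have e4 : (1 - g m) * u m ≤ |g m - 1| * K := by
      have : (1 - g m) ≤ |g m - 1| := by rw [abs_sub_comm]; exact le_abs_self _
      exact mul_le_mul this hK h0 (abs_nonneg _)
    rw [abs_sub_le_iff]
    constructor <;> nlinarith [abs_nonneg (h m - 1), abs_nonneg (g m - 1), abs_nonneg (v m - u m)]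
  have hto : Tendsto (fun m => v m - u m) atTop (nhds 0) := by
    apply squeeze_zero_norm' (by simpa [Real.norm_eq_abs] using habs)
    have := ((hh.sub_const 1).abs.const_mul K).add ((hg.sub_const 1).abs.const_mul K)
    simpa using this
  exact limsup_congr_of_tendsto_sub ⟨K, eventually_map.mpr huK⟩ ⟨0, eventually_map.mpr hu0⟩ hto

lemma tendsto_rpow_of_exp_tendsto {α : ℝ} (hα : 0 < α) {t : ℕ → ℝ}
    (ht : Tendsto t atTop (nhds 0)) :
    Tendsto (fun m => α ^ t m) atTop (nhds 1) := by
  have e : (fun m => α ^ t m) = fun m => Real.exp (Real.log α * t m) := by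
    funext m; rw [Real.rpow_def_of_pos hα]
  rw [e]
  have h2 : Tendsto (fun m => Real.log α * t m) atTop (nhds 0) := by
    simpa using ht.const_mul (Real.log α)
  have := (Real.continuous_exp.tendsto 0).comp h2
  simpa [Function.comp_def] using this

lemma tendsto_one_div_mul (q : ℝ) :
    Tendsto (fun m : ℕ => 1 / (q * m)) atTop (nhds 0) := by
  have e : (fun m : ℕ => 1 / (q * m)) = fun m : ℕ => (1 / q) * (1 / m) := by
    funext m; rw [one_div, mul_inv, one_div, one_div, mul_comm]
  rw [e]
  simpa using tendsto_one_div_atTop_nhds_zero_nat.const_mul (1 / q)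

lemma limsup_max_pow {u : ℕ → ℝ} (k : ℕ)
    (hub : IsBoundedUnder (· ≤ ·) atTop u) (hcob : IsCoboundedUnder (· ≤ ·) atTop u) :
    limsup (fun m => (max (u m) 0) ^ k) atTop = (max (limsup u atTop) 0) ^ k := by
  have hmono : Monotone fun x : ℝ => (max x 0) ^ k :=
    fun a b hab => pow_le_pow_left₀ (le_max_right a 0) (max_le_max hab le_rfl) k
  have hcont : ContinuousAt (fun x : ℝ => (max x 0) ^ k) (limsup u atTop) :=
    ((continuous_id.max continuous_const).pow k).continuousAt
  exact (Monotone.map_limsup_of_continuousAt hmono u hcont hub hcob).symm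



instance matSecondCountable {d : ℕ} : SecondCountableTopology (Matrix (Fin d) (Fin d) ℝ) :=
  inferInstanceAs (SecondCountableTopology (Fin d → Fin d → ℝ))

instance matBorelSpace {d : ℕ} : BorelSpace (Matrix (Fin d) (Fin d) ℝ) :=
  inferInstanceAs (BorelSpace (Fin d → Fin d → ℝ))




lemma continuous_supN {d : ℕ} : Continuous fun M : Matrix (Fin d) (Fin d) ℝ => supN M :=
  continuous_norm.comp (continuous_id :
    Continuous fun M : Matrix (Fin d) (Fin d) ℝ => (Matrix.of.symm M : Fin d → Fin d → ℝ))

lemma continuous_kronPow {d : ℕ} (k : ℕ) :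
    Continuous fun M : Matrix (Fin d) (Fin d) ℝ => kronPow M k := by
  induction k with
  | zero => exact continuous_const
  | succ p ih =>
      refine continuous_matrix fun i j => ?_
      simp only [kronPow, Matrix.reindex_apply, Matrix.submatrix_apply,
        Matrix.kroneckerMap_apply]
      exact (ih.matrix_elem _ _).mul (continuous_id.matrix_elem _ _)

lemma continuous_listProd {d m : ℕ} :
    Continuous fun A : Fin m → Matrix (Fin d) (Fin d) ℝ => (List.ofFn A).reverse.prod := by
  induction m with
  | zero => simpa [List.ofFn_zero] using continuous_const
  | succ mm ih =>
      have e : (fun A : Fin (mm + 1) → Matrix (Fin d) (Fin d) ℝ => (List.ofFn A).reverse.prod)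
          = fun A => (List.ofFn (fun i : Fin mm => A i.succ)).reverse.prod * A 0 := by
        funext A
        rw [List.ofFn_succ, List.reverse_cons, List.prod_append, List.prod_singleton]
      rw [e]
      exact (ih.comp (continuous_pi fun i => continuous_apply i.succ)).matrix_mul
        (continuous_apply 0)

lemma continuous_rpow_const {q : ℝ} (hq : 0 ≤ q) : Continuous fun x : ℝ => x ^ q :=
  continuous_iff_continuousAt.2 fun x => Real.continuousAt_rpow_const x q (Or.inr hq)

lemma ae_forall_mem_msupport {d : ℕ} (μ : Measure (Matrix (Fin d) (Fin d) ℝ))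
    [IsProbabilityMeasure μ] (hfull : μ (msupport μ)ᶜ = 0) (m : ℕ) :
    ∀ᵐ a ∂(Measure.pi fun _ : Fin m => μ), ∀ i, a i ∈ msupport μ := by
  have h1 : ∀ i : Fin m,
      (Measure.pi fun _ : Fin m => μ) (Function.eval i ⁻¹' (msupport μ)ᶜ) = 0 :=
    fun i => Measure.pi_eval_preimage_null _ hfull
  rw [MeasureTheory.ae_iff]
  refine measure_mono_null (fun a ha => ?_) (measure_iUnion_null h1)
  simp only [Set.mem_setOf_eq, not_forall] at ha
  obtain ⟨i, hi⟩ := ha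
  exact Set.mem_iUnion.mpr ⟨i, hi⟩

lemma exists_msupport_bound {d : ℕ} (μ : Measure (Matrix (Fin d) (Fin d) ℝ))
    [IsProbabilityMeasure μ] (hsupp : IsCompact (msupport μ)) (hfull : μ (msupport μ)ᶜ = 0) :
    ∃ R : ℝ, 1 ≤ R ∧ ∀ A ∈ msupport μ, supN A ≤ R := by
  have hne : (msupport μ).Nonempty := by
    by_contra hcon
    rw [Set.not_nonempty_iff_eq_empty] at hcon
    rw [hcon, Set.compl_empty] at hfull
    exact (IsProbabilityMeasure.ne_zero μ) (by simpa [measure_univ] using hfull)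
  obtain ⟨A0, _, hmax⟩ := hsupp.exists_isMaxOn hne continuous_supN.continuousOn
  exact ⟨max (supN A0) 1, le_max_right _ _,
    fun A hA => le_trans (isMaxOn_iff.mp hmax A hA) (le_max_left _ _)⟩

lemma supN_listProd_le {d : ℕ} {R : ℝ} (hR : 1 ≤ R) (l : List (Matrix (Fin d) (Fin d) ℝ))
    (hl : ∀ M ∈ l, supN M ≤ R) :
    supN l.prod ≤ (((d : ℝ) + 1) * R) ^ l.length := by
  induction l with
  | nil => simpa using supN_one_le
  | cons M l ih =>
      rw [List.prod_cons, List.length_cons, pow_succ']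
      have h1 : supN (M * l.prod) ≤ (d : ℝ) * supN M * supN l.prod := by
        simpa using supN_mul_le M l.prod
      have h2 : supN l.prod ≤ (((d : ℝ) + 1) * R) ^ l.length :=
        ih fun N hN => hl N (List.mem_cons_of_mem _ hN)
      have h3 : supN M ≤ R := hl M List.mem_cons_self
      have h4 : (0 : ℝ) ≤ supN M := supN_nonneg _
      have h5 : (0 : ℝ) ≤ supN l.prod := supN_nonneg _
      have h6 : (0 : ℝ) ≤ (d : ℝ) := Nat.cast_nonneg _
      have hT0 : (0 : ℝ) ≤ ((d : ℝ) + 1) * R := mul_nonneg (by linarith) (by linarith)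
      calc supN (M * l.prod) ≤ (d : ℝ) * supN M * supN l.prod := h1
        _ ≤ (d : ℝ) * R * (((d : ℝ) + 1) * R) ^ l.length :=
            mul_le_mul (mul_le_mul_of_nonneg_left h3 h6) h2 h5 (mul_nonneg h6 (by linarith))
        _ ≤ (((d : ℝ) + 1) * R) * (((d : ℝ) + 1) * R) ^ l.length :=
            mul_le_mul_of_nonneg_right (by nlinarith) (pow_nonneg hT0 _)

lemma listProd_kronPow {d k m : ℕ} (a : Fin m → Matrix (Fin d) (Fin d) ℝ) :
    (List.ofFn fun i => kronPow (a i) k).reverse.prod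
      = kronPow ((List.ofFn a).reverse.prod) k := by
  have e1 : (List.ofFn fun i => kronPow (a i) k) = (List.ofFn a).map (kronPowHom d k) := by
    rw [List.map_ofFn]; rfl
  rw [e1, ← List.map_reverse, List.prod_hom]
  rfl

lemma prodSeq_map {d : ℕ} (μ : Measure (Matrix (Fin d) (Fin d) ℝ)) [IsProbabilityMeasure μ]
    (k : ℕ) {q : ℝ} (hq : 0 ≤ q)
    (nrm' : Matrix (Fin (d ^ k)) (Fin (d ^ k)) ℝ → ℝ) (hnrm' : IsMatNorm nrm') (m : ℕ) :
    prodSeq (μ.map fun A => kronPow A k) nrm' q m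
      = ∫ a : Fin m → Matrix (Fin d) (Fin d) ℝ,
          nrm' (kronPow ((List.ofFn a).reverse.prod) k) ^ q ∂(Measure.pi fun _ => μ) := by
  have hmeas : Measurable fun A : Matrix (Fin d) (Fin d) ℝ => kronPow A k :=
    (continuous_kronPow k).measurable
  have hmp : MeasurePreserving (fun (a : Fin m → Matrix (Fin d) (Fin d) ℝ) (i : Fin m) =>
      kronPow (a i) k) (Measure.pi fun _ => μ) (Measure.pi fun _ => μ.map fun A => kronPow A k) :=
    measurePreserving_pi _ _ (fun _ => hmeas.measurePreserving _)
  have hcontg : Continuous fun B : Fin m → Matrix (Fin (d ^ k)) (Fin (d ^ k)) ℝ =>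
      nrm' ((List.ofFn B).reverse.prod) ^ q :=
    (continuous_rpow_const hq).comp (hnrm'.continuous.comp continuous_listProd)
  rw [prodSeq, ← hmp.map_eq, integral_map hmp.measurable.aemeasurable
    hcontg.aestronglyMeasurable]
  congr 1
  funext a
  rw [listProd_kronPow]

lemma integrable_aux {d m : ℕ} (μ : Measure (Matrix (Fin d) (Fin d) ℝ)) [IsProbabilityMeasure μ]
    {f : (Fin m → Matrix (Fin d) (Fin d) ℝ) → ℝ} (hc : Continuous f) {B : ℝ}
    (hb : ∀ᵐ a ∂(Measure.pi fun _ : Fin m => μ), |f a| ≤ B) :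
    Integrable f (Measure.pi fun _ : Fin m => μ) :=
  (integrable_const B).mono' hc.aestronglyMeasurable
    (by simpa [Real.norm_eq_abs] using hb)

/-- `ρ_{p,μ} = (ρ_{p/k, μ^{⊗k}})^{1/k}` where `μ^{⊗k}` is the pushforward of
`μ` under `A ↦ A^{⊗k}`. -/
theorem stmt_12 {d : ℕ} (μ : Measure (Matrix (Fin d) (Fin d) ℝ)) [IsProbabilityMeasure μ]
    (hsupp : IsCompact (msupport μ)) (hfull : μ (msupport μ)ᶜ = 0)
    (p k : ℕ) (hp : 0 < p) (hk : 0 < k)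
    (nrm : Matrix (Fin d) (Fin d) ℝ → ℝ) (hnrm : IsMatNorm nrm)
    (nrm' : Matrix (Fin (d ^ k)) (Fin (d ^ k)) ℝ → ℝ) (hnrm' : IsMatNorm nrm') :
    pRad μ nrm p
      = (pRad (μ.map fun A => kronPow A k) nrm' ((p : ℝ) / k)) ^ ((1 : ℝ) / k) := by
  classical
  obtain ⟨c₁, C₁, hc₁, hC₁, hco₁⟩ := hnrm.exists_equiv
  obtain ⟨c₂, C₂, hc₂, hC₂, hco₂⟩ := hnrm'.exists_equiv
  obtain ⟨R, hR1, hRb⟩ := exists_msupport_bound μ hsupp hfull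
  have hp0 : (0 : ℝ) < (p : ℝ) := by exact_mod_cast hp
  have hk0 : (0 : ℝ) < (k : ℝ) := by exact_mod_cast hk
  set q : ℝ := (p : ℝ) / (k : ℝ) with hqdef
  have hq0 : 0 < q := div_pos hp0 hk0
  set T : ℝ := ((d : ℝ) + 1) * R with hTdef
  have hT1 : 1 ≤ T := by nlinarith [Nat.cast_nonneg (α := ℝ) d]
  have hT0 : 0 < T := lt_of_lt_of_le one_pos hT1
  -- the product map and the three integrands
  set P : ∀ m, (Fin m → Matrix (Fin d) (Fin d) ℝ) → Matrix (Fin d) (Fin d) ℝ :=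
    fun m a => (List.ofFn a).reverse.prod with hPdef
  set cs : ℕ → ℝ := fun m =>
    ∫ a : Fin m → Matrix (Fin d) (Fin d) ℝ, supN (P m a) ^ (p : ℝ)
      ∂(Measure.pi fun _ => μ) with hcs
  set av : ℕ → ℝ := fun m => prodSeq μ nrm (p : ℝ) m with hav
  set bv : ℕ → ℝ := fun m => prodSeq (μ.map fun A => kronPow A k) nrm' q m with hbv
  -- a.e. bound on the product
  have haeP : ∀ m : ℕ, ∀ᵐ a ∂(Measure.pi fun _ : Fin m => μ),
      supN (P m a) ≤ T ^ m := by
    intro m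
    filter_upwards [ae_forall_mem_msupport μ hfull m] with a ha
    have := supN_listProd_le hR1 ((List.ofFn a).reverse) ?_
    · simpa [hPdef, List.length_reverse, List.length_ofFn, hTdef] using this
    · intro M hM
      rw [List.mem_reverse, List.mem_ofFn] at hM
      obtain ⟨i, rfl⟩ := hM
      exact hRb _ (ha i)
  -- continuity of the integrands
  have hcontP : ∀ m : ℕ, Continuous (P m) := fun m => continuous_listProd
  have hf₁c : ∀ m : ℕ, Continuous fun a : Fin m → Matrix (Fin d) (Fin d) ℝ =>
      nrm (P m a) ^ (p : ℝ) := fun m =>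
    (continuous_rpow_const hp0.le).comp (hnrm.continuous.comp (hcontP m))
  have hf₂c : ∀ m : ℕ, Continuous fun a : Fin m → Matrix (Fin d) (Fin d) ℝ =>
      supN (P m a) ^ (p : ℝ) := fun m =>
    (continuous_rpow_const hp0.le).comp (continuous_supN.comp (hcontP m))
  have hf₃c : ∀ m : ℕ, Continuous fun a : Fin m → Matrix (Fin d) (Fin d) ℝ =>
      nrm' (kronPow (P m a) k) ^ q := fun m =>
    (continuous_rpow_const hq0.le).comp
      (hnrm'.continuous.comp ((continuous_kronPow k).comp (hcontP m)))
  -- integrability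
  have hint₂ : ∀ m : ℕ, Integrable
      (fun a : Fin m → Matrix (Fin d) (Fin d) ℝ => supN (P m a) ^ (p : ℝ))
      (Measure.pi fun _ => μ) := by
    intro m
    refine integrable_aux μ (hf₂c m) (B := (T ^ m) ^ (p : ℝ)) ?_
    filter_upwards [haeP m] with a ha
    rw [abs_of_nonneg (Real.rpow_nonneg (supN_nonneg _) _)]
    exact Real.rpow_le_rpow (supN_nonneg _) ha hp0.le
  have hint₁ : ∀ m : ℕ, Integrable
      (fun a : Fin m → Matrix (Fin d) (Fin d) ℝ => nrm (P m a) ^ (p : ℝ))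
      (Measure.pi fun _ => μ) := by
    intro m
    refine integrable_aux μ (hf₁c m) (B := (C₁ * T ^ m) ^ (p : ℝ)) ?_
    filter_upwards [haeP m] with a ha
    rw [abs_of_nonneg (Real.rpow_nonneg (hnrm.1 _) _)]
    refine Real.rpow_le_rpow (hnrm.1 _) ?_ hp0.le
    exact le_trans (hco₁ _).2 (mul_le_mul_of_nonneg_left ha hC₁.le)
  have hint₃ : ∀ m : ℕ, Integrable
      (fun a : Fin m → Matrix (Fin d) (Fin d) ℝ => nrm' (kronPow (P m a) k) ^ q)
      (Measure.pi fun _ => μ) := by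
    intro m
    refine integrable_aux μ (hf₃c m) (B := (C₂ * (T ^ m) ^ k) ^ q) ?_
    filter_upwards [haeP m] with a ha
    rw [abs_of_nonneg (Real.rpow_nonneg (hnrm'.1 _) _)]
    refine Real.rpow_le_rpow (hnrm'.1 _) ?_ hq0.le
    refine le_trans (hco₂ _).2 (mul_le_mul_of_nonneg_left ?_ hC₂.le)
    rw [supN_kronPow]
    exact pow_le_pow_left₀ (supN_nonneg _) ha k
  -- pointwise comparisons, integrated
  have hA : ∀ m : ℕ, c₁ ^ (p : ℝ) * cs m ≤ av m ∧ av m ≤ C₁ ^ (p : ℝ) * cs m := by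
    intro m
    have hlow : ∀ a : Fin m → Matrix (Fin d) (Fin d) ℝ,
        c₁ ^ (p : ℝ) * (supN (P m a) ^ (p : ℝ)) ≤ nrm (P m a) ^ (p : ℝ) := by
      intro a
      rw [← Real.mul_rpow hc₁.le (supN_nonneg _)]
      exact Real.rpow_le_rpow (mul_nonneg hc₁.le (supN_nonneg _)) (hco₁ _).1 hp0.le
    have hhigh : ∀ a : Fin m → Matrix (Fin d) (Fin d) ℝ,
        nrm (P m a) ^ (p : ℝ) ≤ C₁ ^ (p : ℝ) * (supN (P m a) ^ (p : ℝ)) := by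
      intro a
      rw [← Real.mul_rpow hC₁.le (supN_nonneg _)]
      exact Real.rpow_le_rpow (hnrm.1 _) (hco₁ _).2 hp0.le
    constructor
    · rw [hav, hcs]
      calc c₁ ^ (p : ℝ) * ∫ a, supN (P m a) ^ (p : ℝ) ∂(Measure.pi fun _ => μ)
          = ∫ a, c₁ ^ (p : ℝ) * supN (P m a) ^ (p : ℝ) ∂(Measure.pi fun _ => μ) :=
            (integral_const_mul _ _).symm
        _ ≤ _ := integral_mono ((hint₂ m).const_mul _) (hint₁ m) hlow
    · rw [hav, hcs]
      calc (prodSeq μ nrm (p : ℝ) m : ℝ)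
          ≤ ∫ a, C₁ ^ (p : ℝ) * supN (P m a) ^ (p : ℝ) ∂(Measure.pi fun _ => μ) :=
            integral_mono (hint₁ m) ((hint₂ m).const_mul _) hhigh
        _ = C₁ ^ (p : ℝ) * ∫ a, supN (P m a) ^ (p : ℝ) ∂(Measure.pi fun _ => μ) :=
            integral_const_mul _ _
  have hBrw : ∀ m : ℕ, bv m = ∫ a : Fin m → Matrix (Fin d) (Fin d) ℝ,
      nrm' (kronPow (P m a) k) ^ q ∂(Measure.pi fun _ => μ) := fun m =>
    prodSeq_map μ k hq0.le nrm' hnrm' m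
  have hB : ∀ m : ℕ, c₂ ^ q * cs m ≤ bv m ∧ bv m ≤ C₂ ^ q * cs m := by
    intro m
    have hkey : ∀ a : Fin m → Matrix (Fin d) (Fin d) ℝ,
        supN (kronPow (P m a) k) ^ q = supN (P m a) ^ (p : ℝ) := by
      intro a
      rw [supN_kronPow, ← Real.rpow_natCast (supN (P m a)) k,
        ← Real.rpow_mul (supN_nonneg _)]
      congr 1
      rw [hqdef]
      field_simp
    have hlow : ∀ a : Fin m → Matrix (Fin d) (Fin d) ℝ,
        c₂ ^ q * (supN (P m a) ^ (p : ℝ)) ≤ nrm' (kronPow (P m a) k) ^ q := by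
      intro a
      rw [← hkey a, ← Real.mul_rpow hc₂.le (supN_nonneg _)]
      exact Real.rpow_le_rpow (mul_nonneg hc₂.le (supN_nonneg _)) (hco₂ _).1 hq0.le
    have hhigh : ∀ a : Fin m → Matrix (Fin d) (Fin d) ℝ,
        nrm' (kronPow (P m a) k) ^ q ≤ C₂ ^ q * (supN (P m a) ^ (p : ℝ)) := by
      intro a
      rw [← hkey a, ← Real.mul_rpow hC₂.le (supN_nonneg _)]
      exact Real.rpow_le_rpow (hnrm'.1 _) (hco₂ _).2 hq0.le
    constructor
    · rw [hBrw m, hcs]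
      calc c₂ ^ q * ∫ a, supN (P m a) ^ (p : ℝ) ∂(Measure.pi fun _ => μ)
          = ∫ a, c₂ ^ q * supN (P m a) ^ (p : ℝ) ∂(Measure.pi fun _ => μ) :=
            (integral_const_mul _ _).symm
        _ ≤ _ := integral_mono ((hint₂ m).const_mul _) (hint₃ m) hlow
    · rw [hBrw m, hcs]
      calc (∫ a, nrm' (kronPow (P m a) k) ^ q ∂(Measure.pi fun _ => μ))
          ≤ ∫ a, C₂ ^ q * supN (P m a) ^ (p : ℝ) ∂(Measure.pi fun _ => μ) :=
            integral_mono (hint₃ m) ((hint₂ m).const_mul _) hhigh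
        _ = C₂ ^ q * ∫ a, supN (P m a) ^ (p : ℝ) ∂(Measure.pi fun _ => μ) :=
            integral_const_mul _ _
  have hcs0 : ∀ m, 0 ≤ cs m := fun m =>
    integral_nonneg fun a => Real.rpow_nonneg (supN_nonneg _) _
  have hcsT : ∀ m, cs m ≤ (T ^ m) ^ (p : ℝ) := by
    intro m
    rw [hcs]
    calc (∫ a, supN (P m a) ^ (p : ℝ) ∂(Measure.pi fun _ => μ))
        ≤ ∫ _a : Fin m → Matrix (Fin d) (Fin d) ℝ, (T ^ m) ^ (p : ℝ)
            ∂(Measure.pi fun _ => μ) := by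
          refine integral_mono_ae (hint₂ m) (integrable_const _) ?_
          filter_upwards [haeP m] with a ha
          exact Real.rpow_le_rpow (supN_nonneg _) ha hp0.le
      _ = (T ^ m) ^ (p : ℝ) := by simp
  have hav0 : ∀ m, 0 ≤ av m := fun m =>
    integral_nonneg fun a => Real.rpow_nonneg (hnrm.1 _) _
  have hbv0 : ∀ m, 0 ≤ bv m := fun m =>
    integral_nonneg fun a => Real.rpow_nonneg (hnrm'.1 _) _
  -- the reference sequence
  set u : ℕ → ℝ := fun m => cs m ^ (1 / ((p : ℝ) * m)) with hu
  have hu0 : ∀ m, 0 ≤ u m := fun m => Real.rpow_nonneg (hcs0 m) _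
  have huT : ∀ᶠ m in atTop, u m ≤ T := by
    rw [eventually_atTop]
    refine ⟨1, fun m hm => ?_⟩
    have hm0 : (0 : ℝ) < (m : ℝ) := by exact_mod_cast hm
    have h1 : u m ≤ ((T ^ m) ^ (p : ℝ)) ^ (1 / ((p : ℝ) * m)) :=
      Real.rpow_le_rpow (hcs0 m) (hcsT m) (by positivity)
    refine le_trans h1 (le_of_eq ?_)
    rw [← Real.rpow_natCast T m, ← Real.rpow_mul hT0.le, ← Real.rpow_mul hT0.le]
    rw [show ((m : ℝ) * (p : ℝ)) * (1 / ((p : ℝ) * m)) = 1 by field_simp, Real.rpow_one]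
  -- squeeze factors
  have hgt₁ : Tendsto (fun m : ℕ => (c₁ ^ (p : ℝ)) ^ (1 / ((p : ℝ) * m))) atTop (nhds 1) :=
    tendsto_rpow_of_exp_tendsto (Real.rpow_pos_of_pos hc₁ _) (tendsto_one_div_mul _)
  have hht₁ : Tendsto (fun m : ℕ => (C₁ ^ (p : ℝ)) ^ (1 / ((p : ℝ) * m))) atTop (nhds 1) :=
    tendsto_rpow_of_exp_tendsto (Real.rpow_pos_of_pos hC₁ _) (tendsto_one_div_mul _)
  have hgt₂ : Tendsto (fun m : ℕ => (c₂ ^ q) ^ (1 / ((p : ℝ) * m))) atTop (nhds 1) :=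
    tendsto_rpow_of_exp_tendsto (Real.rpow_pos_of_pos hc₂ _) (tendsto_one_div_mul _)
  have hht₂ : Tendsto (fun m : ℕ => (C₂ ^ q) ^ (1 / ((p : ℝ) * m))) atTop (nhds 1) :=
    tendsto_rpow_of_exp_tendsto (Real.rpow_pos_of_pos hC₂ _) (tendsto_one_div_mul _)
  have hsq₁ : ∀ᶠ m : ℕ in atTop,
      (c₁ ^ (p : ℝ)) ^ (1 / ((p : ℝ) * m)) * u m ≤ av m ^ (1 / ((p : ℝ) * m)) ∧
        av m ^ (1 / ((p : ℝ) * m)) ≤ (C₁ ^ (p : ℝ)) ^ (1 / ((p : ℝ) * m)) * u m := by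
    refine Eventually.of_forall fun m => ?_
    have he : 0 ≤ 1 / ((p : ℝ) * m) := by positivity
    constructor
    · rw [hu, ← Real.mul_rpow (Real.rpow_nonneg hc₁.le _) (hcs0 m)]
      exact Real.rpow_le_rpow (mul_nonneg (Real.rpow_nonneg hc₁.le _) (hcs0 m)) (hA m).1 he
    · rw [hu, ← Real.mul_rpow (Real.rpow_nonneg hC₁.le _) (hcs0 m)]
      exact Real.rpow_le_rpow (hav0 m) (hA m).2 he
  have hsq₂ : ∀ᶠ m : ℕ in atTop,
      (c₂ ^ q) ^ (1 / ((p : ℝ) * m)) * u m ≤ bv m ^ (1 / ((p : ℝ) * m)) ∧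
        bv m ^ (1 / ((p : ℝ) * m)) ≤ (C₂ ^ q) ^ (1 / ((p : ℝ) * m)) * u m := by
    refine Eventually.of_forall fun m => ?_
    have he : 0 ≤ 1 / ((p : ℝ) * m) := by positivity
    constructor
    · rw [hu, ← Real.mul_rpow (Real.rpow_nonneg hc₂.le _) (hcs0 m)]
      exact Real.rpow_le_rpow (mul_nonneg (Real.rpow_nonneg hc₂.le _) (hcs0 m)) (hB m).1 he
    · rw [hu, ← Real.mul_rpow (Real.rpow_nonneg hC₂.le _) (hcs0 m)]
      exact Real.rpow_le_rpow (hbv0 m) (hB m).2 he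
  have hlim₁ : limsup (fun m => av m ^ (1 / ((p : ℝ) * m))) atTop = limsup u atTop :=
    limsup_eq_of_squeeze (Eventually.of_forall hu0) huT hgt₁ hht₁ hsq₁
  have hlim₂ : limsup (fun m => bv m ^ (1 / ((p : ℝ) * m))) atTop = limsup u atTop :=
    limsup_eq_of_squeeze (Eventually.of_forall hu0) huT hgt₂ hht₂ hsq₂
  set S : ℝ := limsup u atTop with hS
  have hS0 : 0 ≤ S :=
    le_limsup_of_frequently_le ((Eventually.of_forall hu0).frequently)
      ⟨T, eventually_map.mpr huT⟩
  -- boundedness of the b-sequence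
  have hw'0 : ∀ m, 0 ≤ bv m ^ (1 / ((p : ℝ) * m)) := fun m => Real.rpow_nonneg (hbv0 m) _
  have hw'ub : IsBoundedUnder (· ≤ ·) atTop (fun m => bv m ^ (1 / ((p : ℝ) * m))) := by
    refine ⟨2 * T, eventually_map.mpr ?_⟩
    have h2 : ∀ᶠ m in atTop, (C₂ ^ q) ^ (1 / ((p : ℝ) * (m : ℕ))) < 2 :=
      hht₂.eventually (eventually_lt_nhds one_lt_two)
    filter_upwards [hsq₂, h2, huT] with m hm hm2 hmT
    calc bv m ^ (1 / ((p : ℝ) * m)) ≤ (C₂ ^ q) ^ (1 / ((p : ℝ) * m)) * u m := hm.2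
      _ ≤ 2 * T := mul_le_mul hm2.le hmT (hu0 m) (by norm_num)
  -- identify the limsup on the right
  have hwcongr : ∀ᶠ m : ℕ in atTop,
      bv m ^ (1 / (q * m)) = (max (bv m ^ (1 / ((p : ℝ) * m))) 0) ^ k := by
    rw [eventually_atTop]
    refine ⟨1, fun m hm => ?_⟩
    have hm0 : (0 : ℝ) < (m : ℝ) := by exact_mod_cast hm
    have he : 1 / (q * (m : ℝ)) = (1 / ((p : ℝ) * m)) * (k : ℝ) := by
      rw [hqdef]; field_simp
    rw [he, Real.rpow_mul (hbv0 m), Real.rpow_natCast, max_eq_left (hw'0 m)]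
  have hw'cob : IsBoundedUnder (· ≥ ·) atTop (fun m => bv m ^ (1 / ((p : ℝ) * m))) :=
    ⟨0, eventually_map.mpr (Eventually.of_forall hw'0)⟩
  have hwlim : limsup (fun m => bv m ^ (1 / (q * m))) atTop = S ^ k := by
    rw [limsup_congr hwcongr, limsup_max_pow k hw'ub hw'cob.isCoboundedUnder_le,
      hlim₂, max_eq_left hS0]
  -- conclude
  have hLHS : pRad μ nrm (p : ℝ) = limsup (fun m => av m ^ (1 / ((p : ℝ) * m))) atTop := rfl
  have hRHS : pRad (μ.map fun A => kronPow A k) nrm' q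
      = limsup (fun m => bv m ^ (1 / (q * m))) atTop := rfl
  rw [hLHS, hlim₁, hRHS, hwlim, ← Real.rpow_natCast S k, ← Real.rpow_mul hS0,
    show (k : ℝ) * ((1 : ℝ) / k) = 1 by field_simp, Real.rpow_one]
end

section
/- The deterministic switched linear system x(k+1) = A_k x(k) with A_k ∈ M (a compact set of d×d matrices) is absolutely asymptotically stable (x(k) → 0 for every switching sequence) if and only if the joint spectral radius ρ̂(M) < 1. -/
open Matrix Set

open MeasureTheory Filter

set_option linter.unusedSectionVars false

section NormEquiv
variable {E : Type*} [NormedAddCommGroup E] [NormedSpace ℝ E] [FiniteDimensional ℝ E]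

lemma nu_sum_le (ν : E → ℝ) (h0 : ν 0 = 0)
    (ha : ∀ x y, ν (x + y) ≤ ν x + ν y) {ι : Type*} (s : Finset ι) (f : ι → E) :
    ν (∑ i ∈ s, f i) ≤ ∑ i ∈ s, ν (f i) := by
  classical
  induction s using Finset.induction with
  | empty => simp [h0]
  | insert _ _ hx ih =>
    rw [Finset.sum_insert hx, Finset.sum_insert hx]
    exact le_trans (ha _ _) (by linarith)

lemma norm_equiv (ν : E → ℝ) (h0 : ∀ x, 0 ≤ ν x) (heq : ∀ x, ν x = 0 ↔ x = 0)
    (hs : ∀ (c : ℝ) x, ν (c • x) = |c| * ν x) (ha : ∀ x y, ν (x + y) ≤ ν x + ν y) :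
    ∃ c₁ c₂ : ℝ, 0 < c₁ ∧ 0 < c₂ ∧ ∀ x, c₁ * ‖x‖ ≤ ν x ∧ ν x ≤ c₂ * ‖x‖ := by
  classical
  have hν0 : ν 0 = 0 := (heq 0).2 rfl
  -- upper bound
  obtain ⟨c₂, hc₂, hup⟩ : ∃ c₂ : ℝ, 0 < c₂ ∧ ∀ x, ν x ≤ c₂ * ‖x‖ := by
    set b := Module.finBasis ℝ E
    set c := (∑ i, ν (b i) * ‖LinearMap.toContinuousLinearMap (b.coord i)‖) with hc
    have hcnn : 0 ≤ c := Finset.sum_nonneg fun i _ =>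
      mul_nonneg (h0 _) (norm_nonneg _)
    refine ⟨c + 1, by linarith, fun x => ?_⟩
    have hx : x = ∑ i, b.repr x i • b i := (b.sum_repr x).symm
    calc ν x = ν (∑ i, b.repr x i • b i) := by rw [← hx]
      _ ≤ ∑ i, ν (b.repr x i • b i) := nu_sum_le ν hν0 ha _ _
      _ = ∑ i, |b.repr x i| * ν (b i) := by simp [hs]
      _ ≤ ∑ i, (ν (b i) * ‖LinearMap.toContinuousLinearMap (b.coord i)‖) * ‖x‖ := by
          refine Finset.sum_le_sum fun i _ => ?_
          have : |b.repr x i| = ‖(LinearMap.toContinuousLinearMap (b.coord i)) x‖ := by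
            simp [Real.norm_eq_abs]
          rw [this]
          nlinarith [ContinuousLinearMap.le_opNorm (LinearMap.toContinuousLinearMap (b.coord i)) x,
            h0 (b i), norm_nonneg ((LinearMap.toContinuousLinearMap (b.coord i))),
            norm_nonneg x, norm_nonneg ((LinearMap.toContinuousLinearMap (b.coord i)) x)]
      _ = c * ‖x‖ := by rw [← Finset.sum_mul]
      _ ≤ (c + 1) * ‖x‖ := by nlinarith [norm_nonneg x]
  -- continuity of ν
  have hlip : ∀ x y : E, ν x - ν y ≤ ν (x - y) := by
    intro x y
    have := ha (x - y) y
    simp only [sub_add_cancel] at this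
    linarith
  have hsym : ∀ x y : E, ν (x - y) = ν (y - x) := by
    intro x y
    have : y - x = (-1 : ℝ) • (x - y) := by
      simp [neg_sub]
    rw [this, hs]; simp
  have hcont : Continuous ν := by
    have : LipschitzWith (Real.toNNReal c₂) ν := by
      apply LipschitzWith.of_dist_le_mul
      intro x y
      rw [Real.dist_eq, Real.coe_toNNReal _ hc₂.le, dist_eq_norm]
      rcases abs_cases (ν x - ν y) with ⟨h, _⟩ | ⟨h, _⟩
      · rw [h]; exact le_trans (hlip x y) (hup _)
      · rw [h]
        have := hlip y x
        rw [← hsym x y] at this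
        linarith [hup (x - y)]
    exact this.continuous
  -- lower bound
  rcases subsingleton_or_nontrivial E with hsub | hnt
  · refine ⟨1, c₂, one_pos, hc₂, fun x => ?_⟩
    have hx0 : x = 0 := Subsingleton.elim x 0
    subst hx0
    simp [hν0, hup 0]
  · have hsphere : IsCompact (Metric.sphere (0 : E) 1) := isCompact_sphere 0 1
    have hne : (Metric.sphere (0 : E) 1).Nonempty :=
      NormedSpace.sphere_nonempty.mpr zero_le_one
    obtain ⟨z, hz, hmin⟩ := hsphere.exists_isMinOn hne hcont.continuousOn
    have hz1 : ‖z‖ = 1 := mem_sphere_zero_iff_norm.mp hz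
    have hzpos : 0 < ν z := by
      rcases (h0 z).lt_or_eq with h | h
      · exact h
      · exfalso
        have : z = 0 := (heq z).1 h.symm
        rw [this] at hz1; simp at hz1
    refine ⟨ν z, c₂, hzpos, hc₂, fun x => ⟨?_, hup x⟩⟩
    rcases eq_or_ne x 0 with rfl | hx
    · simp [hν0]
    · have hxpos : 0 < ‖x‖ := norm_pos_iff.mpr hx
      have hmem : (‖x‖⁻¹ • x) ∈ Metric.sphere (0 : E) 1 := by
        rw [mem_sphere_zero_iff_norm, norm_smul, norm_inv, norm_norm]
        field_simp
      have hle : ν z ≤ ν (‖x‖⁻¹ • x) := hmin hmem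
      rw [hs, abs_of_nonneg (inv_nonneg.mpr hxpos.le)] at hle
      rw [mul_comm]
      calc ‖x‖ * ν z ≤ ‖x‖ * (‖x‖⁻¹ * ν x) := by
            exact mul_le_mul_of_nonneg_left hle hxpos.le
        _ = ν x := by field_simp

end NormEquiv

section MatInfra
open Matrix
variable {d : ℕ}

noncomputable def PhiM (d : ℕ) :
    Matrix (Fin d) (Fin d) ℝ ≃ₗ[ℝ] ((Fin d → ℝ) →L[ℝ] (Fin d → ℝ)) :=
  Matrix.toLin'.trans LinearMap.toContinuousLinearMap

lemma PhiM_apply (M : Matrix (Fin d) (Fin d) ℝ) (v : Fin d → ℝ) :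
    PhiM d M v = M.mulVec v := by
  simp [PhiM, Matrix.toLin'_apply]

noncomputable def opn (M : Matrix (Fin d) (Fin d) ℝ) : ℝ := ‖PhiM d M‖

lemma opn_nonneg (M : Matrix (Fin d) (Fin d) ℝ) : 0 ≤ opn M := norm_nonneg _

lemma PhiM_mul (M N : Matrix (Fin d) (Fin d) ℝ) :
    PhiM d (M * N) = (PhiM d M).comp (PhiM d N) := by
  ext v
  simp [PhiM_apply, ← Matrix.mulVec_mulVec]

lemma opn_mul_le (M N : Matrix (Fin d) (Fin d) ℝ) : opn (M * N) ≤ opn M * opn N := by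
  rw [opn, PhiM_mul]
  exact ContinuousLinearMap.opNorm_comp_le _ _

lemma opn_one (hd : 0 < d) : opn (1 : Matrix (Fin d) (Fin d) ℝ) = 1 := by
  haveI : Nonempty (Fin d) := ⟨⟨0, hd⟩⟩
  haveI : Nontrivial (Fin d → ℝ) := inferInstance
  have h1 : PhiM d (1 : Matrix (Fin d) (Fin d) ℝ) = ContinuousLinearMap.id ℝ (Fin d → ℝ) := by
    ext v
    simp [PhiM_apply]
  rw [opn, h1]
  exact ContinuousLinearMap.norm_id

lemma PhiM_continuous : Continuous (PhiM d) :=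
  (PhiM d).toLinearMap.continuous_of_finiteDimensional

lemma PhiM_symm_continuous : Continuous (PhiM d).symm :=
  (PhiM d).symm.toLinearMap.continuous_of_finiteDimensional

lemma opn_continuous : Continuous (opn (d := d)) :=
  continuous_norm.comp PhiM_continuous

/-- The product `A (k-1) * ⋯ * A 0`. -/
def Pk (k : ℕ) (A : ℕ → Matrix (Fin d) (Fin d) ℝ) : Matrix (Fin d) (Fin d) ℝ :=
  (List.ofFn fun i : Fin k => A i).reverse.prod

lemma Pk_zero (A : ℕ → Matrix (Fin d) (Fin d) ℝ) : Pk 0 A = 1 := by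
  simp [Pk]

lemma Pk_succ (k : ℕ) (A : ℕ → Matrix (Fin d) (Fin d) ℝ) :
    Pk (k + 1) A = A k * Pk k A := by
  rw [Pk, List.ofFn_succ', Pk]
  simp

lemma Pk_add (j k : ℕ) (A : ℕ → Matrix (Fin d) (Fin d) ℝ) :
    Pk (j + k) A = Pk j (fun i => A (i + k)) * Pk k A := by
  induction j with
  | zero => simp [Pk_zero]
  | succ n ih =>
    have : n + 1 + k = (n + k) + 1 := by ring
    rw [this, Pk_succ, ih, Pk_succ, mul_assoc]

lemma Pk_continuous (k : ℕ) :
    Continuous (fun A : ℕ → Matrix (Fin d) (Fin d) ℝ => Pk k A) := by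
  induction k with
  | zero => simpa [Pk_zero] using continuous_const
  | succ n ih =>
    simp only [Pk_succ]
    exact (continuous_apply n).matrix_mul ih

lemma Pk_restrict (k : ℕ) (w : Fin k → Matrix (Fin d) (Fin d) ℝ)
    (B : Matrix (Fin d) (Fin d) ℝ) :
    Pk k (fun n => if h : n < k then w ⟨n, h⟩ else B) = (List.ofFn w).reverse.prod := by
  rw [Pk]
  have : (fun i : Fin k => if h : (i : ℕ) < k then w ⟨i, h⟩ else B) = w := by
    funext i
    exact dif_pos i.isLt
  rw [this]

end MatInfra


/-- The deterministic switched system `x(k+1) = A_k x(k)`, `A_k ∈ Mset`, is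
absolutely asymptotically stable iff `ρ̂(Mset) < 1`. -/
theorem stmt_14 {d : ℕ} (Mset : Set (Matrix (Fin d) (Fin d) ℝ)) (hne : Mset.Nonempty)
    (hcomp : IsCompact Mset)
    (nrm : Matrix (Fin d) (Fin d) ℝ → ℝ) (hnrm : IsMatNorm nrm) :
    (∀ A : ℕ → Matrix (Fin d) (Fin d) ℝ, (∀ k, A k ∈ Mset) → ∀ x0 : Fin d → ℝ,
      Tendsto (fun k : ℕ => ((List.ofFn fun i : Fin k => A i).reverse.prod).mulVec x0)
        atTop (nhds 0)) ↔
    jsr Mset nrm < 1 := by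
  classical
  obtain ⟨hn0, hneq, hnsmul, hnadd⟩ := hnrm
  -- the sets appearing in `jsr`
  set S : ℕ → Set ℝ := fun k =>
    {r | ∃ A : Fin k → Matrix (Fin d) (Fin d) ℝ,
      (∀ i, A i ∈ Mset) ∧ r = nrm ((List.ofFn A).reverse.prod) ^ ((1 : ℝ) / k)} with hSdef
  have hjsr_eq : jsr Mset nrm = limsup (fun k => sSup (S k)) atTop := rfl
  obtain ⟨B0, hB0⟩ := hne
  rcases Nat.eq_zero_or_pos d with hd0 | hd
  · -- degenerate case `d = 0`
    subst hd0
    haveI : Subsingleton (Matrix (Fin 0) (Fin 0) ℝ) :=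
      inferInstanceAs (Subsingleton (Fin 0 → Fin 0 → ℝ))
    constructor
    · intro _
      rw [hjsr_eq]
      have hSk : ∀ k : ℕ, 1 ≤ k → sSup (S k) = 0 := by
        intro k hk
        have hk0 : ((1 : ℝ) / k) ≠ 0 :=
          one_div_ne_zero (Nat.cast_ne_zero.mpr (by omega))
        have hset : S k = {0} := by
          ext r
          simp only [hSdef, Set.mem_setOf_eq, Set.mem_singleton_iff]
          constructor
          · rintro ⟨A, -, rfl⟩
            have h0 : (List.ofFn A).reverse.prod = 0 := Subsingleton.elim _ _
            rw [h0, (hneq 0).mpr rfl, Real.zero_rpow hk0]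
          · rintro rfl
            refine ⟨fun _ => B0, fun _ => hB0, ?_⟩
            have h0 : (List.ofFn fun _ : Fin k => B0).reverse.prod = 0 := Subsingleton.elim _ _
            rw [h0, (hneq 0).mpr rfl, Real.zero_rpow hk0]
        rw [hset, csSup_singleton]
      have hev : (fun k => sSup (S k)) =ᶠ[atTop] fun _ => (0 : ℝ) :=
        Filter.eventually_atTop.2 ⟨1, fun k hk => hSk k hk⟩
      rw [Filter.limsup_congr hev, Filter.limsup_const]
      norm_num
    · intro _ A hA x0
      have hz : ∀ k : ℕ,
          ((List.ofFn fun i : Fin k => A ↑i).reverse.prod).mulVec x0 = 0 := fun k =>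
        Subsingleton.elim _ _
      simp only [hz]
      exact tendsto_const_nhds
  -- main case `0 < d`
  haveI : Nonempty (Fin d) := ⟨⟨0, hd⟩⟩
  -- norm equivalence between `nrm` and `opn`
  obtain ⟨c₁, c₂, hc₁, hc₂, hcc⟩ :=
    norm_equiv (E := (Fin d → ℝ) →L[ℝ] (Fin d → ℝ)) (fun f => nrm ((PhiM d).symm f))
      (fun f => hn0 _)
      (fun f => (hneq _).trans
        ⟨fun h => by simpa using (LinearEquiv.map_eq_zero_iff _).mp h,
         fun h => by rw [h]; simp⟩)
      (fun c f => by
        show nrm ((PhiM d).symm (c • f)) = |c| * nrm ((PhiM d).symm f)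
        rw [LinearEquiv.map_smul]; exact hnsmul c _)
      (fun f g => by
        show nrm ((PhiM d).symm (f + g)) ≤ nrm ((PhiM d).symm f) + nrm ((PhiM d).symm g)
        rw [LinearEquiv.map_add]; exact hnadd _ _)
  have hlow : ∀ M : Matrix (Fin d) (Fin d) ℝ, c₁ * opn M ≤ nrm M := by
    intro M
    have := (hcc (PhiM d M)).1
    simpa [opn] using this
  have hup : ∀ M : Matrix (Fin d) (Fin d) ℝ, nrm M ≤ c₂ * opn M := by
    intro M
    have := (hcc (PhiM d M)).2
    simpa [opn] using this
  -- a uniform bound on `Mset`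
  obtain ⟨C, hC1, hCb⟩ : ∃ C : ℝ, 1 ≤ C ∧ ∀ B ∈ Mset, opn B ≤ C := by
    obtain ⟨C0, hC0⟩ := hcomp.exists_bound_of_continuousOn
      (PhiM_continuous (d := d)).continuousOn
    exact ⟨max C0 1, le_max_right _ _,
      fun B hB => le_trans (hC0 B hB) (le_max_left _ _)⟩
  have hCpos : (0 : ℝ) < C := lt_of_lt_of_le one_pos hC1
  have hpow : ∀ (k : ℕ) (A : ℕ → Matrix (Fin d) (Fin d) ℝ),
      (∀ n, A n ∈ Mset) → opn (Pk k A) ≤ C ^ k := by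
    intro k A hA
    induction k with
    | zero => rw [Pk_zero, opn_one hd, pow_zero]
    | succ n ih =>
      rw [Pk_succ]
      calc opn (A n * Pk n A) ≤ opn (A n) * opn (Pk n A) := opn_mul_le _ _
        _ ≤ C * C ^ n :=
          mul_le_mul (hCb _ (hA n)) ih (opn_nonneg _) hCpos.le
        _ = C ^ (n + 1) := by ring
  -- any word product can be realized as `Pk` of a sequence in `Ω`
  set Ω : Set (ℕ → Matrix (Fin d) (Fin d) ℝ) := Set.pi Set.univ (fun _ => Mset) with hΩdef
  have hΩc : IsCompact Ω := isCompact_univ_pi fun _ => hcomp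
  have hwordmem : ∀ (k : ℕ) (w : Fin k → Matrix (Fin d) (Fin d) ℝ), (∀ i, w i ∈ Mset) →
      (fun n => if h : n < k then w ⟨n, h⟩ else B0) ∈ Ω ∧
      (List.ofFn w).reverse.prod = Pk k (fun n => if h : n < k then w ⟨n, h⟩ else B0) := by
    intro k w hw
    constructor
    · intro n _
      by_cases h : n < k
      · simpa [h] using hw ⟨n, h⟩
      · simpa [h] using hB0
    · exact (Pk_restrict k w B0).symm
  have hwordbound : ∀ (k : ℕ) (w : Fin k → Matrix (Fin d) (Fin d) ℝ), (∀ i, w i ∈ Mset) →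
      nrm ((List.ofFn w).reverse.prod) ≤ c₂ * C ^ k := by
    intro k w hw
    obtain ⟨hmem, heqP⟩ := hwordmem k w hw
    rw [heqP]
    calc nrm (Pk k _) ≤ c₂ * opn (Pk k _) := hup _
      _ ≤ c₂ * C ^ k :=
        mul_le_mul_of_nonneg_left (hpow k _ (fun n => hmem n (Set.mem_univ n))) hc₂.le
  have hSbdd : ∀ k, BddAbove (S k) := by
    intro k
    refine ⟨(c₂ * C ^ k) ^ ((1 : ℝ) / k), ?_⟩
    rintro r ⟨w, hw, rfl⟩
    exact Real.rpow_le_rpow (hn0 _) (hwordbound k w hw) (by positivity)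
  have hSwit : ∀ k : ℕ,
      nrm ((List.ofFn fun _ : Fin k => B0).reverse.prod) ^ ((1 : ℝ) / k) ∈ S k :=
    fun k => ⟨fun _ => B0, fun _ => hB0, rfl⟩
  have hSpos : ∀ k, (0 : ℝ) ≤ sSup (S k) := fun k =>
    le_trans (Real.rpow_nonneg (hn0 _) _) (le_csSup (hSbdd k) (hSwit k))
  -- a uniform upper bound on `sSup (S k)`
  set D : ℝ := max 1 c₂ * C with hDdef
  have hD1 : (1 : ℝ) ≤ D := by
    have h1 : (1 : ℝ) ≤ max 1 c₂ := le_max_left _ _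
    nlinarith
  have hSD : ∀ k, ∀ r ∈ S k, r ≤ D := by
    rintro k r ⟨w, hw, rfl⟩
    rcases Nat.eq_zero_or_pos k with rfl | hk
    · simp only [Nat.cast_zero, div_zero, Real.rpow_zero]
      exact hD1
    · have hkne : ((k : ℝ)) ≠ 0 := Nat.cast_ne_zero.mpr (by omega)
      have hDk : c₂ * C ^ k ≤ D ^ k := by
        rw [hDdef, mul_pow]
        have h1 : c₂ ≤ (max 1 c₂) ^ k :=
          le_trans (le_max_right 1 c₂) (le_self_pow₀ (le_max_left _ _) (by omega))
        have h2 : (0 : ℝ) ≤ C ^ k := by positivity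
        nlinarith
      have h3 : nrm ((List.ofFn w).reverse.prod) ≤ D ^ k :=
        le_trans (hwordbound k w hw) hDk
      calc nrm ((List.ofFn w).reverse.prod) ^ ((1 : ℝ) / k)
          ≤ (D ^ k) ^ ((1 : ℝ) / k) := Real.rpow_le_rpow (hn0 _) h3 (by positivity)
        _ = D := by
            rw [← Real.rpow_natCast D k, ← Real.rpow_mul (by linarith), mul_one_div,
              div_self hkne, Real.rpow_one]
  have hSbddU : Filter.IsBoundedUnder (· ≤ ·) atTop (fun k => sSup (S k)) :=
    Filter.isBoundedUnder_of ⟨D, fun k => Real.sSup_le (hSD k) (by linarith)⟩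
  constructor
  · -- hard direction : stability implies `jsr < 1`
    intro hstab
    -- every trajectory eventually contracts
    have hcov : ∀ A ∈ Ω, ∃ k : ℕ, opn (Pk k A) < 1 / 2 := by
      intro A hA
      have hA' : ∀ n, A n ∈ Mset := fun n => hA n (Set.mem_univ n)
      have hent : Tendsto (fun k => Pk k A) atTop (nhds 0) := by
        refine tendsto_pi_nhds.mpr fun i => tendsto_pi_nhds.mpr fun j => ?_
        have hj := hstab A hA' (Pi.single j 1)
        have hij := tendsto_pi_nhds.mp hj i
        simp only [Matrix.mulVec_single, mul_one, Pi.zero_apply] at hij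
        simpa [Pk] using hij
      have hopn : Tendsto (fun k => opn (Pk k A)) atTop (nhds 0) := by
        have := (opn_continuous (d := d)).tendsto 0 |>.comp hent
        simpa [opn, Function.comp_def] using this
      have := hopn.eventually_lt_const (by norm_num : (0 : ℝ) < 1 / 2)
      exact this.exists
    set U : ℕ → Set (ℕ → Matrix (Fin d) (Fin d) ℝ) :=
      fun k => {A | opn (Pk k A) < 1 / 2} with hUdef
    have hUopen : ∀ k, IsOpen (U k) :=
      fun k => isOpen_lt ((opn_continuous (d := d)).comp (Pk_continuous k)) continuous_const
    have hUcov : Ω ⊆ ⋃ k, U k := fun A hA => Set.mem_iUnion.2 (hcov A hA)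
    obtain ⟨t, ht⟩ := hΩc.elim_finite_subcover U hUopen hUcov
    set m : ℕ := t.sup id + 1 with hmdef
    have hm0 : 0 < m := Nat.succ_pos _
    have hstep : ∀ A ∈ Ω, ∃ k, 1 ≤ k ∧ k ≤ m ∧ opn (Pk k A) ≤ 1 / 2 := by
      intro A hA
      obtain ⟨k, hkt, hkU⟩ := Set.mem_iUnion₂.mp (ht hA)
      refine ⟨k, ?_, ?_, le_of_lt hkU⟩
      · rcases Nat.eq_zero_or_pos k with rfl | h
        · exfalso
          rw [hUdef] at hkU
          simp only [Set.mem_setOf_eq, Pk_zero, opn_one hd] at hkU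
          norm_num at hkU
        · exact h
      · exact le_trans (Finset.le_sup (f := id) hkt) (Nat.le_succ _)
    have hmain : ∀ n, ∀ A ∈ Ω, opn (Pk n A) ≤ C ^ m * (1 / 2 : ℝ) ^ (n / m) := by
      intro n
      induction n using Nat.strong_induction_on with
      | _ n ih =>
        intro A hA
        rcases lt_or_ge n m with hnm | hmn
        · rw [Nat.div_eq_of_lt hnm, pow_zero, mul_one]
          exact le_trans (hpow n A (fun i => hA i (Set.mem_univ i)))
            (pow_le_pow_right₀ hC1 hnm.le)
        · obtain ⟨k, hk1, hkm, hkb⟩ := hstep A hA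
          have hkn : k ≤ n := le_trans hkm hmn
          have hshift : (fun i => A (i + k)) ∈ Ω := fun i _ => hA (i + k) (Set.mem_univ _)
          have hrec : opn (Pk n A) ≤ opn (Pk (n - k) (fun i => A (i + k))) * opn (Pk k A) := by
            have hsplit : Pk n A = Pk ((n - k) + k) A := by rw [Nat.sub_add_cancel hkn]
            rw [hsplit, Pk_add]
            exact opn_mul_le _ _
          have hih := ih (n - k) (by omega) _ hshift
          have hdivle : n / m ≤ (n - k) / m + 1 := by
            have hle : n ≤ (n - k) + m := by omega
            calc n / m ≤ ((n - k) + m) / m := Nat.div_le_div_right hle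
              _ = (n - k) / m + 1 := Nat.add_div_right _ hm0
          calc opn (Pk n A)
              ≤ opn (Pk (n - k) (fun i => A (i + k))) * opn (Pk k A) := hrec
            _ ≤ (C ^ m * (1 / 2 : ℝ) ^ ((n - k) / m)) * (1 / 2) := by
                apply mul_le_mul hih hkb (opn_nonneg _)
                positivity
            _ = C ^ m * ((1 / 2 : ℝ) ^ ((n - k) / m + 1)) := by
                rw [pow_succ]; ring
            _ ≤ C ^ m * (1 / 2 : ℝ) ^ (n / m) := by
                apply mul_le_mul_of_nonneg_left
                  (pow_le_pow_of_le_one (by norm_num) (by norm_num) hdivle)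
                positivity
    -- conclude
    set γ : ℝ := ((1 : ℝ) / 2) ^ ((2 * (m : ℝ))⁻¹) with hγdef
    have hγ0 : 0 ≤ γ := Real.rpow_nonneg (by norm_num) _
    have hγ1 : γ < 1 := Real.rpow_lt_one (by norm_num) (by norm_num) (by positivity)
    have hγsq : ∀ k : ℕ, γ ^ k * γ ^ k = ((1 : ℝ) / 2) ^ ((k : ℝ) / m) := by
      intro k
      rw [hγdef, ← Real.rpow_natCast (((1 : ℝ) / 2) ^ ((2 * (m : ℝ))⁻¹)) k,
        ← Real.rpow_mul (by norm_num), ← Real.rpow_add (by norm_num)]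
      congr 1
      have hm : (m : ℝ) ≠ 0 := Nat.cast_ne_zero.mpr hm0.ne'
      field_simp
      ring
    set K : ℝ := c₂ * C ^ m with hKdef
    have hK0 : 0 < K := by positivity
    have hKev : ∀ᶠ k : ℕ in atTop, 2 * K * γ ^ k ≤ 1 := by
      have htend : Tendsto (fun k : ℕ => 2 * K * γ ^ k) atTop (nhds 0) := by
        have := (tendsto_pow_atTop_nhds_zero_of_lt_one hγ0 hγ1).const_mul (2 * K)
        simpa using this
      exact (htend.eventually_lt_const one_pos).mono fun k hk => hk.le
    have hnat : ∀ k : ℕ, ((1 : ℝ) / 2) ^ (k / m : ℕ) ≤ 2 * ((1 : ℝ) / 2) ^ ((k : ℝ) / m) := by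
      intro k
      have h1 : (k : ℝ) / m - 1 ≤ ((k / m : ℕ) : ℝ) := by
        have hmod : m * (k / m) + k % m = k := Nat.div_add_mod k m
        have hlt : k % m < m := Nat.mod_lt _ hm0
        have hkR : (k : ℝ) < m * ((k / m : ℕ) : ℝ) + m := by
          have : (k : ℕ) < m * (k / m) + m := by omega
          exact_mod_cast this
        have hmR : (0 : ℝ) < m := by exact_mod_cast hm0
        rw [div_sub_one hmR.ne', div_le_iff₀ hmR]
        nlinarith
      calc ((1 : ℝ) / 2) ^ (k / m : ℕ) = ((1 : ℝ) / 2) ^ (((k / m : ℕ) : ℝ)) := by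
            rw [Real.rpow_natCast]
        _ ≤ ((1 : ℝ) / 2) ^ ((k : ℝ) / m - 1) :=
            Real.rpow_le_rpow_of_exponent_ge (by norm_num) (by norm_num) h1
        _ = 2 * ((1 : ℝ) / 2) ^ ((k : ℝ) / m) := by
            rw [Real.rpow_sub (by norm_num), Real.rpow_one]
            ring
    have hev2 : ∀ᶠ k : ℕ in atTop, ∀ r ∈ S k, r ≤ γ := by
      filter_upwards [hKev, eventually_ge_atTop 1] with k hk hk1
      rintro r ⟨w, hw, rfl⟩
      obtain ⟨hmem, heqP⟩ := hwordmem k w hw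
      have hb : nrm ((List.ofFn w).reverse.prod) ≤ γ ^ k := by
        rw [heqP]
        calc nrm (Pk k _) ≤ c₂ * opn (Pk k _) := hup _
          _ ≤ c₂ * (C ^ m * (1 / 2 : ℝ) ^ (k / m)) :=
              mul_le_mul_of_nonneg_left (hmain k _ hmem) hc₂.le
          _ = K * ((1 / 2 : ℝ) ^ (k / m : ℕ)) := by rw [hKdef]; ring
          _ ≤ K * (2 * ((1 : ℝ) / 2) ^ ((k : ℝ) / m)) :=
              mul_le_mul_of_nonneg_left (hnat k) hK0.le
          _ = (2 * K * γ ^ k) * γ ^ k := by rw [← hγsq k]; ring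
          _ ≤ 1 * γ ^ k := mul_le_mul_of_nonneg_right hk (pow_nonneg hγ0 _)
          _ = γ ^ k := one_mul _
      have hkne : ((k : ℝ)) ≠ 0 := Nat.cast_ne_zero.mpr (by omega)
      calc nrm ((List.ofFn w).reverse.prod) ^ ((1 : ℝ) / k)
          ≤ (γ ^ k) ^ ((1 : ℝ) / k) := Real.rpow_le_rpow (hn0 _) hb (by positivity)
        _ = γ := by
            rw [← Real.rpow_natCast γ k, ← Real.rpow_mul hγ0, mul_one_div,
              div_self hkne, Real.rpow_one]
    have hub : ∀ᶠ k : ℕ in atTop, sSup (S k) ≤ γ :=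
      hev2.mono fun k hk => Real.sSup_le hk hγ0
    rw [hjsr_eq]
    refine lt_of_le_of_lt
      (Filter.limsup_le_of_le
        (hf := Filter.isCoboundedUnder_le_of_le atTop (fun k => hSpos k)) (h := hub)) hγ1
  · -- easy direction : `jsr < 1` implies stability
    intro hjsr A hA x0
    set b : ℝ := max ((jsr Mset nrm + 1) / 2) (1 / 2) with hbdef
    have hb1 : b < 1 := max_lt (by linarith) (by norm_num)
    have hb0 : 0 ≤ b := le_trans (by norm_num) (le_max_right _ _)
    have hlt : limsup (fun k => sSup (S k)) atTop < b := by
      rw [← hjsr_eq]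
      exact lt_of_lt_of_le (by linarith) (le_max_left _ _)
    obtain ⟨N, hN⟩ := Filter.eventually_atTop.mp (eventually_lt_of_limsup_lt hlt hSbddU)
    have hbk : ∀ k, max N 1 ≤ k → nrm (Pk k A) ≤ b ^ k := by
      intro k hk
      have hk1 : 1 ≤ k := le_trans (le_max_right _ _) hk
      have hkN : N ≤ k := le_trans (le_max_left _ _) hk
      have hmem : nrm (Pk k A) ^ ((1 : ℝ) / k) ∈ S k :=
        ⟨fun i => A i, fun i => hA i, rfl⟩
      have hle : nrm (Pk k A) ^ ((1 : ℝ) / k) ≤ b :=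
        le_of_lt (lt_of_le_of_lt (le_csSup (hSbdd k) hmem) (hN k hkN))
      have hkne : ((k : ℝ)) ≠ 0 := Nat.cast_ne_zero.mpr (by omega)
      have := Real.rpow_le_rpow (Real.rpow_nonneg (hn0 _) _) hle (Nat.cast_nonneg k)
      rw [← Real.rpow_mul (hn0 _), one_div, inv_mul_cancel₀ hkne, Real.rpow_one,
        Real.rpow_natCast] at this
      exact this
    have hopn : Tendsto (fun k => opn (Pk k A)) atTop (nhds 0) := by
      apply squeeze_zero' (Filter.Eventually.of_forall fun k => opn_nonneg _)
        (g := fun k => c₁⁻¹ * b ^ k)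
      · filter_upwards [eventually_ge_atTop (max N 1)] with k hk
        have := hbk k hk
        have h2 := hlow (Pk k A)
        rw [inv_mul_eq_div, le_div_iff₀ hc₁]
        linarith
      · have := (tendsto_pow_atTop_nhds_zero_of_lt_one hb0 hb1).const_mul c₁⁻¹
        simpa using this
    have hbound : ∀ k, ‖((List.ofFn fun i : Fin k => A ↑i).reverse.prod).mulVec x0‖ ≤
        opn (Pk k A) * ‖x0‖ := by
      intro k
      have := (PhiM d (Pk k A)).le_opNorm x0
      rw [PhiM_apply] at this
      exact this
    rw [tendsto_zero_iff_norm_tendsto_zero]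
    apply squeeze_zero (fun k => norm_nonneg _) hbound
    have := hopn.mul_const ‖x0‖
    simpa using this
end
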